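/- arXiv:1101.5067 — 2 statements merged into one kernel-verified Lean document; each statement's English description precedes it below -/
import Mathlib

section
/- Let d ≥ 1 and let X be a β-set. Set x_i = |X_i^{(d)}| for i ∈ {0,…,d−1}, where X_i^{(d)} = {k ∈ ℕ : i + kd ∈ X}, put δ = (x_0 d, 1 + x_1 d, …, (d−1) + x_{d−1} d; d), let S = s_d(X), Q = Q(S) its balanced quotient, and C_d(X) = s_d^{-1}(C(S)) the d-core of X. Then there is a multiset equality 𝓗(X) = 𝓗(C_d(X)) ∪ abs(𝓗^δ(Q)), where abs(𝓗^δ(Q)) = {|h| : h ∈ 𝓗^δ(Q)} and ∪ is multiset union (sum). (Since 𝓗(X) equals the multiset of hook lengths of the partition p(X) and 𝓗(C_d(X)) that of its d-core, this says 𝓗(λ) = 𝓗(λ_(d)) ∪ abs(𝓗^δ(Q)) for λ = p(X).) -/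
/-- `X^{+s} = (X + s) ∪ {0,…,s−1}` for a β-set `X`. -/
def shiftUp (X : Finset ℕ) (s : ℕ) : Finset ℕ :=
  X.image (· + s) ∪ Finset.range s

/-- The `d`-symbol `s_d(X)` associated to a β-set `X`:
`X_i^{(d)} = {k ∈ ℕ : i + k*d ∈ X}`. -/
def sd (d : ℕ) (X : Finset ℕ) : Fin d → Finset ℕ :=
  fun i => (X.filter fun a => a % d = (i : ℕ)).image fun a => a / d

/-- The inverse of `s_d`, recovering the β-set of a `d`-symbol. -/
def sdInv (d : ℕ) (S : Fin d → Finset ℕ) : Finset ℕ :=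
  Finset.univ.biUnion fun i => (S i).image fun k => (i : ℕ) + k * d

/-- Hooks of a β-set `X`: pairs `(a,b)` with `a > b`, `a ∈ X`, `b ∉ X`. -/
def betaHooks (X : Finset ℕ) : Finset (ℕ × ℕ) :=
  (X ×ˢ Finset.range (X.sup id + 1)).filter fun p => p.2 < p.1 ∧ p.2 ∉ X

/-- Hooks of a `d`-symbol `S`: quadruples `(a,b,i,j)` with `a ∈ S i`, `b ∉ S j`,
and either `a > b`, or `a = b` and `i > j`. -/
def symbolHooks {d : ℕ} (S : Fin d → Finset ℕ) : Finset (ℕ × ℕ × Fin d × Fin d) :=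
  (Finset.range ((Finset.univ.sup fun i => (S i).sup id) + 1) ×ˢ
      Finset.range ((Finset.univ.sup fun i => (S i).sup id) + 1) ×ˢ
      (Finset.univ : Finset (Fin d)) ×ˢ (Finset.univ : Finset (Fin d))).filter
    fun z => z.1 ∈ S z.2.2.1 ∧ z.2.1 ∉ S z.2.2.2 ∧
      (z.2.1 < z.1 ∨ (z.1 = z.2.1 ∧ z.2.2.2 < z.2.2.1))

/-- The partition `p(X)` of a β-set `X = {a_1 > … > a_t}`, as the multiset of the
nonzero numbers among `a_i − (t−i)`; the element `a` contributes the part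
`a − #{b ∈ X : b < a}`. -/
def partitionOf (X : Finset ℕ) : Multiset ℕ :=
  Multiset.filter (· ≠ 0) (X.val.map fun a => a - (X.filter (· < a)).card)

/-- `r`, the maximal number of parts among the partitions `p(X_i)` of a `d`-symbol. -/
def quotCard {d : ℕ} (S : Fin d → Finset ℕ) : ℕ :=
  Finset.univ.sup fun i => Multiset.card (partitionOf (S i))

/-- `Y` is the balanced quotient `Q(S)` of `S`: each `Y i` is the (unique) β-set of
cardinality `r` with `p(Y i) = p(S i)`, where `r` is the maximal number of parts
among the `p(S i)`. -/
def IsBalancedQuotient {d : ℕ} (S Y : Fin d → Finset ℕ) : Prop :=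
  ∀ i, (Y i).card = quotCard S ∧ partitionOf (Y i) = partitionOf (S i)

/-- The core `C(S) = ([x_0],…,[x_{d−1}])` of a `d`-symbol, `x_i = |X_i|`. -/
def coreSymbol {d : ℕ} (S : Fin d → Finset ℕ) : Fin d → Finset ℕ :=
  fun i => Finset.range (S i).card

/-- The `δ`-length `k(a−b) + c_i − c_j` of a hook `(a,b,i,j)`, for the
`d`-hook data tuple `δ = (c_0,…,c_{d−1};k)`. -/
noncomputable def hookLen {d : ℕ} (c : Fin d → ℝ) (k : ℝ)
    (z : ℕ × ℕ × Fin d × Fin d) : ℝ :=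
  k * ((z.1 - z.2.1 : ℕ) : ℝ) + c z.2.2.1 - c z.2.2.2

/-- The multiset `𝓗^δ(S)` of `δ`-lengths of all hooks of `S`. -/
noncomputable def hookLens {d : ℕ} (c : Fin d → ℝ) (k : ℝ)
    (S : Fin d → Finset ℕ) : Multiset ℝ :=
  (symbolHooks S).val.map (hookLen c k)

/-- `H_{ij}^ℓ(S)`, the set of hooks `(a,b,i,j)` of `S` with `a − b = ℓ`. -/
def Hij {d : ℕ} (S : Fin d → Finset ℕ) (i j : Fin d) (ℓ : ℕ) :
    Finset (ℕ × ℕ × Fin d × Fin d) :=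
  (symbolHooks S).filter fun z => z.2.2.1 = i ∧ z.2.2.2 = j ∧ z.1 - z.2.1 = ℓ

/-- The sign-modified length `h̄^{δ_S}` (on hooks of the balanced quotient), where
`x` records the cardinalities `x_i = |X_i|` of `S`, and `δ_S = (c_i + x_i k; k)`.
For a hook `z = (a,b,u,v)` with `ℓ = a − b`: relabelling so that `Δ = x_i − x_j ≥ 0`,
the sign is `+` if `z` lies in position `(i,j)`, or in position `(j,i)` with `ℓ > Δ`,
or in position `(j,i)` with `ℓ = Δ` and `i < j`; otherwise the sign is `−`. -/
noncomputable def signedLen {d : ℕ} (x : Fin d → ℕ) (c : Fin d → ℝ) (k : ℝ)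
    (z : ℕ × ℕ × Fin d × Fin d) : ℝ :=
  if x z.2.2.2 ≤ x z.2.2.1 then
    k * ((z.1 - z.2.1 : ℕ) : ℝ) + (c z.2.2.1 + (x z.2.2.1 : ℝ) * k)
      - (c z.2.2.2 + (x z.2.2.2 : ℝ) * k)
  else if x z.2.2.2 - x z.2.2.1 < z.1 - z.2.1 ∨
      (z.1 - z.2.1 = x z.2.2.2 - x z.2.2.1 ∧ (z.2.2.2 : ℕ) < (z.2.2.1 : ℕ)) then
    k * ((z.1 - z.2.1 : ℕ) : ℝ) + (c z.2.2.1 + (x z.2.2.1 : ℝ) * k)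
      - (c z.2.2.2 + (x z.2.2.2 : ℝ) * k)
  else
    -(k * ((z.1 - z.2.1 : ℕ) : ℝ) + (c z.2.2.1 + (x z.2.2.1 : ℝ) * k)
      - (c z.2.2.2 + (x z.2.2.2 : ℝ) * k))

/-- The permutation `σ_{d,ℓ,e}` of `ℕ`:
`σ(r(dℓ) + sd + t) = r(dℓ) + sd + ((t + re) mod d)`. -/
def twistFun (d ℓ e : ℕ) (n : ℕ) : ℕ :=
  d * ℓ * (n / (d * ℓ)) + d * (n % (d * ℓ) / d) + (n % d + n / (d * ℓ) * e) % d

namespace HookAux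
open Finset

lemma map_as_sum {α : Type*} (s : Finset α) (f : α → ℝ) :
    s.val.map f = ∑ x ∈ s, ({f x} : Multiset ℝ) := by
  classical
  induction s using Finset.induction with
  | empty => simp
  | insert _ _ h ih => simp_all [Finset.sum_insert h]

/-- weak pair-hooks: `a ∈ A`, `b ≤ a`, `b ∉ B`. -/
def Wk (A B : Finset ℕ) : Finset (ℕ × ℕ) :=
  (A ×ˢ Finset.range (A.sup id + 1)).filter fun p => p.2 ≤ p.1 ∧ p.2 ∉ B

/-- strict pair-hooks: `a ∈ A`, `b < a`, `b ∉ B`. -/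
def St (A B : Finset ℕ) : Finset (ℕ × ℕ) :=
  (A ×ˢ Finset.range (A.sup id + 1)).filter fun p => p.2 < p.1 ∧ p.2 ∉ B

lemma mem_Wk {A B : Finset ℕ} {p : ℕ × ℕ} :
    p ∈ Wk A B ↔ p.1 ∈ A ∧ p.2 ≤ p.1 ∧ p.2 ∉ B := by
  unfold Wk
  simp only [Finset.mem_filter, Finset.mem_product, Finset.mem_range]
  constructor
  · tauto
  · rintro ⟨h1, h2, h3⟩
    refine ⟨⟨h1, ?_⟩, h2, h3⟩
    have : p.1 ≤ A.sup id := Finset.le_sup (f := id) h1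
    omega

lemma mem_St {A B : Finset ℕ} {p : ℕ × ℕ} :
    p ∈ St A B ↔ p.1 ∈ A ∧ p.2 < p.1 ∧ p.2 ∉ B := by
  unfold St
  simp only [Finset.mem_filter, Finset.mem_product, Finset.mem_range]
  constructor
  · tauto
  · rintro ⟨h1, h2, h3⟩
    refine ⟨⟨h1, ?_⟩, h2, h3⟩
    have : p.1 ≤ A.sup id := Finset.le_sup (f := id) h1
    omega

lemma mem_betaHooks {X : Finset ℕ} {p : ℕ × ℕ} :
    p ∈ betaHooks X ↔ p.1 ∈ X ∧ p.2 < p.1 ∧ p.2 ∉ X := by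
  unfold betaHooks
  simp only [Finset.mem_filter, Finset.mem_product, Finset.mem_range]
  constructor
  · tauto
  · rintro ⟨h1, h2, h3⟩
    refine ⟨⟨h1, ?_⟩, h2, h3⟩
    have : p.1 ≤ X.sup id := Finset.le_sup (f := id) h1
    omega

lemma mem_symbolHooks {d : ℕ} {S : Fin d → Finset ℕ} {z : ℕ × ℕ × Fin d × Fin d} :
    z ∈ symbolHooks S ↔ z.1 ∈ S z.2.2.1 ∧ z.2.1 ∉ S z.2.2.2 ∧
      (z.2.1 < z.1 ∨ (z.1 = z.2.1 ∧ z.2.2.2 < z.2.2.1)) := by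
  unfold symbolHooks
  simp only [Finset.mem_filter, Finset.mem_product, Finset.mem_range,
    Finset.mem_univ, and_true, true_and]
  constructor
  · tauto
  · rintro ⟨h1, h2, h3⟩
    have ha : z.1 ≤ Finset.univ.sup fun i => (S i).sup id :=
      le_trans (Finset.le_sup (f := id) h1)
        (Finset.le_sup (f := fun i => (S i).sup id) (Finset.mem_univ z.2.2.1))
    have hb : z.2.1 ≤ z.1 := by rcases h3 with h | ⟨h, _⟩ <;> omega
    exact ⟨⟨by omega, by omega⟩, h1, h2, h3⟩

end HookAux
namespace HookAux
open Finset

lemma mem_shiftUp {A : Finset ℕ} {s n : ℕ} :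
    n ∈ shiftUp A s ↔ (n < s ∨ (s ≤ n ∧ n - s ∈ A)) := by
  unfold shiftUp
  simp only [Finset.mem_union, Finset.mem_image, Finset.mem_range]
  constructor
  · rintro (⟨a, ha, rfl⟩ | h)
    · right; constructor; omega; simpa using ha
    · left; exact h
  · rintro (h | ⟨h1, h2⟩)
    · right; exact h
    · left; exact ⟨n - s, h2, by omega⟩

lemma shiftUp_shiftUp (A : Finset ℕ) (s t : ℕ) :
    shiftUp (shiftUp A s) t = shiftUp A (s + t) := by
  ext n
  simp only [mem_shiftUp]
  constructor
  · rintro (h | ⟨h1, (h | ⟨h2, h3⟩)⟩)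
    · left; omega
    · left; omega
    · right; refine ⟨by omega, ?_⟩; have : n - t - s = n - (s + t) := by omega
      rwa [this] at h3
  · rintro (h | ⟨h1, h2⟩)
    · by_cases hn : n < t
      · left; exact hn
      · right; refine ⟨by omega, ?_⟩; left; omega
    · right; refine ⟨by omega, ?_⟩; right; refine ⟨by omega, ?_⟩
      have : n - t - s = n - (s + t) := by omega
      rwa [this]

lemma card_shiftUp (A : Finset ℕ) (s : ℕ) : (shiftUp A s).card = A.card + s := by
  unfold shiftUp
  rw [Finset.card_union_of_disjoint, Finset.card_image_of_injective _ (add_left_injective s),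
    Finset.card_range]
  rw [Finset.disjoint_right]
  intro n hn
  simp only [Finset.mem_image] at *
  rintro ⟨a, _, rfl⟩
  simp at hn

lemma shift_mem_facts {A B : Finset ℕ} {s : ℕ} {p : ℕ × ℕ} (h2 : p.2 ≤ p.1)
    (h1 : p.1 ∈ shiftUp A s) (h3 : p.2 ∉ shiftUp B s) :
    s ≤ p.2 ∧ p.1 - s ∈ A ∧ p.2 - s ∉ B := by
  rw [mem_shiftUp] at h1
  simp only [mem_shiftUp, not_or, not_and] at h3
  obtain ⟨h3a, h3b⟩ := h3
  have hs : s ≤ p.2 := by omega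
  refine ⟨hs, ?_, h3b hs⟩
  rcases h1 with h | ⟨_, h⟩
  · exact absurd h (by omega)
  · exact h

lemma Wk_shift (A B : Finset ℕ) (s : ℕ) (φ : ℕ → Multiset ℝ) :
    ∑ p ∈ Wk (shiftUp A s) (shiftUp B s), φ (p.1 - p.2) = ∑ p ∈ Wk A B, φ (p.1 - p.2) := by
  refine Finset.sum_nbij' (fun p => (p.1 - s, p.2 - s)) (fun p => (p.1 + s, p.2 + s))
    ?_ ?_ ?_ ?_ ?_
  · intro p hp
    rw [mem_Wk] at hp ⊢
    obtain ⟨h1, h2, h3⟩ := hp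
    obtain ⟨hs, hA, hB⟩ := shift_mem_facts h2 h1 h3
    exact ⟨hA, by omega, hB⟩
  · intro p hp
    rw [mem_Wk] at hp ⊢
    obtain ⟨h1, h2, h3⟩ := hp
    refine ⟨?_, by omega, ?_⟩
    · rw [mem_shiftUp]; right; exact ⟨by omega, by simpa using h1⟩
    · rw [mem_shiftUp]; simp only [not_or, not_and]
      exact ⟨by omega, fun _ => by simpa using h3⟩
  · intro p hp
    rw [mem_Wk] at hp
    obtain ⟨h1, h2, h3⟩ := hp
    obtain ⟨hs, -, -⟩ := shift_mem_facts h2 h1 h3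
    dsimp only
    rw [Prod.ext_iff]
    dsimp only
    omega
  · intro p _
    dsimp only
    rw [Prod.ext_iff]
    dsimp only
    omega
  · intro p hp
    rw [mem_Wk] at hp
    obtain ⟨h1, h2, h3⟩ := hp
    obtain ⟨hs, -, -⟩ := shift_mem_facts h2 h1 h3
    dsimp only
    congr 1
    omega

lemma St_shift (A B : Finset ℕ) (s : ℕ) (φ : ℕ → Multiset ℝ) :
    ∑ p ∈ St (shiftUp A s) (shiftUp B s), φ (p.1 - p.2) = ∑ p ∈ St A B, φ (p.1 - p.2) := by
  refine Finset.sum_nbij' (fun p => (p.1 - s, p.2 - s)) (fun p => (p.1 + s, p.2 + s))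
    ?_ ?_ ?_ ?_ ?_
  · intro p hp
    rw [mem_St] at hp ⊢
    obtain ⟨h1, h2, h3⟩ := hp
    obtain ⟨hs, hA, hB⟩ := shift_mem_facts (le_of_lt h2) h1 h3
    exact ⟨hA, by omega, hB⟩
  · intro p hp
    rw [mem_St] at hp ⊢
    obtain ⟨h1, h2, h3⟩ := hp
    refine ⟨?_, by omega, ?_⟩
    · rw [mem_shiftUp]; right; exact ⟨by omega, by simpa using h1⟩
    · rw [mem_shiftUp]; simp only [not_or, not_and]
      exact ⟨by omega, fun _ => by simpa using h3⟩
  · intro p hp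
    rw [mem_St] at hp
    obtain ⟨h1, h2, h3⟩ := hp
    obtain ⟨hs, -, -⟩ := shift_mem_facts (le_of_lt h2) h1 h3
    dsimp only
    rw [Prod.ext_iff]
    dsimp only
    omega
  · intro p _
    dsimp only
    rw [Prod.ext_iff]
    dsimp only
    omega
  · intro p hp
    rw [mem_St] at hp
    obtain ⟨h1, h2, h3⟩ := hp
    obtain ⟨hs, -, -⟩ := shift_mem_facts (le_of_lt h2) h1 h3
    dsimp only
    congr 1
    omega

end HookAux
namespace HookAux
open Finset

lemma map_as_sum' {α β : Type*} (s : Finset α) (f : α → β) :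
    s.val.map f = ∑ x ∈ s, ({f x} : Multiset β) := by
  classical
  induction s using Finset.induction with
  | empty => simp
  | insert _ _ h ih => simp_all [Finset.sum_insert h]

lemma filter_sum {α β : Type*} (s : Finset α) (g : α → Multiset β) (p : β → Prop)
    [DecidablePred p] :
    Multiset.filter p (∑ x ∈ s, g x) = ∑ x ∈ s, Multiset.filter p (g x) := by
  classical
  induction s using Finset.induction with
  | empty => simp
  | insert _ _ h ih => simp_all [Finset.sum_insert h, Multiset.filter_add]

/-- the "unfiltered partition" of a β-set -/
def uaux (X : Finset ℕ) : Multiset ℕ :=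
  X.val.map fun a => a - (X.filter (· < a)).card

lemma card_uaux (X : Finset ℕ) : Multiset.card (uaux X) = X.card := by
  simp [uaux]

lemma partitionOf_eq_filter (X : Finset ℕ) :
    partitionOf X = Multiset.filter (· ≠ 0) (uaux X) := rfl

lemma uaux_eq_partition_add (X : Finset ℕ) :
    uaux X = partitionOf X + Multiset.replicate (X.card - Multiset.card (partitionOf X)) 0 := by
  classical
  have h := Multiset.filter_add_not (fun a => a ≠ 0) (uaux X)
  have h2 : Multiset.filter (fun a => ¬ a ≠ 0) (uaux X) =
      Multiset.replicate (X.card - Multiset.card (partitionOf X)) 0 := by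
    rw [Multiset.eq_replicate]
    constructor
    · have := congrArg Multiset.card h
      rw [Multiset.card_add] at this
      rw [card_uaux] at this
      rw [partitionOf_eq_filter]
      omega
    · intro b hb
      have := Multiset.of_mem_filter hb
      simpa using this
  rw [← h2]
  rw [partitionOf_eq_filter]
  exact h.symm

lemma uaux_eq_uaux {X Y : Finset ℕ} (hp : partitionOf X = partitionOf Y)
    (hc : X.card = Y.card) : uaux X = uaux Y := by
  rw [uaux_eq_partition_add, uaux_eq_partition_add, hp, hc]

lemma max'_ge_card {X : Finset ℕ} (h : X.Nonempty) : X.card - 1 ≤ X.max' h := by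
  have hsub : X ⊆ Finset.range (X.max' h + 1) := by
    intro a ha
    rw [Finset.mem_range]
    have := Finset.le_max' X a ha
    omega
  have := Finset.card_le_card hsub
  rw [Finset.card_range] at this
  omega

lemma filter_lt_max' {X : Finset ℕ} (h : X.Nonempty) :
    X.filter (· < X.max' h) = X.erase (X.max' h) := by
  ext a
  simp only [Finset.mem_filter, Finset.mem_erase]
  constructor
  · rintro ⟨h1, h2⟩; exact ⟨by omega, h1⟩
  · rintro ⟨h1, h2⟩
    have := Finset.le_max' X a h2
    exact ⟨h2, by omega⟩

lemma filter_lt_erase_max' {X : Finset ℕ} (h : X.Nonempty) {a : ℕ}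
    (ha : a ∈ X.erase (X.max' h)) :
    (X.erase (X.max' h)).filter (· < a) = X.filter (· < a) := by
  rw [Finset.mem_erase] at ha
  have hle := Finset.le_max' X a ha.2
  ext b
  simp only [Finset.mem_filter, Finset.mem_erase]
  constructor
  · rintro ⟨⟨h1, h2⟩, h3⟩; exact ⟨h2, h3⟩
  · rintro ⟨h1, h2⟩
    refine ⟨⟨?_, h1⟩, h2⟩
    have ha' : a ≠ X.max' h := ha.1
    omega

lemma uaux_cons {X : Finset ℕ} (h : X.Nonempty) :
    uaux X = (X.max' h - (X.card - 1)) ::ₘ uaux (X.erase (X.max' h)) := by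
  classical
  have hval : X.val = X.max' h ::ₘ (X.erase (X.max' h)).val := by
    rw [Finset.erase_val]
    exact (Multiset.cons_erase (Finset.mem_def.1 (X.max'_mem h))).symm
  unfold uaux
  rw [hval, Multiset.map_cons]
  congr 1
  · rw [filter_lt_max' h]
    rw [Finset.card_erase_of_mem (X.max'_mem h)]
  · apply Multiset.map_congr rfl
    intro a ha
    rw [filter_lt_erase_max' h (Finset.mem_def.2 ha)]

lemma uaux_le_max {X : Finset ℕ} (h : X.Nonempty) {b : ℕ} (hb : b ∈ uaux X) :
    b ≤ X.max' h - (X.card - 1) := by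
  classical
  unfold uaux at hb
  rw [Multiset.mem_map] at hb
  obtain ⟨a, ha, rfl⟩ := hb
  rw [Finset.mem_val] at ha
  set M := X.max' h with hM
  have haM : a ≤ M := Finset.le_max' X a ha
  have hsplit : (X.filter (· < M)).card =
      (X.filter (· < a)).card + (X.filter (fun b => a ≤ b ∧ b < M)).card := by
    rw [← Finset.card_union_of_disjoint]
    · congr 1
      ext b
      simp only [Finset.mem_union, Finset.mem_filter]
      constructor
      · rintro ⟨h1, h2⟩
        by_cases hba : b < a
        · exact Or.inl ⟨h1, hba⟩
        · exact Or.inr ⟨h1, by omega, h2⟩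
      · rintro (⟨h1, h2⟩ | ⟨h1, h2, h3⟩)
        · exact ⟨h1, by omega⟩
        · exact ⟨h1, h3⟩
    · rw [Finset.disjoint_left]
      intro b hb1 hb2
      simp only [Finset.mem_filter] at hb1 hb2
      omega
  have hmid : (X.filter (fun b => a ≤ b ∧ b < M)).card ≤ M - a := by
    have hsub : X.filter (fun b => a ≤ b ∧ b < M) ⊆ Finset.Ico a M := by
      intro b hb
      rw [Finset.mem_filter] at hb
      rw [Finset.mem_Ico]
      omega
    have := Finset.card_le_card hsub
    rwa [Nat.card_Ico] at this
  have hcard : (X.filter (· < M)).card = X.card - 1 := by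
    rw [filter_lt_max' h, Finset.card_erase_of_mem (X.max'_mem h)]
  omega

lemma mem_uaux_max {X : Finset ℕ} (h : X.Nonempty) :
    X.max' h - (X.card - 1) ∈ uaux X := by
  rw [uaux_cons h]
  exact Multiset.mem_cons_self _ _

lemma beta_unique : ∀ n (X Y : Finset ℕ), X.card = n → Y.card = n →
    uaux X = uaux Y → X = Y := by
  intro n
  induction n with
  | zero =>
    intro X Y hX hY _
    rw [Finset.card_eq_zero] at hX hY
    rw [hX, hY]
  | succ t ih =>
    intro X Y hX hY hu
    have hXne : X.Nonempty := Finset.card_pos.1 (by omega)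
    have hYne : Y.Nonempty := Finset.card_pos.1 (by omega)
    have hMX := mem_uaux_max hXne
    have hMY := mem_uaux_max hYne
    have h1 : X.max' hXne - (X.card - 1) ≤ Y.max' hYne - (Y.card - 1) :=
      uaux_le_max hYne (hu ▸ hMX)
    have h2 : Y.max' hYne - (Y.card - 1) ≤ X.max' hXne - (X.card - 1) :=
      uaux_le_max hXne (hu.symm ▸ hMY)
    have hgeX := max'_ge_card hXne
    have hgeY := max'_ge_card hYne
    have hmax : X.max' hXne = Y.max' hYne := by omega
    have hconsX := uaux_cons hXne
    have hconsY := uaux_cons hYne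
    have herase : uaux (X.erase (X.max' hXne)) = uaux (Y.erase (Y.max' hYne)) := by
      have : (X.max' hXne - (X.card - 1)) ::ₘ uaux (X.erase (X.max' hXne)) =
          (Y.max' hYne - (Y.card - 1)) ::ₘ uaux (Y.erase (Y.max' hYne)) := by
        rw [← hconsX, ← hconsY, hu]
      have hh : X.max' hXne - (X.card - 1) = Y.max' hYne - (Y.card - 1) := by omega
      rw [hh] at this
      exact (Multiset.cons_inj_right _).1 this
    have hE : X.erase (X.max' hXne) = Y.erase (Y.max' hYne) := by
      apply ih
      · rw [Finset.card_erase_of_mem (X.max'_mem hXne)]; omega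
      · rw [Finset.card_erase_of_mem (Y.max'_mem hYne)]; omega
      · exact herase
    have : insert (X.max' hXne) (X.erase (X.max' hXne)) =
        insert (Y.max' hYne) (Y.erase (Y.max' hYne)) := by
      rw [hE, hmax]
    rwa [Finset.insert_erase (X.max'_mem hXne), Finset.insert_erase (Y.max'_mem hYne)] at this

lemma filter_lt_shiftUp (A : Finset ℕ) (s a : ℕ) :
    (shiftUp A s).filter (· < a + s) = shiftUp (A.filter (· < a)) s := by
  ext n
  simp only [Finset.mem_filter, mem_shiftUp]
  constructor
  · rintro ⟨h | ⟨h1, h2⟩, h3⟩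
    · exact Or.inl h
    · exact Or.inr ⟨h1, h2, by omega⟩
  · rintro (h | ⟨h1, h2, h3⟩)
    · exact ⟨Or.inl h, by omega⟩
    · exact ⟨Or.inr ⟨h1, h2⟩, by omega⟩

lemma filter_lt_shiftUp_small (A : Finset ℕ) {s t : ℕ} (h : t ≤ s) :
    (shiftUp A s).filter (· < t) = Finset.range t := by
  ext n
  simp only [Finset.mem_filter, mem_shiftUp, Finset.mem_range]
  constructor
  · rintro ⟨_, h2⟩; exact h2
  · intro hn; exact ⟨Or.inl (by omega), hn⟩

lemma partition_shiftUp (A : Finset ℕ) (s : ℕ) :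
    partitionOf (shiftUp A s) = partitionOf A := by
  classical
  rw [partitionOf_eq_filter, partitionOf_eq_filter]
  unfold uaux
  rw [map_as_sum', map_as_sum', filter_sum, filter_sum]
  unfold shiftUp
  rw [Finset.sum_union]
  · have h2 : ∀ t ∈ Finset.range s, Multiset.filter (· ≠ 0)
        ({t - (((shiftUp A s)).filter (· < t)).card} : Multiset ℕ) = 0 := by
      intro t ht
      rw [Finset.mem_range] at ht
      rw [filter_lt_shiftUp_small A (by omega : t ≤ s), Finset.card_range]
      simp [Multiset.filter_singleton]
    have h1 : ∑ x ∈ A.image (· + s), Multiset.filter (· ≠ 0)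
          ({x - ((shiftUp A s).filter (· < x)).card} : Multiset ℕ)
        = ∑ a ∈ A, Multiset.filter (· ≠ 0)
          ({a - (A.filter (· < a)).card} : Multiset ℕ) := by
      rw [Finset.sum_image (by intro a _ b _ h; dsimp only at h; omega)]
      apply Finset.sum_congr rfl
      intro a _
      congr 2
      rw [filter_lt_shiftUp A s a, card_shiftUp]
      omega
    calc ∑ x ∈ A.image (· + s), Multiset.filter (· ≠ 0)
            ({x - ((shiftUp A s).filter (· < x)).card} : Multiset ℕ)
          + ∑ t ∈ Finset.range s, Multiset.filter (· ≠ 0)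
            ({t - ((shiftUp A s).filter (· < t)).card} : Multiset ℕ)
        = ∑ a ∈ A, Multiset.filter (· ≠ 0)
            ({a - (A.filter (· < a)).card} : Multiset ℕ) + 0 := by
          rw [h1, Finset.sum_congr rfl h2]
          simp
      _ = _ := by simp
  · rw [Finset.disjoint_right]
    intro n hn
    simp only [Finset.mem_image]
    rintro ⟨a, _, rfl⟩
    simp at hn

lemma shift_eq_of_partition {A B : Finset ℕ} (h : partitionOf A = partitionOf B)
    {N : ℕ} (hA : A.card ≤ N) (hB : B.card ≤ N) :
    shiftUp A (N - A.card) = shiftUp B (N - B.card) := by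
  apply beta_unique N
  · rw [card_shiftUp]; omega
  · rw [card_shiftUp]; omega
  · apply uaux_eq_uaux
    · rw [partition_shiftUp, partition_shiftUp, h]
    · rw [card_shiftUp, card_shiftUp]; omega

end HookAux
namespace HookAux
open Finset

lemma sd_mem {d : ℕ} (hd : 0 < d) (X : Finset ℕ) (i : Fin d) (k : ℕ) :
    k ∈ sd d X i ↔ (i : ℕ) + k * d ∈ X := by
  unfold sd
  simp only [Finset.mem_image, Finset.mem_filter]
  constructor
  · rintro ⟨a, ⟨ha, hmod⟩, rfl⟩
    have : (i : ℕ) + a / d * d = a := by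
      conv_rhs => rw [← Nat.mod_add_div' a d]
      rw [hmod]
    rwa [this]
  · intro h
    refine ⟨(i : ℕ) + k * d, ⟨h, ?_⟩, ?_⟩
    · rw [Nat.add_mul_mod_self_right, Nat.mod_eq_of_lt i.isLt]
    · rw [Nat.add_mul_div_right _ _ hd, Nat.div_eq_of_lt i.isLt, Nat.zero_add]

lemma sdInv_mem {d : ℕ} (hd : 0 < d) (T : Fin d → Finset ℕ) (n : ℕ) :
    n ∈ sdInv d T ↔ n / d ∈ T ⟨n % d, Nat.mod_lt n hd⟩ := by
  unfold sdInv
  simp only [Finset.mem_biUnion, Finset.mem_univ, true_and, Finset.mem_image]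
  constructor
  · rintro ⟨i, k, hk, rfl⟩
    have h1 : ((i : ℕ) + k * d) % d = (i : ℕ) := by
      rw [Nat.add_mul_mod_self_right, Nat.mod_eq_of_lt i.isLt]
    have h2 : ((i : ℕ) + k * d) / d = k := by
      rw [Nat.add_mul_div_right _ _ hd, Nat.div_eq_of_lt i.isLt, Nat.zero_add]
    rw [h2]
    convert hk using 2
    exact Fin.ext h1
  · intro h
    refine ⟨⟨n % d, Nat.mod_lt n hd⟩, n / d, h, ?_⟩
    exact Nat.mod_add_div' n d

lemma sd_sdInv {d : ℕ} (hd : 0 < d) (T : Fin d → Finset ℕ) :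
    sd d (sdInv d T) = T := by
  funext i
  ext k
  rw [sd_mem hd, sdInv_mem hd]
  have h1 : ((i : ℕ) + k * d) % d = (i : ℕ) := by
    rw [Nat.add_mul_mod_self_right, Nat.mod_eq_of_lt i.isLt]
  have h2 : ((i : ℕ) + k * d) / d = k := by
    rw [Nat.add_mul_div_right _ _ hd, Nat.div_eq_of_lt i.isLt, Nat.zero_add]
  rw [h2]
  constructor
  · intro h
    convert h using 2
    exact (Fin.ext h1).symm
  · intro h
    convert h using 2
    exact Fin.ext h1

/-- the value of a symbol hook for `δ₀ = (0,1,…,d−1; d)` -/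
noncomputable def g0 (d : ℕ) (z : ℕ × ℕ × Fin d × Fin d) : ℝ :=
  (d : ℝ) * ((z.1 - z.2.1 : ℕ) : ℝ) + ((z.2.2.1 : ℕ) : ℝ) - ((z.2.2.2 : ℕ) : ℝ)

lemma step1 {d : ℕ} (hd : 0 < d) (X : Finset ℕ) :
    (betaHooks X).val.map (fun p => ((p.1 - p.2 : ℕ) : ℝ)) =
      ∑ z ∈ symbolHooks (sd d X), ({g0 d z} : Multiset ℝ) := by
  rw [map_as_sum]
  refine Finset.sum_nbij'
    (fun p => (p.1 / d, p.2 / d, ⟨p.1 % d, Nat.mod_lt _ hd⟩, ⟨p.2 % d, Nat.mod_lt _ hd⟩))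
    (fun z => ((z.2.2.1 : ℕ) + z.1 * d, (z.2.2.2 : ℕ) + z.2.1 * d)) ?_ ?_ ?_ ?_ ?_
  · intro p hp
    rw [mem_betaHooks] at hp
    obtain ⟨h1, h2, h3⟩ := hp
    rw [mem_symbolHooks]
    dsimp only
    have e1 : p.1 % d + p.1 / d * d = p.1 := Nat.mod_add_div' p.1 d
    have e2 : p.2 % d + p.2 / d * d = p.2 := Nat.mod_add_div' p.2 d
    refine ⟨?_, ?_, ?_⟩
    · rw [sd_mem hd]; dsimp only; rwa [e1]
    · rw [sd_mem hd]; dsimp only; rwa [e2]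
    · have hle : p.2 / d ≤ p.1 / d := Nat.div_le_div_right h2.le
      rcases lt_or_eq_of_le hle with hlt | heq
      · exact Or.inl hlt
      · right
        refine ⟨heq.symm, ?_⟩
        rw [Fin.lt_def]
        dsimp only
        have : p.2 / d * d = p.1 / d * d := by rw [heq]
        omega
  · intro z hz
    rw [mem_symbolHooks] at hz
    obtain ⟨h1, h2, h3⟩ := hz
    rw [mem_betaHooks]
    dsimp only
    rw [sd_mem hd] at h1
    refine ⟨h1, ?_, ?_⟩
    · rcases h3 with h | ⟨heq, hij⟩
      · have hi : (z.2.2.2 : ℕ) < d := z.2.2.2.isLt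
        calc (z.2.2.2 : ℕ) + z.2.1 * d < d + z.2.1 * d := by omega
          _ = (z.2.1 + 1) * d := by ring
          _ ≤ z.1 * d := Nat.mul_le_mul_right d (by omega)
          _ ≤ (z.2.2.1 : ℕ) + z.1 * d := by omega
      · rw [Fin.lt_def] at hij
        rw [← heq]
        omega
    · intro hmem
      apply h2
      rw [sd_mem hd]
      convert hmem using 2
  · intro p hp
    rw [mem_betaHooks] at hp
    dsimp only
    rw [Prod.ext_iff]
    dsimp only
    constructor
    · exact Nat.mod_add_div' p.1 d
    · exact Nat.mod_add_div' p.2 d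
  · intro z hz
    dsimp only
    have h1 : ((z.2.2.1 : ℕ) + z.1 * d) % d = (z.2.2.1 : ℕ) := by
      rw [Nat.add_mul_mod_self_right, Nat.mod_eq_of_lt z.2.2.1.isLt]
    have h2 : ((z.2.2.1 : ℕ) + z.1 * d) / d = z.1 := by
      rw [Nat.add_mul_div_right _ _ hd, Nat.div_eq_of_lt z.2.2.1.isLt, Nat.zero_add]
    have h3 : ((z.2.2.2 : ℕ) + z.2.1 * d) % d = (z.2.2.2 : ℕ) := by
      rw [Nat.add_mul_mod_self_right, Nat.mod_eq_of_lt z.2.2.2.isLt]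
    have h4 : ((z.2.2.2 : ℕ) + z.2.1 * d) / d = z.2.1 := by
      rw [Nat.add_mul_div_right _ _ hd, Nat.div_eq_of_lt z.2.2.2.isLt, Nat.zero_add]
    rw [Prod.ext_iff, Prod.ext_iff, Prod.ext_iff]
    refine ⟨h2, h4, Fin.ext h1, Fin.ext h3⟩
  · intro p hp
    rw [mem_betaHooks] at hp
    obtain ⟨h1, h2, h3⟩ := hp
    congr 1
    unfold g0
    dsimp only
    have e1 : p.1 % d + p.1 / d * d = p.1 := Nat.mod_add_div' p.1 d
    have e2 : p.2 % d + p.2 / d * d = p.2 := Nat.mod_add_div' p.2 d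
    have hle : p.2 / d ≤ p.1 / d := Nat.div_le_div_right h2.le
    rw [Nat.cast_sub h2.le, Nat.cast_sub hle]
    have c1 : ((p.1 % d : ℕ) : ℝ) + ((p.1 / d : ℕ) : ℝ) * d = (p.1 : ℝ) := by
      exact_mod_cast congrArg (Nat.cast : ℕ → ℝ) e1
    have c2 : ((p.2 % d : ℕ) : ℝ) + ((p.2 / d : ℕ) : ℝ) * d = (p.2 : ℝ) := by
      exact_mod_cast congrArg (Nat.cast : ℕ → ℝ) e2
    nlinarith [c1, c2]

end HookAux
namespace HookAux
open Finset

/-- per-position contribution of the hooks of a symbol -/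
noncomputable def Fp {d : ℕ} (T : Fin d → Finset ℕ) (g : ℕ × ℕ × Fin d × Fin d → ℝ)
    (i j : Fin d) : Multiset ℝ :=
  if j < i then ∑ p ∈ Wk (T i) (T j), ({g (p.1, p.2, i, j)} : Multiset ℝ)
  else ∑ p ∈ St (T i) (T j), ({g (p.1, p.2, i, j)} : Multiset ℝ)

lemma decomp {d : ℕ} (T : Fin d → Finset ℕ) (g : ℕ × ℕ × Fin d × Fin d → ℝ) :
    ∑ z ∈ symbolHooks T, ({g z} : Multiset ℝ) = ∑ i, ∑ j, Fp T g i j := by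
  classical
  have h := Finset.sum_fiberwise_of_maps_to
    (s := symbolHooks T) (t := (Finset.univ : Finset (Fin d × Fin d)))
    (g := fun z => z.2.2) (fun z _ => Finset.mem_univ _)
    (fun z => ({g z} : Multiset ℝ))
  rw [← h, ← Finset.sum_product']
  apply Finset.sum_congr rfl
  rintro ⟨i, j⟩ -
  dsimp only
  unfold Fp
  by_cases hij : j < i
  · rw [if_pos hij]
    refine Finset.sum_nbij' (fun z => (z.1, z.2.1)) (fun p => (p.1, p.2, i, j)) ?_ ?_ ?_ ?_ ?_
    · intro z hz
      simp only [Finset.mem_filter, mem_symbolHooks] at hz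
      obtain ⟨⟨h1, h2, h3⟩, h4⟩ := hz
      rw [mem_Wk]
      dsimp only
      rw [h4] at h1 h2 h3
      refine ⟨h1, ?_, h2⟩
      rcases h3 with h | ⟨h, _⟩ <;> omega
    · intro p hp
      rw [mem_Wk] at hp
      obtain ⟨h1, h2, h3⟩ := hp
      simp only [Finset.mem_filter, mem_symbolHooks]
      refine ⟨⟨h1, h3, ?_⟩, trivial⟩
      rcases Nat.lt_or_ge p.2 p.1 with h | h
      · exact Or.inl h
      · exact Or.inr ⟨by omega, hij⟩
    · intro z hz
      simp only [Finset.mem_filter] at hz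
      obtain ⟨-, h4⟩ := hz
      rw [← h4]
    · intro p _
      rfl
    · intro z hz
      simp only [Finset.mem_filter] at hz
      obtain ⟨-, h4⟩ := hz
      dsimp only
      congr 1
      rw [← h4]
  · rw [if_neg hij]
    refine Finset.sum_nbij' (fun z => (z.1, z.2.1)) (fun p => (p.1, p.2, i, j)) ?_ ?_ ?_ ?_ ?_
    · intro z hz
      simp only [Finset.mem_filter, mem_symbolHooks] at hz
      obtain ⟨⟨h1, h2, h3⟩, h4⟩ := hz
      rw [mem_St]
      dsimp only
      rw [h4] at h1 h2 h3
      refine ⟨h1, ?_, h2⟩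
      rcases h3 with h | ⟨h, hlt⟩
      · omega
      · exact absurd hlt hij
    · intro p hp
      rw [mem_St] at hp
      obtain ⟨h1, h2, h3⟩ := hp
      simp only [Finset.mem_filter, mem_symbolHooks]
      exact ⟨⟨h1, h3, Or.inl h2⟩, trivial⟩
    · intro z hz
      simp only [Finset.mem_filter] at hz
      obtain ⟨-, h4⟩ := hz
      rw [← h4]
    · intro p _
      rfl
    · intro z hz
      simp only [Finset.mem_filter] at hz
      obtain ⟨-, h4⟩ := hz
      dsimp only
      congr 1
      rw [← h4]

lemma key_split {M : Type*} [AddCommMonoid M] {d : ℕ} (f : Fin d → Fin d → M) :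
    ∑ i, ∑ j, f i j =
      (∑ p ∈ (Finset.univ ×ˢ Finset.univ).filter (fun p : Fin d × Fin d => p.2 < p.1),
        (f p.1 p.2 + f p.2 p.1)) + ∑ i, f i i := by
  classical
  rw [← Finset.sum_product']
  rw [← Finset.sum_filter_add_sum_filter_not (Finset.univ ×ˢ Finset.univ)
    (fun p : Fin d × Fin d => p.2 < p.1) (fun p => f p.1 p.2)]
  rw [← Finset.sum_filter_add_sum_filter_not
    ((Finset.univ ×ˢ Finset.univ).filter (fun p : Fin d × Fin d => ¬ p.2 < p.1))
    (fun p : Fin d × Fin d => p.1 < p.2) (fun p => f p.1 p.2)]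
  have hswap : ∑ p ∈ (((Finset.univ ×ˢ Finset.univ).filter
        (fun p : Fin d × Fin d => ¬ p.2 < p.1)).filter (fun p : Fin d × Fin d => p.1 < p.2)),
        f p.1 p.2
      = ∑ p ∈ (Finset.univ ×ˢ Finset.univ).filter (fun p : Fin d × Fin d => p.2 < p.1),
        f p.2 p.1 := by
    refine Finset.sum_nbij' (fun p => (p.2, p.1)) (fun p => (p.2, p.1)) ?_ ?_ ?_ ?_ ?_
    · intro p hp
      simp only [Finset.mem_filter] at *
      simp only [Finset.mem_product, Finset.mem_univ, and_self, true_and] at *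
      tauto
    · intro p hp
      simp only [Finset.mem_filter] at *
      simp only [Finset.mem_product, Finset.mem_univ, and_self, true_and] at *
      constructor
      · exact fun h => absurd hp (by omega)
      · exact hp
    · intro p _; rfl
    · intro p _; rfl
    · intro p _; rfl
  have hdiag : ∑ p ∈ (((Finset.univ ×ˢ Finset.univ).filter
        (fun p : Fin d × Fin d => ¬ p.2 < p.1)).filter (fun p : Fin d × Fin d => ¬ p.1 < p.2)),
        f p.1 p.2 = ∑ i, f i i := by
    refine Finset.sum_nbij' (fun p => p.1) (fun i => (i, i)) ?_ ?_ ?_ ?_ ?_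
    · intro p _; exact Finset.mem_univ _
    · intro i _
      simp only [Finset.mem_filter, Finset.mem_product, Finset.mem_univ, and_self, true_and]
      omega
    · intro p hp
      simp only [Finset.mem_filter] at hp
      have : p.1 = p.2 := by
        rcases hp with ⟨⟨_, h1⟩, h2⟩
        omega
      rw [Prod.ext_iff]
      exact ⟨rfl, this⟩
    · intro i _; rfl
    · intro p hp
      simp only [Finset.mem_filter] at hp
      have : p.1 = p.2 := by
        rcases hp with ⟨⟨_, h1⟩, h2⟩
        omega
      rw [← this]
  rw [hswap, hdiag, ← add_assoc, ← Finset.sum_add_distrib]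

lemma pair_sum_eq {M : Type*} [AddCommMonoid M] {d : ℕ} (f g : Fin d → Fin d → M)
    (hdiag : ∀ i, f i i = g i i)
    (hpair : ∀ i j : Fin d, j < i → f i j + f j i = g i j + g j i) :
    ∑ i, ∑ j, f i j = ∑ i, ∑ j, g i j := by
  rw [key_split f, key_split g]
  congr 1
  · apply Finset.sum_congr rfl
    intro p hp
    simp only [Finset.mem_filter] at hp
    exact hpair p.1 p.2 hp.2
  · exact Finset.sum_congr rfl fun i _ => hdiag i

end HookAux
namespace HookAux
open Finset

lemma keyCount {A B : Finset ℕ} (h : A.card = B.card) (s : ℕ) :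
    (B.filter fun b => b + s ∉ A).card =
      (A.filter (· < s)).card + (A.filter fun a => s ≤ a ∧ a - s ∉ B).card := by
  classical
  have h1 : (B.filter fun b => b + s ∈ A).card =
      (A.filter fun a => s ≤ a ∧ a - s ∈ B).card := by
    refine Finset.card_nbij' (fun b => b + s) (fun a => a - s) ?_ ?_ ?_ ?_
    · intro b hb
      simp only [Finset.mem_coe, Finset.mem_filter] at *
      exact ⟨hb.2, by omega, by simpa using hb.1⟩
    · intro a ha
      simp only [Finset.mem_coe, Finset.mem_filter] at *
      obtain ⟨h1, h2, h3⟩ := ha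
      refine ⟨h3, ?_⟩
      have : a - s + s = a := by omega
      rwa [this]
    · intro b _; simp
    · intro a ha
      simp only [Finset.mem_coe, Finset.mem_filter] at ha
      show a - s + s = a
      omega
  have h2 := Finset.card_filter_add_card_filter_not
    (s := B) (p := fun b => b + s ∈ A)
  have h3 := Finset.card_filter_add_card_filter_not
    (s := A) (p := fun a => a < s)
  have h4 : A.filter (fun a => ¬ a < s) =
      (A.filter fun a => s ≤ a ∧ a - s ∈ B) ∪ (A.filter fun a => s ≤ a ∧ a - s ∉ B) := by
    rw [← Finset.filter_or]
    apply Finset.filter_congr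
    intro a _
    constructor
    · intro ha; by_cases hb : a - s ∈ B
      · exact Or.inl ⟨by omega, hb⟩
      · exact Or.inr ⟨by omega, hb⟩
    · rintro (⟨ha, _⟩ | ⟨ha, _⟩) <;> omega
  have h5 : ((A.filter fun a => s ≤ a ∧ a - s ∈ B) ∪
      (A.filter fun a => s ≤ a ∧ a - s ∉ B)).card =
      (A.filter fun a => s ≤ a ∧ a - s ∈ B).card +
      (A.filter fun a => s ≤ a ∧ a - s ∉ B).card := by
    apply Finset.card_union_of_disjoint
    rw [Finset.disjoint_left]
    intro a ha hb
    simp only [Finset.mem_filter] at *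
    tauto
  rw [h4, h5] at h3
  omega

lemma sum_fiber_count {α : Type*} [DecidableEq α] (s : Finset α) (key : α → ℕ) (Δ : ℕ)
    (hkey : ∀ x ∈ s, key x ∈ Finset.range Δ) (f : α → Multiset ℝ) (v : ℕ → Multiset ℝ)
    (hfv : ∀ x ∈ s, f x = v (key x)) :
    ∑ x ∈ s, f x =
      ∑ m ∈ Finset.range Δ, (s.filter fun x => key x = m).card • v m := by
  classical
  rw [Finset.sum_congr rfl hfv]
  rw [← Finset.sum_fiberwise_of_maps_to hkey (fun x => v (key x))]
  apply Finset.sum_congr rfl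
  intro m _
  rw [Finset.sum_congr rfl (fun x hx => ?_), Finset.sum_const]
  rw [Finset.mem_filter] at hx
  rw [hx.2]

/-- extended weak pairs: `a ∈ A`, `b ≤ a + Δ`, `b ∉ B` -/
def Ew (A B : Finset ℕ) (Δ : ℕ) : Finset (ℕ × ℕ) :=
  (A ×ˢ Finset.range (A.sup id + Δ + 1)).filter fun p => p.2 ≤ p.1 + Δ ∧ p.2 ∉ B

lemma mem_Ew {A B : Finset ℕ} {Δ : ℕ} {p : ℕ × ℕ} :
    p ∈ Ew A B Δ ↔ p.1 ∈ A ∧ p.2 ≤ p.1 + Δ ∧ p.2 ∉ B := by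
  unfold Ew
  simp only [Finset.mem_filter, Finset.mem_product, Finset.mem_range]
  constructor
  · tauto
  · rintro ⟨h1, h2, h3⟩
    refine ⟨⟨h1, ?_⟩, h2, h3⟩
    have : p.1 ≤ A.sup id := Finset.le_sup (f := id) h1
    omega

end HookAux
namespace HookAux
open Finset

lemma cast_sub_eq {a b : ℕ} (h : b ≤ a) : ((a - b : ℕ) : ℝ) = (a : ℝ) - (b : ℝ) := by
  rw [Nat.cast_sub h]

set_option maxHeartbeats 1000000 in
lemma pairA (A B : Finset ℕ) (hc : A.card = B.card) (Δ : ℕ) (dd e : ℝ)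
    (hdd : 0 < dd) (he : 0 < e) (hed : e < dd) :
    (∑ p ∈ Wk (shiftUp A Δ) B, ({dd * ((p.1 - p.2 : ℕ) : ℝ) + e} : Multiset ℝ)) +
      (∑ p ∈ St B (shiftUp A Δ), ({dd * ((p.1 - p.2 : ℕ) : ℝ) - e} : Multiset ℝ)) =
    (∑ p ∈ Wk (Finset.range Δ) ∅, ({dd * ((p.1 - p.2 : ℕ) : ℝ) + e} : Multiset ℝ)) +
      ((∑ p ∈ Wk A B, ({|dd * (((p.1 - p.2 : ℕ) : ℝ) + (Δ : ℝ)) + e|} : Multiset ℝ)) +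
       (∑ p ∈ St B A, ({|dd * (((p.1 - p.2 : ℕ) : ℝ) - (Δ : ℝ)) - e|} : Multiset ℝ))) := by
  classical
  -- step 1: split `Wk (shiftUp A Δ) B` into big part (≃ Ew A B Δ) and small part
  have h_split1 :
      (∑ p ∈ Wk (shiftUp A Δ) B, ({dd * ((p.1 - p.2 : ℕ) : ℝ) + e} : Multiset ℝ)) =
      (∑ p ∈ Ew A B Δ, ({dd * ((p.1 + Δ - p.2 : ℕ) : ℝ) + e} : Multiset ℝ)) +
      (∑ p ∈ Wk (Finset.range Δ) B, ({dd * ((p.1 - p.2 : ℕ) : ℝ) + e} : Multiset ℝ)) := by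
    rw [← Finset.sum_filter_add_sum_filter_not (Wk (shiftUp A Δ) B) (fun p => Δ ≤ p.1)]
    congr 1
    · refine Finset.sum_nbij' (fun p => (p.1 - Δ, p.2)) (fun q => (q.1 + Δ, q.2))
        ?_ ?_ ?_ ?_ ?_
      · intro p hp
        simp only [Finset.mem_filter, mem_Wk] at hp
        obtain ⟨⟨h1, h2, h3⟩, h4⟩ := hp
        rw [mem_shiftUp] at h1
        show (p.1 - Δ, p.2) ∈ Ew A B Δ
        rw [mem_Ew]
        refine ⟨?_, by omega, h3⟩
        show p.1 - Δ ∈ A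
        rcases h1 with h | ⟨_, h⟩
        · exact absurd h (by omega)
        · exact h
      · intro q hq
        rw [mem_Ew] at hq
        obtain ⟨h1, h2, h3⟩ := hq
        show (q.1 + Δ, q.2) ∈ (Wk (shiftUp A Δ) B).filter (fun p => Δ ≤ p.1)
        simp only [Finset.mem_filter, mem_Wk]
        refine ⟨⟨?_, by omega, h3⟩, by omega⟩
        rw [mem_shiftUp]
        right
        exact ⟨by omega, by simpa using h1⟩
      · intro p hp
        simp only [Finset.mem_filter, mem_Wk] at hp
        show (p.1 - Δ + Δ, p.2) = p
        have h : p.1 - Δ + Δ = p.1 := by omega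
        rw [h]
      · intro q _
        show (q.1 + Δ - Δ, q.2) = q
        have h : q.1 + Δ - Δ = q.1 := by omega
        rw [h]
      · intro p hp
        simp only [Finset.mem_filter, mem_Wk] at hp
        show ({dd * ((p.1 - p.2 : ℕ) : ℝ) + e} : Multiset ℝ) =
          {dd * ((p.1 - Δ + Δ - p.2 : ℕ) : ℝ) + e}
        have h : p.1 - Δ + Δ - p.2 = p.1 - p.2 := by omega
        rw [h]
    · apply Finset.sum_congr
      · ext p
        simp only [Finset.mem_filter, mem_Wk, mem_shiftUp, Finset.mem_range]
        constructor
        · rintro ⟨⟨h1, h2, h3⟩, h4⟩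
          exact ⟨by omega, h2, h3⟩
        · rintro ⟨h1, h2, h3⟩
          exact ⟨⟨Or.inl h1, h2, h3⟩, by omega⟩
      · intros; rfl
  -- step 2: split `Ew A B Δ` into `Wk A B` and the leftover per-length counts
  have h_keyL : ∀ p ∈ (Ew A B Δ).filter (fun p => ¬ p.2 ≤ p.1),
      p.1 + Δ - p.2 ∈ Finset.range Δ := by
    intro p hp
    simp only [Finset.mem_filter, mem_Ew] at hp
    rw [Finset.mem_range]
    omega
  have h_split2 :
      (∑ p ∈ Ew A B Δ, ({dd * ((p.1 + Δ - p.2 : ℕ) : ℝ) + e} : Multiset ℝ)) =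
      (∑ p ∈ Wk A B, ({dd * ((p.1 + Δ - p.2 : ℕ) : ℝ) + e} : Multiset ℝ)) +
      (∑ m ∈ Finset.range Δ,
        ((A.filter fun a => a + (Δ - m) ∉ B).card) •
          ({dd * (m : ℝ) + e} : Multiset ℝ)) := by
    rw [← Finset.sum_filter_add_sum_filter_not (Ew A B Δ) (fun p => p.2 ≤ p.1)]
    congr 1
    · apply Finset.sum_congr
      · ext p
        simp only [Finset.mem_filter, mem_Ew, mem_Wk]
        constructor
        · rintro ⟨⟨h1, h2, h3⟩, h4⟩
          exact ⟨h1, h4, h3⟩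
        · rintro ⟨h1, h2, h3⟩
          exact ⟨⟨h1, by omega, h3⟩, h2⟩
      · intros; rfl
    · refine Eq.trans (sum_fiber_count _ (fun p => p.1 + Δ - p.2) Δ h_keyL _
        (fun m => ({dd * (m : ℝ) + e} : Multiset ℝ)) (fun x _ => rfl)) ?_
      apply Finset.sum_congr rfl
      intro m hm
      rw [Finset.mem_range] at hm
      congr 1
      refine Finset.card_nbij' (fun p => p.1) (fun a => (a, a + (Δ - m))) ?_ ?_ ?_ ?_
      · intro p hp
        simp only [Finset.mem_coe, Finset.mem_filter, mem_Ew] at hp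
        obtain ⟨⟨⟨h1, h2, h3⟩, h4⟩, h5⟩ := hp
        show p.1 ∈ A.filter fun a => a + (Δ - m) ∉ B
        simp only [Finset.mem_filter]
        refine ⟨h1, ?_⟩
        have h : p.2 = p.1 + (Δ - m) := by omega
        rwa [← h]
      · intro a ha
        simp only [Finset.mem_coe, Finset.mem_filter] at ha
        obtain ⟨h1, h2⟩ := ha
        show (a, a + (Δ - m)) ∈ ((Ew A B Δ).filter (fun p => ¬ p.2 ≤ p.1)).filter
          (fun p => p.1 + Δ - p.2 = m)
        simp only [Finset.mem_filter, mem_Ew]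
        refine ⟨⟨⟨h1, ?_, h2⟩, ?_⟩, ?_⟩
        · show a + (Δ - m) ≤ a + Δ; omega
        · show ¬ a + (Δ - m) ≤ a; omega
        · show a + Δ - (a + (Δ - m)) = m; omega
      · intro p hp
        simp only [Finset.mem_coe, Finset.mem_filter, mem_Ew] at hp
        obtain ⟨⟨⟨h1, h2, h3⟩, h4⟩, h5⟩ := hp
        show (p.1, p.1 + (Δ - m)) = p
        have h : p.1 + (Δ - m) = p.2 := by omega
        rw [h]
      · intro a _
        rfl
  -- step 3: core splits as `Wk (range Δ) B` plus the middle per-length counts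
  have h_keyM : ∀ p ∈ (Wk (Finset.range Δ) ∅).filter (fun p => p.2 ∈ B),
      p.1 - p.2 ∈ Finset.range Δ := by
    intro p hp
    simp only [Finset.mem_filter, mem_Wk, Finset.mem_range] at hp
    rw [Finset.mem_range]
    omega
  have h_core :
      (∑ p ∈ Wk (Finset.range Δ) ∅, ({dd * ((p.1 - p.2 : ℕ) : ℝ) + e} : Multiset ℝ)) =
      (∑ p ∈ Wk (Finset.range Δ) B, ({dd * ((p.1 - p.2 : ℕ) : ℝ) + e} : Multiset ℝ)) +
      (∑ m ∈ Finset.range Δ,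
        ((B.filter (· < Δ - m)).card) • ({dd * (m : ℝ) + e} : Multiset ℝ)) := by
    rw [← Finset.sum_filter_add_sum_filter_not (Wk (Finset.range Δ) ∅) (fun p => p.2 ∈ B),
      add_comm]
    congr 1
    · apply Finset.sum_congr
      · ext p
        simp only [Finset.mem_filter, mem_Wk, Finset.mem_range, Finset.notMem_empty,
          not_false_eq_true, and_true]
        tauto
      · intros; rfl
    · refine Eq.trans (sum_fiber_count _ (fun p => p.1 - p.2) Δ h_keyM _
        (fun m => ({dd * (m : ℝ) + e} : Multiset ℝ)) (fun x _ => rfl)) ?_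
      apply Finset.sum_congr rfl
      intro m hm
      rw [Finset.mem_range] at hm
      congr 1
      refine Finset.card_nbij' (fun p => p.2) (fun b => (b + m, b)) ?_ ?_ ?_ ?_
      · intro p hp
        simp only [Finset.mem_coe, Finset.mem_filter, mem_Wk, Finset.mem_range] at hp
        obtain ⟨⟨⟨h1, h2, h3⟩, h4⟩, h5⟩ := hp
        show p.2 ∈ B.filter (· < Δ - m)
        simp only [Finset.mem_filter]
        exact ⟨h4, by omega⟩
      · intro b hb
        simp only [Finset.mem_coe, Finset.mem_filter] at hb
        obtain ⟨h1, h2⟩ := hb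
        show (b + m, b) ∈ ((Wk (Finset.range Δ) ∅).filter (fun p => p.2 ∈ B)).filter
          (fun p => p.1 - p.2 = m)
        simp only [Finset.mem_filter, mem_Wk, Finset.mem_range]
        refine ⟨⟨⟨by omega, by omega, by simp⟩, h1⟩, ?_⟩
        show b + m - b = m; omega
      · intro p hp
        simp only [Finset.mem_coe, Finset.mem_filter, mem_Wk, Finset.mem_range] at hp
        obtain ⟨⟨⟨h1, h2, h3⟩, h4⟩, h5⟩ := hp
        show (p.2 + m, p.2) = p
        have h : p.2 + m = p.1 := by omega
        rw [h]
      · intro b _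
        rfl
  -- step 4: quotient (i,j)-part matches the `Wk A B` part
  have h_quot1 :
      (∑ p ∈ Wk A B, ({|dd * (((p.1 - p.2 : ℕ) : ℝ) + (Δ : ℝ)) + e|} : Multiset ℝ)) =
      (∑ p ∈ Wk A B, ({dd * ((p.1 + Δ - p.2 : ℕ) : ℝ) + e} : Multiset ℝ)) := by
    apply Finset.sum_congr rfl
    intro p hp
    rw [mem_Wk] at hp
    obtain ⟨h1, h2, h3⟩ := hp
    congr 1
    have hnn : (0:ℝ) ≤ ((p.1 - p.2 : ℕ) : ℝ) := Nat.cast_nonneg _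
    have hΔ : (0:ℝ) ≤ (Δ : ℝ) := Nat.cast_nonneg _
    rw [abs_of_pos (by nlinarith)]
    have h : (p.1 + Δ - p.2 : ℕ) = (p.1 - p.2) + Δ := by omega
    rw [h]
    push_cast
    ring
  -- step 5: `St B (shiftUp A Δ)` matches the big part of the quotient (j,i)-part
  have h_stD :
      (∑ p ∈ St B (shiftUp A Δ), ({dd * ((p.1 - p.2 : ℕ) : ℝ) - e} : Multiset ℝ)) =
      (∑ q ∈ (St B A).filter (fun q => q.2 + Δ < q.1),
        ({dd * ((q.1 - q.2 : ℕ) : ℝ) - dd * (Δ : ℝ) - e} : Multiset ℝ)) := by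
    refine Finset.sum_nbij' (fun p => (p.1, p.2 - Δ)) (fun q => (q.1, q.2 + Δ))
      ?_ ?_ ?_ ?_ ?_
    · intro p hp
      rw [mem_St] at hp
      obtain ⟨h1, h2, h3⟩ := hp
      simp only [mem_shiftUp, not_or, not_and] at h3
      obtain ⟨h3a, h3b⟩ := h3
      show (p.1, p.2 - Δ) ∈ (St B A).filter (fun q => q.2 + Δ < q.1)
      simp only [Finset.mem_filter, mem_St]
      refine ⟨⟨h1, ?_, h3b (by omega)⟩, ?_⟩
      · show p.2 - Δ < p.1; omega
      · show p.2 - Δ + Δ < p.1; omega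
    · intro q hq
      simp only [Finset.mem_filter, mem_St] at hq
      obtain ⟨⟨h1, h2, h3⟩, h4⟩ := hq
      show (q.1, q.2 + Δ) ∈ St B (shiftUp A Δ)
      rw [mem_St]
      refine ⟨h1, by omega, ?_⟩
      rw [mem_shiftUp]
      simp only [not_or, not_and]
      exact ⟨by omega, fun _ => by simpa using h3⟩
    · intro p hp
      rw [mem_St] at hp
      obtain ⟨h1, h2, h3⟩ := hp
      simp only [mem_shiftUp, not_or, not_and] at h3
      show (p.1, p.2 - Δ + Δ) = p
      have h : p.2 - Δ + Δ = p.2 := by omega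
      rw [h]
    · intro q _
      show (q.1, q.2 + Δ - Δ) = q
      have h : q.2 + Δ - Δ = q.2 := by omega
      rw [h]
    · intro p hp
      rw [mem_St] at hp
      obtain ⟨h1, h2, h3⟩ := hp
      simp only [mem_shiftUp, not_or, not_and] at h3
      obtain ⟨h3a, h3b⟩ := h3
      show ({dd * ((p.1 - p.2 : ℕ) : ℝ) - e} : Multiset ℝ) =
        {dd * ((p.1 - (p.2 - Δ) : ℕ) : ℝ) - dd * (Δ : ℝ) - e}
      congr 1
      have h5 : (p.1 - (p.2 - Δ) : ℕ) = (p.1 - p.2) + Δ := by omega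
      rw [h5]
      push_cast
      ring
  -- step 6: split the quotient (j,i)-part
  have h_keyS : ∀ p ∈ (St B A).filter (fun q => ¬ q.2 + Δ < q.1),
      Δ - (p.1 - p.2) ∈ Finset.range Δ := by
    intro p hp
    simp only [Finset.mem_filter, mem_St] at hp
    rw [Finset.mem_range]
    omega
  have h_quot2 :
      (∑ p ∈ St B A, ({|dd * (((p.1 - p.2 : ℕ) : ℝ) - (Δ : ℝ)) - e|} : Multiset ℝ)) =
      (∑ q ∈ (St B A).filter (fun q => q.2 + Δ < q.1),
        ({dd * ((q.1 - q.2 : ℕ) : ℝ) - dd * (Δ : ℝ) - e} : Multiset ℝ)) +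
      (∑ m ∈ Finset.range Δ,
        ((B.filter fun a => (Δ - m) ≤ a ∧ a - (Δ - m) ∉ A).card) •
          ({dd * (m : ℝ) + e} : Multiset ℝ)) := by
    rw [← Finset.sum_filter_add_sum_filter_not (St B A) (fun q => q.2 + Δ < q.1)]
    congr 1
    · apply Finset.sum_congr rfl
      intro p hp
      simp only [Finset.mem_filter, mem_St] at hp
      obtain ⟨⟨h1, h2, h3⟩, h4⟩ := hp
      congr 1
      have hge : Δ + 1 ≤ p.1 - p.2 := by omega
      have hge' : ((Δ:ℝ) + 1) ≤ ((p.1 - p.2 : ℕ) : ℝ) := by exact_mod_cast hge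
      rw [abs_of_pos (by nlinarith)]
      ring
    · have hcong : ∀ p ∈ (St B A).filter (fun q => ¬ q.2 + Δ < q.1),
          ({|dd * (((p.1 - p.2 : ℕ) : ℝ) - (Δ : ℝ)) - e|} : Multiset ℝ) =
          ({dd * ((Δ - (p.1 - p.2) : ℕ) : ℝ) + e} : Multiset ℝ) := by
        intro p hp
        simp only [Finset.mem_filter, mem_St] at hp
        obtain ⟨⟨h1, h2, h3⟩, h4⟩ := hp
        congr 1
        have hle : p.1 - p.2 ≤ Δ := by omega
        have hle' : ((p.1 - p.2 : ℕ) : ℝ) ≤ (Δ : ℝ) := by exact_mod_cast hle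
        rw [abs_of_neg (by nlinarith)]
        rw [cast_sub_eq hle]
        ring
      rw [Finset.sum_congr rfl hcong]
      refine Eq.trans (sum_fiber_count _ (fun p => Δ - (p.1 - p.2)) Δ h_keyS _
        (fun m => ({dd * (m : ℝ) + e} : Multiset ℝ)) (fun x _ => rfl)) ?_
      apply Finset.sum_congr rfl
      intro m hm
      rw [Finset.mem_range] at hm
      congr 1
      refine Finset.card_nbij' (fun p => p.1) (fun a => (a, a - (Δ - m))) ?_ ?_ ?_ ?_
      · intro p hp
        simp only [Finset.mem_coe, Finset.mem_filter, mem_St] at hp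
        obtain ⟨⟨⟨h1, h2, h3⟩, h4⟩, h5⟩ := hp
        show p.1 ∈ B.filter fun a => (Δ - m) ≤ a ∧ a - (Δ - m) ∉ A
        simp only [Finset.mem_filter]
        refine ⟨h1, by omega, ?_⟩
        have h : p.2 = p.1 - (Δ - m) := by omega
        rwa [← h]
      · intro a ha
        simp only [Finset.mem_coe, Finset.mem_filter] at ha
        obtain ⟨h1, h2, h3⟩ := ha
        show (a, a - (Δ - m)) ∈ ((St B A).filter (fun q => ¬ q.2 + Δ < q.1)).filter
          (fun p => Δ - (p.1 - p.2) = m)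
        simp only [Finset.mem_filter, mem_St]
        refine ⟨⟨⟨h1, ?_, h3⟩, ?_⟩, ?_⟩
        · show a - (Δ - m) < a; omega
        · show ¬ a - (Δ - m) + Δ < a; omega
        · show Δ - (a - (a - (Δ - m))) = m; omega
      · intro p hp
        simp only [Finset.mem_coe, Finset.mem_filter, mem_St] at hp
        obtain ⟨⟨⟨h1, h2, h3⟩, h4⟩, h5⟩ := hp
        show (p.1, p.1 - (Δ - m)) = p
        have h : p.1 - (Δ - m) = p.2 := by omega
        rw [h]
      · intro a _
        rfl
  -- step 7: the per-length counting identity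
  have h_count : ∀ m ∈ Finset.range Δ,
      ((A.filter fun a => a + (Δ - m) ∉ B).card) • ({dd * (m : ℝ) + e} : Multiset ℝ) =
      ((B.filter (· < Δ - m)).card) • ({dd * (m : ℝ) + e} : Multiset ℝ) +
      ((B.filter fun a => (Δ - m) ≤ a ∧ a - (Δ - m) ∉ A).card) •
        ({dd * (m : ℝ) + e} : Multiset ℝ) := by
    intro m _
    rw [← add_smul]
    congr 1
    exact keyCount hc.symm (Δ - m)
  rw [h_split1, h_split2, h_core, h_quot1, h_quot2, h_stD]
  rw [Finset.sum_congr rfl h_count, Finset.sum_add_distrib]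
  abel

end HookAux
namespace HookAux
open Finset

/-- extended strict pairs: `a ∈ A`, `b < a + Δ`, `b ∉ B` -/
def Es (A B : Finset ℕ) (Δ : ℕ) : Finset (ℕ × ℕ) :=
  (A ×ˢ Finset.range (A.sup id + Δ + 1)).filter fun p => p.2 < p.1 + Δ ∧ p.2 ∉ B

lemma mem_Es {A B : Finset ℕ} {Δ : ℕ} {p : ℕ × ℕ} :
    p ∈ Es A B Δ ↔ p.1 ∈ A ∧ p.2 < p.1 + Δ ∧ p.2 ∉ B := by
  unfold Es
  simp only [Finset.mem_filter, Finset.mem_product, Finset.mem_range]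
  constructor
  · tauto
  · rintro ⟨h1, h2, h3⟩
    refine ⟨⟨h1, ?_⟩, h2, h3⟩
    have : p.1 ≤ A.sup id := Finset.le_sup (f := id) h1
    omega

set_option maxHeartbeats 1000000 in
lemma pairB (A B : Finset ℕ) (hc : A.card = B.card) (Δ : ℕ) (dd e : ℝ)
    (hdd : 0 < dd) (he : 0 < e) (hed : e < dd) :
    (∑ p ∈ Wk A (shiftUp B Δ), ({dd * ((p.1 - p.2 : ℕ) : ℝ) + e} : Multiset ℝ)) +
      (∑ p ∈ St (shiftUp B Δ) A, ({dd * ((p.1 - p.2 : ℕ) : ℝ) - e} : Multiset ℝ)) =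
    (∑ p ∈ St (Finset.range Δ) ∅, ({dd * ((p.1 - p.2 : ℕ) : ℝ) - e} : Multiset ℝ)) +
      ((∑ p ∈ Wk A B, ({|dd * (((p.1 - p.2 : ℕ) : ℝ) - (Δ : ℝ)) + e|} : Multiset ℝ)) +
       (∑ p ∈ St B A, ({|dd * (((p.1 - p.2 : ℕ) : ℝ) + (Δ : ℝ)) - e|} : Multiset ℝ))) := by
  classical
  -- step 1: `Wk A (shiftUp B Δ)` matches the big part of the quotient (i,j)-part
  have h_wk :
      (∑ p ∈ Wk A (shiftUp B Δ), ({dd * ((p.1 - p.2 : ℕ) : ℝ) + e} : Multiset ℝ)) =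
      (∑ q ∈ (Wk A B).filter (fun q => q.2 + Δ ≤ q.1),
        ({dd * ((q.1 - q.2 : ℕ) : ℝ) - dd * (Δ : ℝ) + e} : Multiset ℝ)) := by
    refine Finset.sum_nbij' (fun p => (p.1, p.2 - Δ)) (fun q => (q.1, q.2 + Δ))
      ?_ ?_ ?_ ?_ ?_
    · intro p hp
      rw [mem_Wk] at hp
      obtain ⟨h1, h2, h3⟩ := hp
      simp only [mem_shiftUp, not_or, not_and] at h3
      obtain ⟨h3a, h3b⟩ := h3
      show (p.1, p.2 - Δ) ∈ (Wk A B).filter (fun q => q.2 + Δ ≤ q.1)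
      simp only [Finset.mem_filter, mem_Wk]
      refine ⟨⟨h1, ?_, h3b (by omega)⟩, ?_⟩
      · show p.2 - Δ ≤ p.1; omega
      · show p.2 - Δ + Δ ≤ p.1; omega
    · intro q hq
      simp only [Finset.mem_filter, mem_Wk] at hq
      obtain ⟨⟨h1, h2, h3⟩, h4⟩ := hq
      show (q.1, q.2 + Δ) ∈ Wk A (shiftUp B Δ)
      rw [mem_Wk]
      refine ⟨h1, by omega, ?_⟩
      rw [mem_shiftUp]
      simp only [not_or, not_and]
      exact ⟨by omega, fun _ => by simpa using h3⟩
    · intro p hp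
      rw [mem_Wk] at hp
      obtain ⟨h1, h2, h3⟩ := hp
      simp only [mem_shiftUp, not_or, not_and] at h3
      show (p.1, p.2 - Δ + Δ) = p
      have h : p.2 - Δ + Δ = p.2 := by omega
      rw [h]
    · intro q _
      show (q.1, q.2 + Δ - Δ) = q
      have h : q.2 + Δ - Δ = q.2 := by omega
      rw [h]
    · intro p hp
      rw [mem_Wk] at hp
      obtain ⟨h1, h2, h3⟩ := hp
      simp only [mem_shiftUp, not_or, not_and] at h3
      obtain ⟨h3a, h3b⟩ := h3
      show ({dd * ((p.1 - p.2 : ℕ) : ℝ) + e} : Multiset ℝ) =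
        {dd * ((p.1 - (p.2 - Δ) : ℕ) : ℝ) - dd * (Δ : ℝ) + e}
      congr 1
      have h5 : (p.1 - (p.2 - Δ) : ℕ) = (p.1 - p.2) + Δ := by omega
      rw [h5]
      push_cast
      ring
  -- step 2: split the quotient (i,j)-part
  have h_keyQ : ∀ p ∈ (Wk A B).filter (fun q => ¬ q.2 + Δ ≤ q.1),
      p.1 - p.2 ∈ Finset.range Δ := by
    intro p hp
    simp only [Finset.mem_filter, mem_Wk] at hp
    rw [Finset.mem_range]
    omega
  have h_quot1 :
      (∑ p ∈ Wk A B, ({|dd * (((p.1 - p.2 : ℕ) : ℝ) - (Δ : ℝ)) + e|} : Multiset ℝ)) =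
      (∑ q ∈ (Wk A B).filter (fun q => q.2 + Δ ≤ q.1),
        ({dd * ((q.1 - q.2 : ℕ) : ℝ) - dd * (Δ : ℝ) + e} : Multiset ℝ)) +
      (∑ m ∈ Finset.range Δ,
        ((A.filter fun a => m ≤ a ∧ a - m ∉ B).card) •
          ({dd * ((Δ - m : ℕ) : ℝ) - e} : Multiset ℝ)) := by
    rw [← Finset.sum_filter_add_sum_filter_not (Wk A B) (fun q => q.2 + Δ ≤ q.1)]
    congr 1
    · apply Finset.sum_congr rfl
      intro p hp
      simp only [Finset.mem_filter, mem_Wk] at hp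
      obtain ⟨⟨h1, h2, h3⟩, h4⟩ := hp
      congr 1
      have hge : Δ ≤ p.1 - p.2 := by omega
      have hge' : (Δ:ℝ) ≤ ((p.1 - p.2 : ℕ) : ℝ) := by exact_mod_cast hge
      rw [abs_of_pos (by nlinarith)]
      ring
    · have hcong : ∀ p ∈ (Wk A B).filter (fun q => ¬ q.2 + Δ ≤ q.1),
          ({|dd * (((p.1 - p.2 : ℕ) : ℝ) - (Δ : ℝ)) + e|} : Multiset ℝ) =
          ({dd * ((Δ - (p.1 - p.2) : ℕ) : ℝ) - e} : Multiset ℝ) := by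
        intro p hp
        simp only [Finset.mem_filter, mem_Wk] at hp
        obtain ⟨⟨h1, h2, h3⟩, h4⟩ := hp
        congr 1
        have hlt : p.1 - p.2 + 1 ≤ Δ := by omega
        have hlt' : ((p.1 - p.2 : ℕ) : ℝ) + 1 ≤ (Δ : ℝ) := by exact_mod_cast hlt
        rw [abs_of_neg (by nlinarith)]
        rw [cast_sub_eq (by omega : p.1 - p.2 ≤ Δ)]
        ring
      rw [Finset.sum_congr rfl hcong]
      refine Eq.trans (sum_fiber_count ((Wk A B).filter (fun q => ¬ q.2 + Δ ≤ q.1))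
        (fun p => p.1 - p.2) Δ h_keyQ
        (fun p => ({dd * ((Δ - (p.1 - p.2) : ℕ) : ℝ) - e} : Multiset ℝ))
        (fun m => ({dd * ((Δ - m : ℕ) : ℝ) - e} : Multiset ℝ)) (fun x _ => rfl)) ?_
      apply Finset.sum_congr rfl
      intro m hm
      rw [Finset.mem_range] at hm
      congr 1
      refine Finset.card_nbij' (fun p => p.1) (fun a => (a, a - m)) ?_ ?_ ?_ ?_
      · intro p hp
        simp only [Finset.mem_coe, Finset.mem_filter, mem_Wk] at hp
        obtain ⟨⟨⟨h1, h2, h3⟩, h4⟩, h5⟩ := hp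
        show p.1 ∈ A.filter fun a => m ≤ a ∧ a - m ∉ B
        simp only [Finset.mem_filter]
        refine ⟨h1, by omega, ?_⟩
        have h : p.2 = p.1 - m := by omega
        rwa [← h]
      · intro a ha
        simp only [Finset.mem_coe, Finset.mem_filter] at ha
        obtain ⟨h1, h2, h3⟩ := ha
        show (a, a - m) ∈ ((Wk A B).filter (fun q => ¬ q.2 + Δ ≤ q.1)).filter
          (fun p => p.1 - p.2 = m)
        simp only [Finset.mem_filter, mem_Wk]
        refine ⟨⟨⟨h1, ?_, h3⟩, ?_⟩, ?_⟩
        · show a - m ≤ a; omega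
        · show ¬ a - m + Δ ≤ a; omega
        · show a - (a - m) = m; omega
      · intro p hp
        simp only [Finset.mem_coe, Finset.mem_filter, mem_Wk] at hp
        obtain ⟨⟨⟨h1, h2, h3⟩, h4⟩, h5⟩ := hp
        show (p.1, p.1 - m) = p
        have h : p.1 - m = p.2 := by omega
        rw [h]
      · intro a _
        rfl
  -- step 3: split `St (shiftUp B Δ) A` into big part (≃ Es B A Δ) and small part
  have h_split1 :
      (∑ p ∈ St (shiftUp B Δ) A, ({dd * ((p.1 - p.2 : ℕ) : ℝ) - e} : Multiset ℝ)) =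
      (∑ p ∈ Es B A Δ, ({dd * ((p.1 + Δ - p.2 : ℕ) : ℝ) - e} : Multiset ℝ)) +
      (∑ p ∈ St (Finset.range Δ) A, ({dd * ((p.1 - p.2 : ℕ) : ℝ) - e} : Multiset ℝ)) := by
    rw [← Finset.sum_filter_add_sum_filter_not (St (shiftUp B Δ) A) (fun p => Δ ≤ p.1)]
    congr 1
    · refine Finset.sum_nbij' (fun p => (p.1 - Δ, p.2)) (fun q => (q.1 + Δ, q.2))
        ?_ ?_ ?_ ?_ ?_
      · intro p hp
        simp only [Finset.mem_filter, mem_St] at hp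
        obtain ⟨⟨h1, h2, h3⟩, h4⟩ := hp
        rw [mem_shiftUp] at h1
        show (p.1 - Δ, p.2) ∈ Es B A Δ
        rw [mem_Es]
        refine ⟨?_, by omega, h3⟩
        show p.1 - Δ ∈ B
        rcases h1 with h | ⟨_, h⟩
        · exact absurd h (by omega)
        · exact h
      · intro q hq
        rw [mem_Es] at hq
        obtain ⟨h1, h2, h3⟩ := hq
        show (q.1 + Δ, q.2) ∈ (St (shiftUp B Δ) A).filter (fun p => Δ ≤ p.1)
        simp only [Finset.mem_filter, mem_St]
        refine ⟨⟨?_, by omega, h3⟩, by omega⟩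
        rw [mem_shiftUp]
        right
        exact ⟨by omega, by simpa using h1⟩
      · intro p hp
        simp only [Finset.mem_filter, mem_St] at hp
        show (p.1 - Δ + Δ, p.2) = p
        have h : p.1 - Δ + Δ = p.1 := by omega
        rw [h]
      · intro q _
        show (q.1 + Δ - Δ, q.2) = q
        have h : q.1 + Δ - Δ = q.1 := by omega
        rw [h]
      · intro p hp
        simp only [Finset.mem_filter, mem_St] at hp
        show ({dd * ((p.1 - p.2 : ℕ) : ℝ) - e} : Multiset ℝ) =
          {dd * ((p.1 - Δ + Δ - p.2 : ℕ) : ℝ) - e}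
        have h : p.1 - Δ + Δ - p.2 = p.1 - p.2 := by omega
        rw [h]
    · apply Finset.sum_congr
      · ext p
        simp only [Finset.mem_filter, mem_St, mem_shiftUp, Finset.mem_range]
        constructor
        · rintro ⟨⟨h1, h2, h3⟩, h4⟩
          exact ⟨by omega, h2, h3⟩
        · rintro ⟨h1, h2, h3⟩
          exact ⟨⟨Or.inl h1, h2, h3⟩, by omega⟩
      · intros; rfl
  -- step 4: split `Es B A Δ` into `St B A` part and leftover per-length counts
  have h_keyL : ∀ p ∈ (Es B A Δ).filter (fun p => ¬ p.2 < p.1),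
      p.2 - p.1 ∈ Finset.range Δ := by
    intro p hp
    simp only [Finset.mem_filter, mem_Es] at hp
    rw [Finset.mem_range]
    omega
  have h_split2 :
      (∑ p ∈ Es B A Δ, ({dd * ((p.1 + Δ - p.2 : ℕ) : ℝ) - e} : Multiset ℝ)) =
      (∑ p ∈ St B A, ({dd * ((p.1 + Δ - p.2 : ℕ) : ℝ) - e} : Multiset ℝ)) +
      (∑ m ∈ Finset.range Δ,
        ((B.filter fun a => a + m ∉ A).card) •
          ({dd * ((Δ - m : ℕ) : ℝ) - e} : Multiset ℝ)) := by
    rw [← Finset.sum_filter_add_sum_filter_not (Es B A Δ) (fun p => p.2 < p.1)]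
    congr 1
    · apply Finset.sum_congr
      · ext p
        simp only [Finset.mem_filter, mem_Es, mem_St]
        constructor
        · rintro ⟨⟨h1, h2, h3⟩, h4⟩
          exact ⟨h1, h4, h3⟩
        · rintro ⟨h1, h2, h3⟩
          exact ⟨⟨h1, by omega, h3⟩, h2⟩
      · intros; rfl
    · have hcong : ∀ p ∈ (Es B A Δ).filter (fun p => ¬ p.2 < p.1),
          ({dd * ((p.1 + Δ - p.2 : ℕ) : ℝ) - e} : Multiset ℝ) =
          ({dd * ((Δ - (p.2 - p.1) : ℕ) : ℝ) - e} : Multiset ℝ) := by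
        intro p hp
        simp only [Finset.mem_filter, mem_Es] at hp
        have h : p.1 + Δ - p.2 = Δ - (p.2 - p.1) := by omega
        rw [h]
      rw [Finset.sum_congr rfl hcong]
      refine Eq.trans (sum_fiber_count ((Es B A Δ).filter (fun p => ¬ p.2 < p.1))
        (fun p => p.2 - p.1) Δ h_keyL
        (fun p => ({dd * ((Δ - (p.2 - p.1) : ℕ) : ℝ) - e} : Multiset ℝ))
        (fun m => ({dd * ((Δ - m : ℕ) : ℝ) - e} : Multiset ℝ)) (fun x _ => rfl)) ?_
      apply Finset.sum_congr rfl
      intro m hm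
      rw [Finset.mem_range] at hm
      congr 1
      refine Finset.card_nbij' (fun p => p.1) (fun a => (a, a + m)) ?_ ?_ ?_ ?_
      · intro p hp
        simp only [Finset.mem_coe, Finset.mem_filter, mem_Es] at hp
        obtain ⟨⟨⟨h1, h2, h3⟩, h4⟩, h5⟩ := hp
        show p.1 ∈ B.filter fun a => a + m ∉ A
        simp only [Finset.mem_filter]
        refine ⟨h1, ?_⟩
        have h : p.2 = p.1 + m := by omega
        rwa [← h]
      · intro a ha
        simp only [Finset.mem_coe, Finset.mem_filter] at ha
        obtain ⟨h1, h2⟩ := ha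
        show (a, a + m) ∈ ((Es B A Δ).filter (fun p => ¬ p.2 < p.1)).filter
          (fun p => p.2 - p.1 = m)
        simp only [Finset.mem_filter, mem_Es]
        refine ⟨⟨⟨h1, ?_, h2⟩, ?_⟩, ?_⟩
        · show a + m < a + Δ; omega
        · show ¬ a + m < a; omega
        · show a + m - a = m; omega
      · intro p hp
        simp only [Finset.mem_coe, Finset.mem_filter, mem_Es] at hp
        obtain ⟨⟨⟨h1, h2, h3⟩, h4⟩, h5⟩ := hp
        show (p.1, p.1 + m) = p
        have h : p.1 + m = p.2 := by omega
        rw [h]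
      · intro a _
        rfl
  -- step 5: `St B A` part matches the quotient (j,i)-part
  have h_quot2 :
      (∑ p ∈ St B A, ({|dd * (((p.1 - p.2 : ℕ) : ℝ) + (Δ : ℝ)) - e|} : Multiset ℝ)) =
      (∑ p ∈ St B A, ({dd * ((p.1 + Δ - p.2 : ℕ) : ℝ) - e} : Multiset ℝ)) := by
    apply Finset.sum_congr rfl
    intro p hp
    rw [mem_St] at hp
    obtain ⟨h1, h2, h3⟩ := hp
    congr 1
    have hge : 1 ≤ p.1 - p.2 := by omega
    have hge' : (1:ℝ) ≤ ((p.1 - p.2 : ℕ) : ℝ) := by exact_mod_cast hge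
    have hΔ : (0:ℝ) ≤ (Δ : ℝ) := Nat.cast_nonneg _
    rw [abs_of_pos (by nlinarith)]
    have h : (p.1 + Δ - p.2 : ℕ) = (p.1 - p.2) + Δ := by omega
    rw [h]
    push_cast
    ring
  -- step 6: core splits as `St (range Δ) A` part plus middle per-length counts
  have h_keyM : ∀ p ∈ (St (Finset.range Δ) ∅).filter (fun p => p.2 ∈ A),
      Δ - (p.1 - p.2) ∈ Finset.range Δ := by
    intro p hp
    simp only [Finset.mem_filter, mem_St, Finset.mem_range] at hp
    rw [Finset.mem_range]
    omega
  have h_core :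
      (∑ p ∈ St (Finset.range Δ) ∅, ({dd * ((p.1 - p.2 : ℕ) : ℝ) - e} : Multiset ℝ)) =
      (∑ p ∈ St (Finset.range Δ) A, ({dd * ((p.1 - p.2 : ℕ) : ℝ) - e} : Multiset ℝ)) +
      (∑ m ∈ Finset.range Δ,
        ((A.filter (· < m)).card) • ({dd * ((Δ - m : ℕ) : ℝ) - e} : Multiset ℝ)) := by
    rw [← Finset.sum_filter_add_sum_filter_not (St (Finset.range Δ) ∅) (fun p => p.2 ∈ A),
      add_comm]
    congr 1
    · apply Finset.sum_congr
      · ext p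
        simp only [Finset.mem_filter, mem_St, Finset.mem_range, Finset.notMem_empty,
          not_false_eq_true, and_true]
        tauto
      · intros; rfl
    · have hcong : ∀ p ∈ (St (Finset.range Δ) ∅).filter (fun p => p.2 ∈ A),
          ({dd * ((p.1 - p.2 : ℕ) : ℝ) - e} : Multiset ℝ) =
          ({dd * ((Δ - (Δ - (p.1 - p.2)) : ℕ) : ℝ) - e} : Multiset ℝ) := by
        intro p hp
        simp only [Finset.mem_filter, mem_St, Finset.mem_range] at hp
        have h : p.1 - p.2 = Δ - (Δ - (p.1 - p.2)) := by omega
        rw [← h]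
      rw [Finset.sum_congr rfl hcong]
      refine Eq.trans (sum_fiber_count ((St (Finset.range Δ) ∅).filter (fun p => p.2 ∈ A))
        (fun p => Δ - (p.1 - p.2)) Δ h_keyM
        (fun p => ({dd * ((Δ - (Δ - (p.1 - p.2)) : ℕ) : ℝ) - e} : Multiset ℝ))
        (fun m => ({dd * ((Δ - m : ℕ) : ℝ) - e} : Multiset ℝ)) (fun x _ => rfl)) ?_
      apply Finset.sum_congr rfl
      intro m hm
      rw [Finset.mem_range] at hm
      congr 1
      refine Finset.card_nbij' (fun p => p.2) (fun b => (b + (Δ - m), b)) ?_ ?_ ?_ ?_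
      · intro p hp
        simp only [Finset.mem_coe, Finset.mem_filter, mem_St, Finset.mem_range] at hp
        obtain ⟨⟨⟨h1, h2, h3⟩, h4⟩, h5⟩ := hp
        show p.2 ∈ A.filter (· < m)
        simp only [Finset.mem_filter]
        exact ⟨h4, by omega⟩
      · intro b hb
        simp only [Finset.mem_coe, Finset.mem_filter] at hb
        obtain ⟨h1, h2⟩ := hb
        show (b + (Δ - m), b) ∈ ((St (Finset.range Δ) ∅).filter (fun p => p.2 ∈ A)).filter
          (fun p => Δ - (p.1 - p.2) = m)
        simp only [Finset.mem_filter, mem_St, Finset.mem_range]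
        refine ⟨⟨⟨by omega, by omega, by simp⟩, h1⟩, ?_⟩
        show Δ - (b + (Δ - m) - b) = m; omega
      · intro p hp
        simp only [Finset.mem_coe, Finset.mem_filter, mem_St, Finset.mem_range] at hp
        obtain ⟨⟨⟨h1, h2, h3⟩, h4⟩, h5⟩ := hp
        show (p.2 + (Δ - m), p.2) = p
        have h : p.2 + (Δ - m) = p.1 := by omega
        rw [h]
      · intro b _
        rfl
  -- step 7: the per-length counting identity
  have h_count : ∀ m ∈ Finset.range Δ,
      ((B.filter fun a => a + m ∉ A).card) • ({dd * ((Δ - m : ℕ) : ℝ) - e} : Multiset ℝ) =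
      ((A.filter (· < m)).card) • ({dd * ((Δ - m : ℕ) : ℝ) - e} : Multiset ℝ) +
      ((A.filter fun a => m ≤ a ∧ a - m ∉ B).card) •
        ({dd * ((Δ - m : ℕ) : ℝ) - e} : Multiset ℝ) := by
    intro m _
    rw [← add_smul]
    congr 1
    exact keyCount hc m
  rw [h_wk, h_quot1, h_quot2, h_split1, h_split2, h_core]
  rw [Finset.sum_congr rfl h_count, Finset.sum_add_distrib]
  abel

end HookAux
namespace HookAux
open Finset

lemma shiftUp_empty (s : ℕ) : shiftUp ∅ s = Finset.range s := by
  unfold shiftUp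
  simp

lemma shiftUp_range (a s : ℕ) : shiftUp (Finset.range a) s = Finset.range (a + s) := by
  ext n
  rw [mem_shiftUp]
  simp only [Finset.mem_range]
  omega

lemma St_range_le {a b : ℕ} (h : a ≤ b) : St (Finset.range a) (Finset.range b) = ∅ := by
  apply Finset.eq_empty_of_forall_notMem
  intro p hp
  rw [mem_St] at hp
  simp only [Finset.mem_range] at hp
  omega

lemma Wk_range_le {a b : ℕ} (h : a ≤ b) : Wk (Finset.range a) (Finset.range b) = ∅ := by
  apply Finset.eq_empty_of_forall_notMem
  intro p hp
  rw [mem_Wk] at hp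
  simp only [Finset.mem_range] at hp
  omega

lemma Wk_shift' (A B : Finset ℕ) (s : ℕ) (f g : ℕ × ℕ → Multiset ℝ)
    (hfg : ∀ p : ℕ × ℕ, s ≤ p.2 → p.2 ≤ p.1 → f p = g (p.1 - s, p.2 - s)) :
    ∑ p ∈ Wk (shiftUp A s) (shiftUp B s), f p = ∑ p ∈ Wk A B, g p := by
  refine Finset.sum_nbij' (fun p => (p.1 - s, p.2 - s)) (fun p => (p.1 + s, p.2 + s))
    ?_ ?_ ?_ ?_ ?_
  · intro p hp
    rw [mem_Wk] at hp
    obtain ⟨h1, h2, h3⟩ := hp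
    obtain ⟨hs, hA, hB⟩ := shift_mem_facts h2 h1 h3
    show (p.1 - s, p.2 - s) ∈ Wk A B
    rw [mem_Wk]
    exact ⟨hA, by omega, hB⟩
  · intro p hp
    rw [mem_Wk] at hp
    obtain ⟨h1, h2, h3⟩ := hp
    show (p.1 + s, p.2 + s) ∈ Wk (shiftUp A s) (shiftUp B s)
    rw [mem_Wk]
    refine ⟨?_, by omega, ?_⟩
    · rw [mem_shiftUp]; right; exact ⟨by omega, by simpa using h1⟩
    · rw [mem_shiftUp]; simp only [not_or, not_and]
      exact ⟨by omega, fun _ => by simpa using h3⟩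
  · intro p hp
    rw [mem_Wk] at hp
    obtain ⟨h1, h2, h3⟩ := hp
    obtain ⟨hs, -, -⟩ := shift_mem_facts h2 h1 h3
    show (p.1 - s + s, p.2 - s + s) = p
    have e1 : p.1 - s + s = p.1 := by omega
    have e2 : p.2 - s + s = p.2 := by omega
    rw [e1, e2]
  · intro p _
    show (p.1 + s - s, p.2 + s - s) = p
    have e1 : p.1 + s - s = p.1 := by omega
    have e2 : p.2 + s - s = p.2 := by omega
    rw [e1, e2]
  · intro p hp
    rw [mem_Wk] at hp
    obtain ⟨h1, h2, h3⟩ := hp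
    obtain ⟨hs, -, -⟩ := shift_mem_facts h2 h1 h3
    exact hfg p hs h2

lemma St_shift' (A B : Finset ℕ) (s : ℕ) (f g : ℕ × ℕ → Multiset ℝ)
    (hfg : ∀ p : ℕ × ℕ, s ≤ p.2 → p.2 ≤ p.1 → f p = g (p.1 - s, p.2 - s)) :
    ∑ p ∈ St (shiftUp A s) (shiftUp B s), f p = ∑ p ∈ St A B, g p := by
  refine Finset.sum_nbij' (fun p => (p.1 - s, p.2 - s)) (fun p => (p.1 + s, p.2 + s))
    ?_ ?_ ?_ ?_ ?_
  · intro p hp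
    rw [mem_St] at hp
    obtain ⟨h1, h2, h3⟩ := hp
    obtain ⟨hs, hA, hB⟩ := shift_mem_facts (le_of_lt h2) h1 h3
    show (p.1 - s, p.2 - s) ∈ St A B
    rw [mem_St]
    exact ⟨hA, by omega, hB⟩
  · intro p hp
    rw [mem_St] at hp
    obtain ⟨h1, h2, h3⟩ := hp
    show (p.1 + s, p.2 + s) ∈ St (shiftUp A s) (shiftUp B s)
    rw [mem_St]
    refine ⟨?_, by omega, ?_⟩
    · rw [mem_shiftUp]; right; exact ⟨by omega, by simpa using h1⟩
    · rw [mem_shiftUp]; simp only [not_or, not_and]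
      exact ⟨by omega, fun _ => by simpa using h3⟩
  · intro p hp
    rw [mem_St] at hp
    obtain ⟨h1, h2, h3⟩ := hp
    obtain ⟨hs, -, -⟩ := shift_mem_facts (le_of_lt h2) h1 h3
    show (p.1 - s + s, p.2 - s + s) = p
    have e1 : p.1 - s + s = p.1 := by omega
    have e2 : p.2 - s + s = p.2 := by omega
    rw [e1, e2]
  · intro p _
    show (p.1 + s - s, p.2 + s - s) = p
    have e1 : p.1 + s - s = p.1 := by omega
    have e2 : p.2 + s - s = p.2 := by omega
    rw [e1, e2]
  · intro p hp
    rw [mem_St] at hp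
    obtain ⟨h1, h2, h3⟩ := hp
    obtain ⟨hs, -, -⟩ := shift_mem_facts (le_of_lt h2) h1 h3
    exact hfg p hs (le_of_lt h2)

end HookAux

open HookAux Finset

/-- `𝓗(λ) = 𝓗(λ_(d)) ∪ abs(𝓗^δ(Q))`: the multiset of hook lengths of a β-set `X`
(equivalently of `λ = p(X)`) equals the multiset of hook lengths of its `d`-core
`C_d(X) = s_d⁻¹(C(s_d X))` together with the absolute values of the `δ`-lengths of
the hooks of the balanced quotient `Q`, where
`δ = (x_0 d, 1 + x_1 d,…,(d−1) + x_{d−1} d; d)` and `x_i = |X_i^{(d)}|`. -/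
theorem hooks_eq_core_union_abs_quot (d : ℕ) (hd : 0 < d) (X : Finset ℕ)
    (Y : Fin d → Finset ℕ) (hY : IsBalancedQuotient (sd d X) Y) :
    (betaHooks X).val.map (fun p => ((p.1 - p.2 : ℕ) : ℝ)) =
      (betaHooks (sdInv d (coreSymbol (sd d X)))).val.map
          (fun p => ((p.1 - p.2 : ℕ) : ℝ)) +
        (hookLens (fun i => ((i : ℕ) : ℝ) + ((sd d X i).card : ℝ) * (d : ℝ)) (d : ℝ) Y).map
          (fun r => |r|) := by
  classical
  have hYcard : ∀ i, (Y i).card = quotCard (sd d X) := fun i => (hY i).1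
  have hYpart : ∀ i, partitionOf (Y i) = partitionOf (sd d X i) := fun i => (hY i).2
  set N := quotCard (sd d X) + ∑ i, (sd d X i).card with hN
  have hNx : ∀ i, (sd d X i).card ≤ N := by
    intro i
    have h1 : (sd d X i).card ≤ ∑ i, (sd d X i).card :=
      Finset.single_le_sum (f := fun i => (sd d X i).card) (fun i _ => Nat.zero_le _)
        (Finset.mem_univ i)
    omega
  have hNr : quotCard (sd d X) ≤ N := Nat.le_add_right _ _
  have hA' : ∀ i, shiftUp (sd d X i) (N - (sd d X i).card) =
      shiftUp (Y i) (N - quotCard (sd d X)) := by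
    intro i
    have h := shift_eq_of_partition (A := sd d X i) (B := Y i) (hYpart i).symm
      (N := N) (hNx i) (by rw [hYcard i]; exact hNr)
    rwa [hYcard i] at h
  have hcardA : ∀ i, (shiftUp (Y i) (N - quotCard (sd d X))).card = N := by
    intro i
    rw [card_shiftUp, hYcard i]
    omega
  have hq : (hookLens (fun i => ((i : ℕ) : ℝ) + ((sd d X i).card : ℝ) * (d : ℝ)) (d : ℝ) Y).map
        (fun r => |r|) =
      ∑ z ∈ symbolHooks Y,
        ({|hookLen (fun i => ((i : ℕ) : ℝ) + ((sd d X i).card : ℝ) * (d : ℝ)) (d : ℝ) z|} :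
          Multiset ℝ) := by
    unfold hookLens
    rw [Multiset.map_map]
    exact map_as_sum _ _
  rw [step1 hd X, step1 hd (sdInv d (coreSymbol (sd d X))), sd_sdInv hd, hq,
    decomp, decomp, decomp]
  rw [show (∑ i, ∑ j, Fp (coreSymbol (sd d X)) (g0 d) i j) +
      (∑ i, ∑ j, Fp Y (fun z =>
        |hookLen (fun i => ((i : ℕ) : ℝ) + ((sd d X i).card : ℝ) * (d : ℝ)) (d : ℝ) z|) i j) =
      ∑ i, ∑ j, (Fp (coreSymbol (sd d X)) (g0 d) i j + Fp Y (fun z =>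
        |hookLen (fun i => ((i : ℕ) : ℝ) + ((sd d X i).card : ℝ) * (d : ℝ)) (d : ℝ) z|) i j)
    from by
      rw [← Finset.sum_add_distrib]
      exact Finset.sum_congr rfl fun i _ => by rw [← Finset.sum_add_distrib]]
  refine pair_sum_eq _ _ ?_ ?_
  · -- diagonal case
    intro i
    simp only [Fp, coreSymbol]
    rw [if_neg (lt_irrefl i), if_neg (lt_irrefl i), if_neg (lt_irrefl i)]
    rw [St_range_le (le_refl ((sd d X i).card)), Finset.sum_empty, zero_add]
    simp only [g0, hookLen]
    have t1 : ∑ p ∈ St (sd d X i) (sd d X i),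
          ({(d:ℝ) * ((p.1 - p.2 : ℕ):ℝ) + ((i:ℕ):ℝ) - ((i:ℕ):ℝ)} : Multiset ℝ)
        = ∑ p ∈ St (Y i) (Y i),
          ({(d:ℝ) * ((p.1 - p.2 : ℕ):ℝ) + ((i:ℕ):ℝ) - ((i:ℕ):ℝ)} : Multiset ℝ) := by
      have e1 := St_shift' (sd d X i) (sd d X i) (N - (sd d X i).card)
        (fun p => ({(d:ℝ) * ((p.1 - p.2 : ℕ):ℝ) + ((i:ℕ):ℝ) - ((i:ℕ):ℝ)} : Multiset ℝ))
        (fun p => ({(d:ℝ) * ((p.1 - p.2 : ℕ):ℝ) + ((i:ℕ):ℝ) - ((i:ℕ):ℝ)} : Multiset ℝ))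
        (fun p hs hle => by
          have hm : p.1 - (N - (sd d X i).card) - (p.2 - (N - (sd d X i).card)) = p.1 - p.2 := by
            omega
          show ({(d:ℝ) * ((p.1 - p.2 : ℕ):ℝ) + ((i:ℕ):ℝ) - ((i:ℕ):ℝ)} : Multiset ℝ) =
            ({(d:ℝ) * (((p.1 - (N - (sd d X i).card)) - (p.2 - (N - (sd d X i).card)) : ℕ):ℝ) +
              ((i:ℕ):ℝ) - ((i:ℕ):ℝ)} : Multiset ℝ)
          rw [hm])
      have e2 := St_shift' (Y i) (Y i) (N - quotCard (sd d X))
        (fun p => ({(d:ℝ) * ((p.1 - p.2 : ℕ):ℝ) + ((i:ℕ):ℝ) - ((i:ℕ):ℝ)} : Multiset ℝ))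
        (fun p => ({(d:ℝ) * ((p.1 - p.2 : ℕ):ℝ) + ((i:ℕ):ℝ) - ((i:ℕ):ℝ)} : Multiset ℝ))
        (fun p hs hle => by
          have hm : p.1 - (N - quotCard (sd d X)) - (p.2 - (N - quotCard (sd d X))) =
              p.1 - p.2 := by omega
          show ({(d:ℝ) * ((p.1 - p.2 : ℕ):ℝ) + ((i:ℕ):ℝ) - ((i:ℕ):ℝ)} : Multiset ℝ) =
            ({(d:ℝ) * (((p.1 - (N - quotCard (sd d X))) -
              (p.2 - (N - quotCard (sd d X))) : ℕ):ℝ) +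
              ((i:ℕ):ℝ) - ((i:ℕ):ℝ)} : Multiset ℝ)
          rw [hm])
      rw [← e1, hA' i, e2]
    rw [t1]
    apply Finset.sum_congr rfl
    intro p hp
    congr 1
    have h2 : (d:ℝ) * ((p.1 - p.2 : ℕ):ℝ) +
        (((i:ℕ):ℝ) + ((sd d X i).card : ℝ) * (d:ℝ)) -
        (((i:ℕ):ℝ) + ((sd d X i).card : ℝ) * (d:ℝ)) = (d:ℝ) * ((p.1 - p.2 : ℕ):ℝ) := by
      ring
    rw [h2, abs_of_nonneg (by positivity)]
    ring
  · -- off-diagonal case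
    intro i j hji
    have hdd : (0:ℝ) < (d:ℝ) := by exact_mod_cast hd
    have hji' : (j:ℕ) < (i:ℕ) := Fin.lt_def.mp hji
    have he : (0:ℝ) < ((i:ℕ):ℝ) - ((j:ℕ):ℝ) := by
      have : ((j:ℕ):ℝ) < ((i:ℕ):ℝ) := by exact_mod_cast hji'
      linarith
    have hed : ((i:ℕ):ℝ) - ((j:ℕ):ℝ) < (d:ℝ) := by
      have h1 : ((i:ℕ):ℝ) < (d:ℝ) := by exact_mod_cast i.isLt
      have h2 : (0:ℝ) ≤ ((j:ℕ):ℝ) := Nat.cast_nonneg _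
      linarith
    simp only [Fp, coreSymbol, if_pos hji, if_neg (asymm hji), g0, hookLen]
    by_cases hx : (sd d X j).card ≤ (sd d X i).card
    · -- case Δ = x_i − x_j ≥ 0 : use pairA
      have hSi : shiftUp (sd d X i) (N - (sd d X j).card) =
          shiftUp (shiftUp (Y i) (N - quotCard (sd d X)))
            ((sd d X i).card - (sd d X j).card) := by
        rw [shiftUp_shiftUp]
        rw [show N - (sd d X j).card =
          (N - (sd d X i).card) + ((sd d X i).card - (sd d X j).card) from by
            have := hNx i; omega]
        rw [← shiftUp_shiftUp, hA' i, shiftUp_shiftUp]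
      have hR : ((sd d X i).card : ℝ) =
          ((sd d X j).card : ℝ) + (((sd d X i).card - (sd d X j).card : ℕ) : ℝ) := by
        have hn : (sd d X i).card = (sd d X j).card +
            ((sd d X i).card - (sd d X j).card) := by omega
        exact_mod_cast hn
      have e1 := Wk_shift' (sd d X i) (sd d X j) (N - (sd d X j).card)
        (fun p => ({(d:ℝ) * ((p.1 - p.2 : ℕ):ℝ) + (((i:ℕ):ℝ) - ((j:ℕ):ℝ))} : Multiset ℝ))
        (fun p => ({(d:ℝ) * ((p.1 - p.2 : ℕ):ℝ) + ((i:ℕ):ℝ) - ((j:ℕ):ℝ)} : Multiset ℝ))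
        (fun p hs hle => by
          have hm : p.1 - (N - (sd d X j).card) - (p.2 - (N - (sd d X j).card)) =
              p.1 - p.2 := by omega
          show ({(d:ℝ) * ((p.1 - p.2 : ℕ):ℝ) + (((i:ℕ):ℝ) - ((j:ℕ):ℝ))} : Multiset ℝ) =
            ({(d:ℝ) * (((p.1 - (N - (sd d X j).card)) -
              (p.2 - (N - (sd d X j).card)) : ℕ):ℝ) + ((i:ℕ):ℝ) - ((j:ℕ):ℝ)} : Multiset ℝ)
          rw [hm]
          congr 1
          ring)
      have e2 := St_shift' (sd d X j) (sd d X i) (N - (sd d X j).card)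
        (fun p => ({(d:ℝ) * ((p.1 - p.2 : ℕ):ℝ) - (((i:ℕ):ℝ) - ((j:ℕ):ℝ))} : Multiset ℝ))
        (fun p => ({(d:ℝ) * ((p.1 - p.2 : ℕ):ℝ) + ((j:ℕ):ℝ) - ((i:ℕ):ℝ)} : Multiset ℝ))
        (fun p hs hle => by
          have hm : p.1 - (N - (sd d X j).card) - (p.2 - (N - (sd d X j).card)) =
              p.1 - p.2 := by omega
          show ({(d:ℝ) * ((p.1 - p.2 : ℕ):ℝ) - (((i:ℕ):ℝ) - ((j:ℕ):ℝ))} : Multiset ℝ) =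
            ({(d:ℝ) * (((p.1 - (N - (sd d X j).card)) -
              (p.2 - (N - (sd d X j).card)) : ℕ):ℝ) + ((j:ℕ):ℝ) - ((i:ℕ):ℝ)} : Multiset ℝ)
          rw [hm]
          congr 1
          ring)
      have e3 := Wk_shift' (Finset.range ((sd d X i).card - (sd d X j).card)) ∅
        ((sd d X j).card)
        (fun p => ({(d:ℝ) * ((p.1 - p.2 : ℕ):ℝ) + ((i:ℕ):ℝ) - ((j:ℕ):ℝ)} : Multiset ℝ))
        (fun p => ({(d:ℝ) * ((p.1 - p.2 : ℕ):ℝ) + (((i:ℕ):ℝ) - ((j:ℕ):ℝ))} : Multiset ℝ))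
        (fun p hs hle => by
          have hm : p.1 - (sd d X j).card - (p.2 - (sd d X j).card) = p.1 - p.2 := by omega
          show ({(d:ℝ) * ((p.1 - p.2 : ℕ):ℝ) + ((i:ℕ):ℝ) - ((j:ℕ):ℝ)} : Multiset ℝ) =
            ({(d:ℝ) * (((p.1 - (sd d X j).card) - (p.2 - (sd d X j).card) : ℕ):ℝ) +
              (((i:ℕ):ℝ) - ((j:ℕ):ℝ))} : Multiset ℝ)
          rw [hm]
          congr 1
          ring)
      have e5 := Wk_shift' (Y i) (Y j) (N - quotCard (sd d X))
        (fun p => ({|(d:ℝ) * (((p.1 - p.2 : ℕ):ℝ) +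
          (((sd d X i).card - (sd d X j).card : ℕ):ℝ)) +
          (((i:ℕ):ℝ) - ((j:ℕ):ℝ))|} : Multiset ℝ))
        (fun p => ({|(d:ℝ) * ((p.1 - p.2 : ℕ):ℝ) +
          (((i:ℕ):ℝ) + ((sd d X i).card : ℝ) * (d:ℝ)) -
          (((j:ℕ):ℝ) + ((sd d X j).card : ℝ) * (d:ℝ))|} : Multiset ℝ))
        (fun p hs hle => by
          have hm : p.1 - (N - quotCard (sd d X)) - (p.2 - (N - quotCard (sd d X))) =
              p.1 - p.2 := by omega
          show ({|(d:ℝ) * (((p.1 - p.2 : ℕ):ℝ) +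
              (((sd d X i).card - (sd d X j).card : ℕ):ℝ)) +
              (((i:ℕ):ℝ) - ((j:ℕ):ℝ))|} : Multiset ℝ) =
            ({|(d:ℝ) * (((p.1 - (N - quotCard (sd d X))) -
              (p.2 - (N - quotCard (sd d X))) : ℕ):ℝ) +
              (((i:ℕ):ℝ) + ((sd d X i).card : ℝ) * (d:ℝ)) -
              (((j:ℕ):ℝ) + ((sd d X j).card : ℝ) * (d:ℝ))|} : Multiset ℝ)
          rw [hm]
          congr 1
          rw [hR]
          ring_nf)
      have e6 := St_shift' (Y j) (Y i) (N - quotCard (sd d X))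
        (fun p => ({|(d:ℝ) * (((p.1 - p.2 : ℕ):ℝ) -
          (((sd d X i).card - (sd d X j).card : ℕ):ℝ)) -
          (((i:ℕ):ℝ) - ((j:ℕ):ℝ))|} : Multiset ℝ))
        (fun p => ({|(d:ℝ) * ((p.1 - p.2 : ℕ):ℝ) +
          (((j:ℕ):ℝ) + ((sd d X j).card : ℝ) * (d:ℝ)) -
          (((i:ℕ):ℝ) + ((sd d X i).card : ℝ) * (d:ℝ))|} : Multiset ℝ))
        (fun p hs hle => by
          have hm : p.1 - (N - quotCard (sd d X)) - (p.2 - (N - quotCard (sd d X))) =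
              p.1 - p.2 := by omega
          show ({|(d:ℝ) * (((p.1 - p.2 : ℕ):ℝ) -
              (((sd d X i).card - (sd d X j).card : ℕ):ℝ)) -
              (((i:ℕ):ℝ) - ((j:ℕ):ℝ))|} : Multiset ℝ) =
            ({|(d:ℝ) * (((p.1 - (N - quotCard (sd d X))) -
              (p.2 - (N - quotCard (sd d X))) : ℕ):ℝ) +
              (((j:ℕ):ℝ) + ((sd d X j).card : ℝ) * (d:ℝ)) -
              (((i:ℕ):ℝ) + ((sd d X i).card : ℝ) * (d:ℝ))|} : Multiset ℝ)
          rw [hm]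
          congr 1
          rw [hR]
          ring_nf)
      have hmain := pairA (shiftUp (Y i) (N - quotCard (sd d X)))
        (shiftUp (Y j) (N - quotCard (sd d X))) (by rw [hcardA i, hcardA j])
        ((sd d X i).card - (sd d X j).card) (d:ℝ) (((i:ℕ):ℝ) - ((j:ℕ):ℝ)) hdd he hed
      rw [St_range_le hx, Finset.sum_empty]
      rw [← e1, ← e2, hSi, hA' j]
      rw [show Finset.range ((sd d X i).card) =
        shiftUp (Finset.range ((sd d X i).card - (sd d X j).card)) ((sd d X j).card) from by
          rw [shiftUp_range]; congr 1; omega]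
      rw [show Finset.range ((sd d X j).card) = shiftUp ∅ ((sd d X j).card) from
        (shiftUp_empty _).symm]
      rw [e3, ← e5, ← e6, zero_add, hmain]
      abel
    · -- case Δ = x_j − x_i > 0 : use pairB
      have hSj : shiftUp (sd d X j) (N - (sd d X i).card) =
          shiftUp (shiftUp (Y j) (N - quotCard (sd d X)))
            ((sd d X j).card - (sd d X i).card) := by
        rw [shiftUp_shiftUp]
        rw [show N - (sd d X i).card =
          (N - (sd d X j).card) + ((sd d X j).card - (sd d X i).card) from by
            have := hNx j; omega]
        rw [← shiftUp_shiftUp, hA' j, shiftUp_shiftUp]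
      have hR : ((sd d X j).card : ℝ) =
          ((sd d X i).card : ℝ) + (((sd d X j).card - (sd d X i).card : ℕ) : ℝ) := by
        have hn : (sd d X j).card = (sd d X i).card +
            ((sd d X j).card - (sd d X i).card) := by omega
        exact_mod_cast hn
      have e1 := Wk_shift' (sd d X i) (sd d X j) (N - (sd d X i).card)
        (fun p => ({(d:ℝ) * ((p.1 - p.2 : ℕ):ℝ) + (((i:ℕ):ℝ) - ((j:ℕ):ℝ))} : Multiset ℝ))
        (fun p => ({(d:ℝ) * ((p.1 - p.2 : ℕ):ℝ) + ((i:ℕ):ℝ) - ((j:ℕ):ℝ)} : Multiset ℝ))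
        (fun p hs hle => by
          have hm : p.1 - (N - (sd d X i).card) - (p.2 - (N - (sd d X i).card)) =
              p.1 - p.2 := by omega
          show ({(d:ℝ) * ((p.1 - p.2 : ℕ):ℝ) + (((i:ℕ):ℝ) - ((j:ℕ):ℝ))} : Multiset ℝ) =
            ({(d:ℝ) * (((p.1 - (N - (sd d X i).card)) -
              (p.2 - (N - (sd d X i).card)) : ℕ):ℝ) + ((i:ℕ):ℝ) - ((j:ℕ):ℝ)} : Multiset ℝ)
          rw [hm]
          congr 1
          ring)
      have e2 := St_shift' (sd d X j) (sd d X i) (N - (sd d X i).card)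
        (fun p => ({(d:ℝ) * ((p.1 - p.2 : ℕ):ℝ) - (((i:ℕ):ℝ) - ((j:ℕ):ℝ))} : Multiset ℝ))
        (fun p => ({(d:ℝ) * ((p.1 - p.2 : ℕ):ℝ) + ((j:ℕ):ℝ) - ((i:ℕ):ℝ)} : Multiset ℝ))
        (fun p hs hle => by
          have hm : p.1 - (N - (sd d X i).card) - (p.2 - (N - (sd d X i).card)) =
              p.1 - p.2 := by omega
          show ({(d:ℝ) * ((p.1 - p.2 : ℕ):ℝ) - (((i:ℕ):ℝ) - ((j:ℕ):ℝ))} : Multiset ℝ) =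
            ({(d:ℝ) * (((p.1 - (N - (sd d X i).card)) -
              (p.2 - (N - (sd d X i).card)) : ℕ):ℝ) + ((j:ℕ):ℝ) - ((i:ℕ):ℝ)} : Multiset ℝ)
          rw [hm]
          congr 1
          ring)
      have e4 := St_shift' (Finset.range ((sd d X j).card - (sd d X i).card)) ∅
        ((sd d X i).card)
        (fun p => ({(d:ℝ) * ((p.1 - p.2 : ℕ):ℝ) + ((j:ℕ):ℝ) - ((i:ℕ):ℝ)} : Multiset ℝ))
        (fun p => ({(d:ℝ) * ((p.1 - p.2 : ℕ):ℝ) - (((i:ℕ):ℝ) - ((j:ℕ):ℝ))} : Multiset ℝ))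
        (fun p hs hle => by
          have hm : p.1 - (sd d X i).card - (p.2 - (sd d X i).card) = p.1 - p.2 := by omega
          show ({(d:ℝ) * ((p.1 - p.2 : ℕ):ℝ) + ((j:ℕ):ℝ) - ((i:ℕ):ℝ)} : Multiset ℝ) =
            ({(d:ℝ) * (((p.1 - (sd d X i).card) - (p.2 - (sd d X i).card) : ℕ):ℝ) -
              (((i:ℕ):ℝ) - ((j:ℕ):ℝ))} : Multiset ℝ)
          rw [hm]
          congr 1
          ring)
      have e5 := Wk_shift' (Y i) (Y j) (N - quotCard (sd d X))
        (fun p => ({|(d:ℝ) * (((p.1 - p.2 : ℕ):ℝ) -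
          (((sd d X j).card - (sd d X i).card : ℕ):ℝ)) +
          (((i:ℕ):ℝ) - ((j:ℕ):ℝ))|} : Multiset ℝ))
        (fun p => ({|(d:ℝ) * ((p.1 - p.2 : ℕ):ℝ) +
          (((i:ℕ):ℝ) + ((sd d X i).card : ℝ) * (d:ℝ)) -
          (((j:ℕ):ℝ) + ((sd d X j).card : ℝ) * (d:ℝ))|} : Multiset ℝ))
        (fun p hs hle => by
          have hm : p.1 - (N - quotCard (sd d X)) - (p.2 - (N - quotCard (sd d X))) =
              p.1 - p.2 := by omega
          show ({|(d:ℝ) * (((p.1 - p.2 : ℕ):ℝ) -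
              (((sd d X j).card - (sd d X i).card : ℕ):ℝ)) +
              (((i:ℕ):ℝ) - ((j:ℕ):ℝ))|} : Multiset ℝ) =
            ({|(d:ℝ) * (((p.1 - (N - quotCard (sd d X))) -
              (p.2 - (N - quotCard (sd d X))) : ℕ):ℝ) +
              (((i:ℕ):ℝ) + ((sd d X i).card : ℝ) * (d:ℝ)) -
              (((j:ℕ):ℝ) + ((sd d X j).card : ℝ) * (d:ℝ))|} : Multiset ℝ)
          rw [hm]
          congr 1
          rw [hR]
          ring_nf)
      have e6 := St_shift' (Y j) (Y i) (N - quotCard (sd d X))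
        (fun p => ({|(d:ℝ) * (((p.1 - p.2 : ℕ):ℝ) +
          (((sd d X j).card - (sd d X i).card : ℕ):ℝ)) -
          (((i:ℕ):ℝ) - ((j:ℕ):ℝ))|} : Multiset ℝ))
        (fun p => ({|(d:ℝ) * ((p.1 - p.2 : ℕ):ℝ) +
          (((j:ℕ):ℝ) + ((sd d X j).card : ℝ) * (d:ℝ)) -
          (((i:ℕ):ℝ) + ((sd d X i).card : ℝ) * (d:ℝ))|} : Multiset ℝ))
        (fun p hs hle => by
          have hm : p.1 - (N - quotCard (sd d X)) - (p.2 - (N - quotCard (sd d X))) =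
              p.1 - p.2 := by omega
          show ({|(d:ℝ) * (((p.1 - p.2 : ℕ):ℝ) +
              (((sd d X j).card - (sd d X i).card : ℕ):ℝ)) -
              (((i:ℕ):ℝ) - ((j:ℕ):ℝ))|} : Multiset ℝ) =
            ({|(d:ℝ) * (((p.1 - (N - quotCard (sd d X))) -
              (p.2 - (N - quotCard (sd d X))) : ℕ):ℝ) +
              (((j:ℕ):ℝ) + ((sd d X j).card : ℝ) * (d:ℝ)) -
              (((i:ℕ):ℝ) + ((sd d X i).card : ℝ) * (d:ℝ))|} : Multiset ℝ)
          rw [hm]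
          congr 1
          rw [hR]
          ring_nf)
      have hmain := pairB (shiftUp (Y i) (N - quotCard (sd d X)))
        (shiftUp (Y j) (N - quotCard (sd d X))) (by rw [hcardA i, hcardA j])
        ((sd d X j).card - (sd d X i).card) (d:ℝ) (((i:ℕ):ℝ) - ((j:ℕ):ℝ)) hdd he hed
      rw [Wk_range_le (by omega : (sd d X i).card ≤ (sd d X j).card), Finset.sum_empty]
      rw [← e1, ← e2, hSj, hA' i]
      rw [show Finset.range ((sd d X j).card) =
        shiftUp (Finset.range ((sd d X j).card - (sd d X i).card)) ((sd d X i).card) from by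
          rw [shiftUp_range]; congr 1; omega]
      rw [show Finset.range ((sd d X i).card) = shiftUp ∅ ((sd d X i).card) from
        (shiftUp_empty _).symm]
      rw [e4, ← e5, ← e6, zero_add, hmain]
      abel
end

section
/- Let d ≥ 1 and let X be a β-set. With x_i = |X_i^{(d)}|, δ = (x_0 d, 1 + x_1 d, …, (d−1) + x_{d−1} d; d), Q the balanced quotient of s_d(X), and C_d(X) = s_d^{-1}(C(s_d(X))) the d-core of X, the product of all hook lengths of X satisfies ∏𝓗(X) = (∏𝓗(C_d(X))) · |∏𝓗^δ(Q)|, where ∏M denotes the product of all elements of the multiset M. -/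
open Finset

lemma mem_shiftUp {X : Finset ℕ} {s a : ℕ} :
    a ∈ shiftUp X s ↔ (s ≤ a ∧ a - s ∈ X) ∨ a < s := by
  simp only [shiftUp, mem_union, mem_image, mem_range]
  constructor
  · rintro (⟨b, hb, rfl⟩ | h)
    · exact Or.inl ⟨Nat.le_add_left _ _, by simpa using hb⟩
    · exact Or.inr h
  · rintro (⟨h1, h2⟩ | h)
    · exact Or.inl ⟨a - s, h2, by omega⟩
    · exact Or.inr h

lemma shiftUp_zero (X : Finset ℕ) : shiftUp X 0 = X := by
  ext a; simp [mem_shiftUp]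

lemma shiftUp_shiftUp (X : Finset ℕ) (u v : ℕ) :
    shiftUp (shiftUp X u) v = shiftUp X (u + v) := by
  ext a
  simp only [mem_shiftUp]
  constructor
  · rintro (⟨h1, (⟨h2, h3⟩ | h2)⟩ | h)
    · exact Or.inl ⟨by omega, by rwa [show a - (u + v) = a - v - u by omega]⟩
    · omega
    · omega
  · rintro (⟨h1, h2⟩ | h)
    · exact Or.inl ⟨by omega, Or.inl ⟨by omega, by rwa [show a - v - u = a - (u + v) by omega]⟩⟩
    · rcases Nat.lt_or_ge a v with h' | h'
      · exact Or.inr h'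
      · exact Or.inl ⟨h', Or.inr (by omega)⟩

lemma card_shiftUp (X : Finset ℕ) (s : ℕ) : (shiftUp X s).card = X.card + s := by
  rw [shiftUp, card_union_of_disjoint, card_image_of_injective _ (add_left_injective s),
    card_range]
  rw [disjoint_right]
  intro a ha
  simp only [mem_range] at ha
  simp only [mem_image, not_exists, not_and]
  intro b _
  omega


lemma shiftUp_disj (X : Finset ℕ) (s : ℕ) : Disjoint (X.image (· + s)) (Finset.range s) := by
  rw [disjoint_right]; intro a ha
  simp only [mem_range] at ha
  simp only [mem_image, not_exists, not_and]; intro b _; omega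

lemma shiftUp_val (X : Finset ℕ) (s : ℕ) :
    (shiftUp X s).val = X.val.map (· + s) + (Finset.range s).val := by
  have h : shiftUp X s = (X.image (· + s)).disjUnion (Finset.range s) (shiftUp_disj X s) := by
    rw [Finset.disjUnion_eq_union]; rfl
  rw [h]
  show (X.image (· + s)).val + (Finset.range s).val = _
  congr 1
  rw [Finset.image_val, Multiset.dedup_eq_self.mpr]
  exact Multiset.Nodup.map (fun a b => by omega) X.nodup

lemma filter_lt_card_le (X : Finset ℕ) (a : ℕ) : (X.filter (· < a)).card ≤ a := by
  calc (X.filter (· < a)).card ≤ (Finset.range a).card := by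
        apply card_le_card; intro x hx; simp only [mem_filter] at hx; simp [hx.2]
    _ = a := card_range a

lemma filter_lt_shiftUp_card (X : Finset ℕ) (s b : ℕ) :
    ((shiftUp X s).filter (· < b)).card = (X.filter (· < b - s)).card + min b s := by
  have hdisj : Disjoint ((X.filter (· < b - s)).image (· + s)) (Finset.range (min b s)) := by
    rw [disjoint_right]; intro a ha
    simp only [mem_range] at ha
    simp only [mem_image, not_exists, not_and]; intro c _; omega
  have key : (shiftUp X s).filter (· < b)
      = ((X.filter (· < b - s)).image (· + s)) ∪ Finset.range (min b s) := by
    ext a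
    simp only [mem_filter, mem_shiftUp, mem_union, mem_image, mem_range, lt_min_iff]
    constructor
    · rintro ⟨(⟨h1, h2⟩ | h1), hb⟩
      · exact Or.inl ⟨a - s, ⟨h2, by omega⟩, by omega⟩
      · exact Or.inr ⟨hb, h1⟩
    · rintro (⟨c, hc, rfl⟩ | ⟨h1, h2⟩)
      · exact ⟨Or.inl ⟨by omega, by simpa using hc.1⟩, by omega⟩
      · exact ⟨Or.inr h2, h1⟩
  rw [key, card_union_of_disjoint hdisj,
    card_image_of_injective _ (add_left_injective s), card_range]

lemma partitionOf_shiftUp (X : Finset ℕ) (s : ℕ) :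
    partitionOf (shiftUp X s) = partitionOf X := by
  unfold partitionOf
  rw [shiftUp_val, Multiset.map_add, Multiset.filter_add]
  have h2 : Multiset.filter (· ≠ 0)
      ((Finset.range s).val.map fun a => a - ((shiftUp X s).filter (· < a)).card) = 0 := by
    rw [Multiset.filter_eq_nil]
    intro a ha
    simp only [Multiset.mem_map] at ha
    obtain ⟨c, hc, rfl⟩ := ha
    have hc' : c < s := by simpa using hc
    rw [filter_lt_shiftUp_card]
    simp only [ne_eq, not_not]
    have : (c : ℕ) - s = 0 := by omega
    rw [this]
    have : X.filter (· < 0) = ∅ := by simp [Finset.filter_eq_empty_iff]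
    rw [this]
    simp; omega
  rw [h2, add_zero, Multiset.map_map]
  congr 1
  apply Multiset.map_congr rfl
  intro a _
  simp only [Function.comp_apply]
  rw [filter_lt_shiftUp_card, Nat.add_sub_cancel]
  have := filter_lt_card_le X a
  omega

private def ent (X : Finset ℕ) (a : ℕ) : ℕ := a - (X.filter (· < a)).card

lemma mem_partitionOf_iff {X : Finset ℕ} {p : ℕ} :
    p ∈ partitionOf X ↔ p ≠ 0 ∧ ∃ a ∈ X, ent X a = p := by
  simp only [partitionOf, Multiset.mem_filter, Multiset.mem_map, ent, ← Finset.mem_def]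
  tauto

lemma ent_mono {X : Finset ℕ} {a b : ℕ} (ha : a ∈ X) (hab : a ≤ b) :
    ent X a ≤ ent X b := by
  unfold ent
  have h1 : (X.filter (· < b)).card ≤ (X.filter (· < a)).card + (b - a) := by
    have hsplit : X.filter (· < b) ⊆ X.filter (· < a) ∪ (Finset.Ico a b) := by
      intro x hx
      simp only [mem_filter, mem_union, mem_Ico] at *
      rcases lt_or_ge x a with h | h
      · exact Or.inl ⟨hx.1, h⟩
      · exact Or.inr ⟨h, hx.2⟩
    calc (X.filter (· < b)).card ≤ (X.filter (· < a) ∪ Finset.Ico a b).card :=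
          card_le_card hsplit
      _ ≤ (X.filter (· < a)).card + (Finset.Ico a b).card := card_union_le _ _
      _ = (X.filter (· < a)).card + (b - a) := by rw [Nat.card_Ico]
  have h2 := filter_lt_card_le X a
  omega

lemma filter_lt_max' {X : Finset ℕ} (h : X.Nonempty) :
    X.filter (· < X.max' h) = X.erase (X.max' h) := by
  ext a
  simp only [mem_filter, mem_erase]
  constructor
  · rintro ⟨h1, h2⟩; exact ⟨by omega, h1⟩
  · rintro ⟨h1, h2⟩
    exact ⟨h2, lt_of_le_of_ne (X.le_max' a h2) h1⟩

lemma max'_card_le {X : Finset ℕ} (h : X.Nonempty) : X.card ≤ X.max' h + 1 := by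
  calc X.card ≤ (Finset.range (X.max' h + 1)).card := by
        apply card_le_card; intro a ha; simp only [mem_range]
        exact Nat.lt_succ_of_le (X.le_max' a ha)
    _ = X.max' h + 1 := card_range _

lemma ent_max' {X : Finset ℕ} (h : X.Nonempty) :
    ent X (X.max' h) = X.max' h - (X.card - 1) := by
  unfold ent
  rw [filter_lt_max', card_erase_of_mem (X.max'_mem h)]

lemma ent_erase {X : Finset ℕ} (h : X.Nonempty) {a : ℕ} (ha : a ∈ X.erase (X.max' h)) :
    ent (X.erase (X.max' h)) a = ent X a := by
  unfold ent
  congr 1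
  apply congrArg
  ext x
  simp only [mem_filter, mem_erase]
  constructor
  · rintro ⟨⟨h1, h2⟩, h3⟩; exact ⟨h2, h3⟩
  · rintro ⟨h1, h2⟩
    refine ⟨⟨?_, h1⟩, h2⟩
    simp only [mem_erase] at ha
    have := X.le_max' a ha.2
    omega

lemma partitionOf_erase_max' {X : Finset ℕ} (h : X.Nonempty) :
    partitionOf X = (if ent X (X.max' h) ≠ 0 then {ent X (X.max' h)} else 0)
      + partitionOf (X.erase (X.max' h)) := by
  have hval : X.val = X.max' h ::ₘ (X.erase (X.max' h)).val := by
    rw [Finset.erase_val]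
    exact (Multiset.cons_erase (by exact_mod_cast X.max'_mem h)).symm
  conv_lhs => rw [partitionOf, hval]
  rw [Multiset.map_cons, Multiset.filter_cons]
  congr 1
  rw [partitionOf]
  congr 1
  apply Multiset.map_congr rfl
  intro a ha
  have ha' : a ∈ X.erase (X.max' h) := by rwa [← Finset.mem_def] at ha
  exact (congrArg (ent X a = ·) rfl) ▸ (ent_erase h ha').symm

lemma partitionOf_range (n : ℕ) : partitionOf (Finset.range n) = 0 := by
  rw [partitionOf, Multiset.filter_eq_nil]
  intro b hb
  simp only [Multiset.mem_map] at hb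
  obtain ⟨a, ha, rfl⟩ := hb
  have ha' : a < n := by simpa using ha
  have : (Finset.range n).filter (· < a) = Finset.range a := by
    ext x; simp only [mem_filter, mem_range]; omega
  rw [this, card_range]
  simp

lemma partitionOf_eq_zero : ∀ n (X : Finset ℕ), X.card = n → partitionOf X = 0 →
    X = Finset.range n := by
  intro n
  induction n using Nat.strong_induction_on with
  | _ n ih =>
    intro X hn h0
    rcases n with _ | n
    · simpa [Finset.card_eq_zero.mp hn] using (Finset.range_zero).symm ▸ rfl
    · have hne : X.Nonempty := by rw [← Finset.card_pos]; omega
      obtain ⟨M, hM⟩ : ∃ M, M = X.max' hne := ⟨_, rfl⟩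
      have hentM : ent X M = 0 := by
        by_contra hc
        have : ent X M ∈ partitionOf X :=
          mem_partitionOf_iff.mpr ⟨hc, M, hM ▸ X.max'_mem hne, rfl⟩
        rw [h0] at this; simp at this
      have hMn : M = n := by
        have h1 := ent_max' hne
        have h2 := max'_card_le hne
        rw [hn] at h1 h2
        rw [← hM] at h1 h2
        omega
      have heq := partitionOf_erase_max' hne
      rw [h0, ← hM, hentM] at heq
      simp only [ne_eq, not_true_eq_false, if_false, zero_add] at heq
      have hcard : (X.erase M).card = n := by
        rw [card_erase_of_mem (hM ▸ X.max'_mem hne), hn]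
        omega
      have := ih n (by omega) (X.erase M) hcard heq.symm
      have hX : X = insert M (X.erase M) := (Finset.insert_erase (hM ▸ X.max'_mem hne)).symm
      rw [hX, this, hMn, ← Finset.range_add_one]

lemma betaSet_unique : ∀ n (X Y : Finset ℕ), X.card = n → Y.card = n →
    partitionOf X = partitionOf Y → X = Y := by
  intro n
  induction n using Nat.strong_induction_on with
  | _ n ih =>
  intro X Y hX hY hp
  by_cases h0 : partitionOf X = 0
  · rw [partitionOf_eq_zero n X hX h0, partitionOf_eq_zero n Y hY (hp ▸ h0)]
  · have hne : X.Nonempty := by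
      rcases Finset.eq_empty_or_nonempty X with rfl | h
      · simp [partitionOf] at h0
      · exact h
    have hne' : Y.Nonempty := by
      rcases Finset.eq_empty_or_nonempty Y with rfl | h
      · rw [hp] at h0; simp [partitionOf] at h0
      · exact h
    obtain ⟨M, hM⟩ : ∃ M, M = X.max' hne := ⟨_, rfl⟩
    obtain ⟨M', hM'⟩ : ∃ M', M' = Y.max' hne' := ⟨_, rfl⟩
    -- the max entry is the sup of the partition
    have hsup : ∀ (Z : Finset ℕ) (hz : Z.Nonempty), partitionOf Z ≠ 0 →
        (partitionOf Z).sup = ent Z (Z.max' hz) ∧ ent Z (Z.max' hz) ≠ 0 := by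
      intro Z hz hz0
      have hub : ∀ p ∈ partitionOf Z, p ≤ ent Z (Z.max' hz) := by
        intro p hpz
        obtain ⟨-, a, haZ, rfl⟩ := mem_partitionOf_iff.mp hpz
        exact ent_mono haZ (Z.le_max' a haZ)
      have hnz : ent Z (Z.max' hz) ≠ 0 := by
        obtain ⟨p, hpz⟩ := Multiset.exists_mem_of_ne_zero hz0
        have := hub p hpz
        have := (mem_partitionOf_iff.mp hpz).1
        omega
      refine ⟨le_antisymm (Multiset.sup_le.mpr hub) ?_, hnz⟩
      exact Multiset.le_sup (mem_partitionOf_iff.mpr ⟨hnz, _, Z.max'_mem hz, rfl⟩)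
    obtain ⟨hsX, hnzX⟩ := hsup X hne h0
    obtain ⟨hsY, hnzY⟩ := hsup Y hne' (hp ▸ h0)
    rw [← hM] at hnzX
    rw [← hM'] at hnzY
    have hent_eq : ent X M = ent Y M' := by rw [hM, hM', ← hsX, ← hsY, hp]
    have hMM' : M = M' := by
      have e1 := ent_max' hne
      have e2 := ent_max' hne'
      have c1 := max'_card_le hne
      have c2 := max'_card_le hne'
      rw [← hM] at e1 c1; rw [← hM'] at e2 c2
      have hnzX' := hnzX
      rw [e1] at hent_eq hnzX'; rw [e2] at hent_eq
      rw [hX] at hent_eq c1 hnzX'; rw [hY] at hent_eq c2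
      omega
    have heqX := partitionOf_erase_max' hne
    have heqY := partitionOf_erase_max' hne'
    rw [← hM] at heqX; rw [← hM'] at heqY
    rw [if_pos hnzX] at heqX
    rw [if_pos hnzY] at heqY
    have herase : partitionOf (X.erase M) = partitionOf (Y.erase M') := by
      have : ({ent X M} : Multiset ℕ) + partitionOf (X.erase M)
          = {ent Y M'} + partitionOf (Y.erase M') := by rw [← heqX, ← heqY, hp]
      rw [hent_eq] at this
      exact add_left_cancel this
    have hcx : (X.erase M).card = n - 1 := by
      rw [card_erase_of_mem (hM ▸ X.max'_mem hne), hX]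
    have hcy : (Y.erase M').card = n - 1 := by
      rw [card_erase_of_mem (hM' ▸ Y.max'_mem hne'), hY]
    have hn1 : n - 1 < n := by
      have : X.card ≠ 0 := Finset.card_ne_zero_of_mem (hM ▸ X.max'_mem hne)
      omega
    have := ih (n - 1) hn1 (X.erase M) (Y.erase M') hcx hcy herase
    calc X = insert M (X.erase M) := (Finset.insert_erase (hM ▸ X.max'_mem hne)).symm
      _ = insert M (Y.erase M') := by rw [this]
      _ = Y := by rw [hMM']; exact Finset.insert_erase (hM' ▸ Y.max'_mem hne')

lemma card_partitionOf_le (X : Finset ℕ) : Multiset.card (partitionOf X) ≤ X.card := by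
  rw [partitionOf]
  calc Multiset.card (Multiset.filter _ _) ≤ Multiset.card (X.val.map fun a => a - (X.filter (· < a)).card) :=
        Multiset.card_le_card (Multiset.filter_le _ _)
    _ = X.card := by rw [Multiset.card_map]; rfl

-- chunk d
lemma mem_sd {d : ℕ} (hd : 0 < d) {X : Finset ℕ} {i : Fin d} {k : ℕ} :
    k ∈ sd d X i ↔ (i : ℕ) + k * d ∈ X := by
  simp only [sd, mem_image, mem_filter]
  constructor
  · rintro ⟨a, ⟨haX, hmod⟩, rfl⟩
    have := Nat.div_add_mod a d
    have hcomm : a / d * d = d * (a / d) := Nat.mul_comm _ _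
    have h2 : (i : ℕ) + a / d * d = a := by omega
    rwa [h2]
  · intro h
    refine ⟨(i : ℕ) + k * d, ⟨h, ?_⟩, ?_⟩
    · rw [Nat.add_mul_mod_self_right, Nat.mod_eq_of_lt i.isLt]
    · rw [Nat.add_mul_div_right _ _ hd, Nat.div_eq_of_lt i.isLt, zero_add]

lemma mem_sdInv {d : ℕ} {T : Fin d → Finset ℕ} {a : ℕ} :
    a ∈ sdInv d T ↔ ∃ i k, k ∈ T i ∧ a = (i : ℕ) + k * d := by
  simp only [sdInv, mem_biUnion, mem_image, mem_univ, true_and]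
  constructor
  · rintro ⟨i, k, hk, rfl⟩; exact ⟨i, k, hk, rfl⟩
  · rintro ⟨i, k, hk, rfl⟩; exact ⟨i, k, hk, rfl⟩

lemma sd_sdInv {d : ℕ} (hd : 0 < d) (T : Fin d → Finset ℕ) : sd d (sdInv d T) = T := by
  funext i
  ext k
  rw [mem_sd hd, mem_sdInv]
  constructor
  · rintro ⟨i', k', hk', heq⟩
    have hmod : ((i' : ℕ) + k' * d) % d = ((i : ℕ) + k * d) % d := by rw [heq]
    rw [Nat.add_mul_mod_self_right, Nat.add_mul_mod_self_right,
      Nat.mod_eq_of_lt i'.isLt, Nat.mod_eq_of_lt i.isLt] at hmod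
    have hii : i' = i := Fin.ext hmod
    subst hii
    have hkk : k' * d = k * d := by omega
    have := Nat.eq_of_mul_eq_mul_right hd hkk
    subst this
    exact hk'
  · intro hk
    exact ⟨i, k, hk, rfl⟩

lemma mem_betaHooks {X : Finset ℕ} {p : ℕ × ℕ} :
    p ∈ betaHooks X ↔ p.1 ∈ X ∧ p.2 ∉ X ∧ p.2 < p.1 := by
  simp only [betaHooks, mem_filter, mem_product, mem_range]
  constructor
  · rintro ⟨⟨h1, _⟩, h3, h4⟩; exact ⟨h1, h4, h3⟩
  · rintro ⟨h1, h2, h3⟩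
    have : p.1 ≤ X.sup id := Finset.le_sup (f := id) h1
    exact ⟨⟨h1, by omega⟩, h3, h2⟩

lemma mem_symbolHooks {d : ℕ} {T : Fin d → Finset ℕ} {z : ℕ × ℕ × Fin d × Fin d} :
    z ∈ symbolHooks T ↔ z.1 ∈ T z.2.2.1 ∧ z.2.1 ∉ T z.2.2.2 ∧
      (z.2.1 < z.1 ∨ (z.1 = z.2.1 ∧ z.2.2.2 < z.2.2.1)) := by
  simp only [symbolHooks, mem_filter, mem_product, mem_range, mem_univ, and_true]
  constructor
  · rintro ⟨_, h⟩; exact h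
  · rintro ⟨h1, h2, h3⟩
    have ha : z.1 ≤ Finset.univ.sup fun i => (T i).sup id := by
      calc z.1 ≤ (T z.2.2.1).sup id := Finset.le_sup (f := id) h1
        _ ≤ _ := Finset.le_sup (f := fun i => (T i).sup id) (mem_univ z.2.2.1)
    have hb : z.2.1 ≤ z.1 := by rcases h3 with h | ⟨h, _⟩ <;> omega
    exact ⟨⟨by omega, by omega⟩, h1, h2, h3⟩

def PH (A B : Finset ℕ) (tb : Prop) [Decidable tb] : Finset (ℕ × ℕ) :=
  (A ×ˢ Finset.range (A.sup id + 1)).filter fun p =>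
    p.2 ∉ B ∧ (p.2 < p.1 ∨ (p.1 = p.2 ∧ tb))

lemma mem_PH {A B : Finset ℕ} {tb : Prop} [Decidable tb] {p : ℕ × ℕ} :
    p ∈ PH A B tb ↔ p.1 ∈ A ∧ p.2 ∉ B ∧ (p.2 < p.1 ∨ (p.1 = p.2 ∧ tb)) := by
  simp only [PH, mem_filter, mem_product, mem_range]
  constructor
  · rintro ⟨⟨h1, _⟩, h3⟩; exact ⟨h1, h3⟩
  · rintro ⟨h1, h2, h3⟩
    have : p.1 ≤ A.sup id := Finset.le_sup (f := id) h1
    have hb : p.2 ≤ p.1 := by rcases h3 with h | ⟨h, _⟩ <;> omega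
    exact ⟨⟨h1, by omega⟩, h2, h3⟩

lemma prod_symbolHooks_eq {d : ℕ} (T : Fin d → Finset ℕ) (G : ℕ → Fin d → Fin d → ℝ) :
    ∏ z ∈ symbolHooks T, G (z.1 - z.2.1) z.2.2.1 z.2.2.2
      = ∏ ij ∈ (univ ×ˢ univ : Finset (Fin d × Fin d)),
          ∏ p ∈ PH (T ij.1) (T ij.2) (ij.2 < ij.1), G (p.1 - p.2) ij.1 ij.2 := by
  rw [← Finset.prod_fiberwise_of_maps_to
    (g := fun z : ℕ × ℕ × Fin d × Fin d => (z.2.2.1, z.2.2.2))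
    (t := (univ ×ˢ univ : Finset (Fin d × Fin d)))
    (fun z _ => by simp) (fun z => G (z.1 - z.2.1) z.2.2.1 z.2.2.2)]
  apply Finset.prod_congr rfl
  rintro ⟨i, j⟩ -
  apply Finset.prod_nbij' (fun z => (z.1, z.2.1)) (fun p => (p.1, p.2, i, j))
  · rintro z hz
    simp only [mem_filter] at hz
    obtain ⟨hz, hij⟩ := hz
    rw [mem_symbolHooks] at hz
    have h1 : z.2.2.1 = i := by rw [Prod.ext_iff] at hij; exact hij.1
    have h2 : z.2.2.2 = j := by rw [Prod.ext_iff] at hij; exact hij.2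
    rw [mem_PH]
    rw [h1, h2] at hz
    exact hz
  · rintro p hp
    rw [mem_PH] at hp
    simp only [mem_filter]
    exact ⟨mem_symbolHooks.mpr hp, trivial⟩
  · rintro z hz
    simp only [mem_filter] at hz
    obtain ⟨-, hij⟩ := hz
    rw [Prod.ext_iff] at hij
    obtain ⟨h1, h2⟩ := hij
    simp only at h1 h2
    rw [← h1, ← h2]
  · rintro p hp; rfl
  · rintro z hz
    simp only [mem_filter] at hz
    obtain ⟨-, hij⟩ := hz
    rw [Prod.ext_iff] at hij
    rw [hij.1, hij.2]

lemma div_lt_or_eq_of_lt {d a b : ℕ} (hd : 0 < d) (h : b < a) :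
    b / d < a / d ∨ (a / d = b / d ∧ b % d < a % d) := by
  have hle : b / d ≤ a / d := Nat.div_le_div_right (le_of_lt h)
  rcases lt_or_eq_of_le hle with h' | h'
  · exact Or.inl h'
  · refine Or.inr ⟨h'.symm, ?_⟩
    have e1 := Nat.div_add_mod a d
    have e2 := Nat.div_add_mod b d
    have : d * (b / d) = d * (a / d) := by rw [h']
    omega

lemma prod_betaHooks_eq_symbol {d : ℕ} (hd : 0 < d) (X : Finset ℕ) :
    ∏ p ∈ betaHooks X, ((p.1 - p.2 : ℕ) : ℝ)
      = ∏ z ∈ symbolHooks (sd d X), hookLen (fun i => ((i : ℕ) : ℝ)) (d : ℝ) z := by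
  apply Finset.prod_nbij'
    (i := fun p : ℕ × ℕ => ((p.1 / d, p.2 / d, ⟨p.1 % d, Nat.mod_lt _ hd⟩,
      ⟨p.2 % d, Nat.mod_lt _ hd⟩) : ℕ × ℕ × Fin d × Fin d))
    (j := fun z : ℕ × ℕ × Fin d × Fin d =>
      (((z.2.2.1 : ℕ) + z.1 * d, (z.2.2.2 : ℕ) + z.2.1 * d) : ℕ × ℕ))
  · intro p hp
    rw [mem_betaHooks] at hp
    obtain ⟨h1, h2, h3⟩ := hp
    rw [mem_symbolHooks]
    refine ⟨?_, ?_, ?_⟩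
    · rw [mem_sd hd]
      simp only [Fin.val_mk]
      rwa [Nat.mod_add_div' p.1 d]
    · rw [mem_sd hd]
      simp only [Fin.val_mk]
      rwa [Nat.mod_add_div' p.2 d]
    · rcases div_lt_or_eq_of_lt hd h3 with h | ⟨h, h'⟩
      · exact Or.inl h
      · exact Or.inr ⟨h, by simpa [Fin.lt_def]⟩
  · intro z hz
    rw [mem_symbolHooks] at hz
    obtain ⟨h1, h2, h3⟩ := hz
    rw [mem_betaHooks]
    have hlt : (z.2.2.2 : ℕ) + z.2.1 * d < (z.2.2.1 : ℕ) + z.1 * d := by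
      rcases h3 with h | ⟨h, h'⟩
      · have hs : z.2.1 * d + d ≤ z.1 * d := by
          calc z.2.1 * d + d = (z.2.1 + 1) * d := by ring
            _ ≤ z.1 * d := Nat.mul_le_mul_right d (by omega)
        have hv : (z.2.2.2 : ℕ) < d := z.2.2.2.isLt
        omega
      · rw [Fin.lt_def] at h'
        have : z.1 * d = z.2.1 * d := by rw [h]
        omega
    refine ⟨?_, ?_, hlt⟩
    · show (z.2.2.1 : ℕ) + z.1 * d ∈ X
      rwa [← mem_sd hd]
    · show (z.2.2.2 : ℕ) + z.2.1 * d ∉ X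
      rw [← mem_sd hd]
      exact h2
  · intro p hp
    simp only
    rw [Nat.mod_add_div' p.1 d, Nat.mod_add_div' p.2 d]
  · intro z hz
    have e1 : ((z.2.2.1 : ℕ) + z.1 * d) / d = z.1 := by
      rw [Nat.add_mul_div_right _ _ hd, Nat.div_eq_of_lt z.2.2.1.isLt, zero_add]
    have e2 : ((z.2.2.2 : ℕ) + z.2.1 * d) / d = z.2.1 := by
      rw [Nat.add_mul_div_right _ _ hd, Nat.div_eq_of_lt z.2.2.2.isLt, zero_add]
    have e3 : ((z.2.2.1 : ℕ) + z.1 * d) % d = (z.2.2.1 : ℕ) := by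
      rw [Nat.add_mul_mod_self_right, Nat.mod_eq_of_lt z.2.2.1.isLt]
    have e4 : ((z.2.2.2 : ℕ) + z.2.1 * d) % d = (z.2.2.2 : ℕ) := by
      rw [Nat.add_mul_mod_self_right, Nat.mod_eq_of_lt z.2.2.2.isLt]
    simp only [e1, e2]
    have : (⟨((z.2.2.1 : ℕ) + z.1 * d) % d, Nat.mod_lt _ hd⟩ : Fin d) = z.2.2.1 :=
      Fin.ext e3
    have h4 : (⟨((z.2.2.2 : ℕ) + z.2.1 * d) % d, Nat.mod_lt _ hd⟩ : Fin d) = z.2.2.2 :=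
      Fin.ext e4
    rw [this, h4]
  · intro p hp
    rw [mem_betaHooks] at hp
    obtain ⟨h1, h2, h3⟩ := hp
    rw [hookLen]
    simp only [Fin.val_mk]
    have e1 : (d : ℝ) * ((p.1 / d : ℕ) : ℝ) + ((p.1 % d : ℕ) : ℝ) = (p.1 : ℝ) := by
      exact_mod_cast congrArg (Nat.cast : ℕ → ℝ) (Nat.div_add_mod p.1 d)
    have e2 : (d : ℝ) * ((p.2 / d : ℕ) : ℝ) + ((p.2 % d : ℕ) : ℝ) = (p.2 : ℝ) := by
      exact_mod_cast congrArg (Nat.cast : ℕ → ℝ) (Nat.div_add_mod p.2 d)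
    have hle : p.2 / d ≤ p.1 / d := Nat.div_le_div_right (le_of_lt h3)
    rw [Nat.cast_sub (le_of_lt h3), Nat.cast_sub hle]
    push_cast
    linarith

-- chunk e : counting
section counting
variable (A B : Finset ℕ) (t : ℕ) (σ τ : Prop) [Decidable σ] [Decidable τ]

def Rset : Finset (ℕ × ℕ) :=
  (PH A B σ).filter fun p => ¬(p.2 + t < p.1 ∨ (p.1 = p.2 + t ∧ σ))

def NegSet : Finset (ℕ × ℕ) :=
  (PH (shiftUp B t) A τ).filter fun p => ¬(p.2 + t < p.1 ∨ (p.1 = p.2 + t ∧ τ))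

variable {A B t σ τ}

lemma mem_Rset {p : ℕ × ℕ} : p ∈ Rset A B t σ ↔
    p.1 ∈ A ∧ p.2 ∉ B ∧ (p.2 < p.1 ∨ (p.1 = p.2 ∧ σ)) ∧
      ¬(p.2 + t < p.1 ∨ (p.1 = p.2 + t ∧ σ)) := by
  simp only [Rset, mem_filter, mem_PH]; tauto

lemma mem_NegSet {p : ℕ × ℕ} : p ∈ NegSet A B t τ ↔
    p.1 ∈ shiftUp B t ∧ p.2 ∉ A ∧ (p.2 < p.1 ∨ (p.1 = p.2 ∧ τ)) ∧
      ¬(p.2 + t < p.1 ∨ (p.1 = p.2 + t ∧ τ)) := by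
  simp only [NegSet, mem_filter, mem_PH]; tauto

lemma card_R_fiber (m : ℕ) (hm : m ≤ t) :
    (((Rset A B t σ)).filter fun p => p.1 - p.2 = m).card
      = if (0 < m ∨ σ) ∧ (m < t ∨ ¬σ) then (A.filter fun a => m ≤ a ∧ a - m ∉ B).card
        else 0 := by
  split_ifs with hg
  · apply Finset.card_nbij' (fun p => p.1) (fun a => (a, a - m))
    · intro p hp
      simp only [Finset.mem_coe, mem_filter] at hp ⊢
      obtain ⟨hp, hf⟩ := hp
      rw [mem_Rset] at hp
      obtain ⟨h1, h2, h3, h4⟩ := hp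
      have hle : p.2 ≤ p.1 := by rcases h3 with h | ⟨h, _⟩ <;> omega
      have hp2 : p.2 = p.1 - m := by omega
      exact ⟨h1, by omega, by rwa [← hp2]⟩
    · intro a ha
      simp only [Finset.mem_coe, mem_filter] at ha ⊢
      obtain ⟨h1, h2, h3⟩ := ha
      refine ⟨mem_Rset.mpr ⟨h1, h3, ?_, ?_⟩, by omega⟩
      · rcases Nat.eq_zero_or_pos m with rfl | hm0
        · exact Or.inr ⟨by omega, hg.1.resolve_left (by omega)⟩
        · exact Or.inl (by omega)
      · rintro (h | ⟨h, hσ⟩)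
        · omega
        · have : m = t := by omega
          exact (hg.2.resolve_left (by omega)) hσ
    · intro p hp
      simp only [Finset.mem_coe, mem_filter] at hp
      obtain ⟨hp, hf⟩ := hp
      rw [mem_Rset] at hp
      have hle : p.2 ≤ p.1 := by rcases hp.2.2.1 with h | ⟨h, _⟩ <;> omega
      have : p.2 = p.1 - m := by omega
      beta_reduce; rw [← this]
    · intro a ha; rfl
  · rw [Finset.card_eq_zero, Finset.eq_empty_iff_forall_notMem]
    intro p hp
    simp only [mem_filter] at hp
    obtain ⟨hp, hf⟩ := hp
    rw [mem_Rset] at hp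
    obtain ⟨h1, h2, h3, h4⟩ := hp
    have hle : p.2 ≤ p.1 := by rcases h3 with h | ⟨h, _⟩ <;> omega
    rw [not_and_or] at hg
    push_neg at hg
    rcases hg with ⟨hm0, hσ⟩ | ⟨hmt, hσ⟩
    · have : p.1 = p.2 := by omega
      rcases h3 with h | ⟨-, h⟩
      · omega
      · exact hσ h
    · have : m = t := by omega
      exact h4 (Or.inr ⟨by omega, hσ⟩)

lemma card_Pc_fiber (m : ℕ) (ht : B.card + t = A.card) (hm : m ≤ t) :
    ((PH (Finset.range A.card) (Finset.range B.card) σ).filter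
        fun p => p.1 - p.2 = m).card
      = if (0 < m ∨ σ) then t - m else 0 := by
  split_ifs with hg
  · rw [← Finset.card_range (t - m)]
    apply Finset.card_nbij' (fun p => p.2 - B.card) (fun r => (B.card + r + m, B.card + r))
    · intro p hp
      simp only [Finset.mem_coe, mem_filter, mem_PH, mem_range] at hp ⊢
      obtain ⟨⟨h1, h2, h3⟩, hf⟩ := hp
      have hle : p.2 ≤ p.1 := by rcases h3 with h | ⟨h, _⟩ <;> omega
      omega
    · intro r hr
      simp only [Finset.mem_coe, mem_range] at hr
      simp only [Finset.mem_coe, mem_filter, mem_PH, mem_range]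
      refine ⟨⟨by omega, by omega, ?_⟩, by omega⟩
      rcases Nat.eq_zero_or_pos m with rfl | hm0
      · exact Or.inr ⟨by omega, hg.resolve_left (by omega)⟩
      · exact Or.inl (by omega)
    · intro p hp
      simp only [Finset.mem_coe, mem_filter, mem_PH, mem_range] at hp
      obtain ⟨⟨h1, h2, h3⟩, hf⟩ := hp
      have hle : p.2 ≤ p.1 := by rcases h3 with h | ⟨h, _⟩ <;> omega
      have e1 : B.card + (p.2 - B.card) + m = p.1 := by omega
      have e2 : B.card + (p.2 - B.card) = p.2 := by omega
      beta_reduce; rw [e1, e2]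
    · intro r hr; simp only; omega
  · rw [Finset.card_eq_zero, Finset.eq_empty_iff_forall_notMem]
    intro p hp
    simp only [mem_filter, mem_PH, mem_range] at hp
    obtain ⟨⟨h1, h2, h3⟩, hf⟩ := hp
    push_neg at hg
    rcases h3 with h | ⟨h, hσ⟩
    · omega
    · exact hg.2 hσ

end counting

section counting2
variable {A B : Finset ℕ} {t : ℕ} {σ τ : Prop} [Decidable σ] [Decidable τ]

lemma card_Neg_fiber (m : ℕ) (hm : m ≤ t) (hτ : τ ↔ ¬σ) :
    ((NegSet A B t τ).filter fun p => t - (p.1 - p.2) = m).card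
      = (if (0 < m ∨ σ) ∧ (m < t ∨ ¬σ) then (B.filter fun b => b + m ∉ A).card else 0)
        + (if (m < t ∨ ¬σ) then ((Finset.range m).filter fun b => b ∉ A).card else 0) := by
  have hsplit := Finset.card_filter_add_card_filter_not
    (s := (NegSet A B t τ).filter fun p => t - (p.1 - p.2) = m) (p := fun p => t ≤ p.1)
  -- N1 : the part with t ≤ p.1
  have hN1 : (((NegSet A B t τ).filter fun p => t - (p.1 - p.2) = m).filter
      fun p => t ≤ p.1).card
      = (if (0 < m ∨ σ) ∧ (m < t ∨ ¬σ) then (B.filter fun b => b + m ∉ A).card else 0) := by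
    split_ifs with hg
    · apply Finset.card_nbij' (fun p => p.1 - t) (fun b => (b + t, b + m))
      · intro p hp
        simp only [Finset.mem_coe, mem_filter] at hp ⊢
        obtain ⟨⟨hp, hf⟩, hts⟩ := hp
        rw [mem_NegSet] at hp
        obtain ⟨h1, h2, h3, h4⟩ := hp
        rw [mem_shiftUp] at h1
        have hle : p.2 ≤ p.1 := by rcases h3 with h | ⟨h, _⟩ <;> omega
        have hd : p.1 - p.2 ≤ t := by omega
        have hp2 : p.2 = p.1 - t + m := by omega
        refine ⟨?_, ?_⟩
        · rcases h1 with ⟨_, h⟩ | h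
          · exact h
          · omega
        · rwa [show p.1 - t + m = p.2 by omega]
      · intro b hb
        simp only [Finset.mem_coe, mem_filter] at hb ⊢
        obtain ⟨h1, h2⟩ := hb
        refine ⟨⟨mem_NegSet.mpr ⟨?_, ?_, ?_, ?_⟩, by omega⟩, by omega⟩
        · rw [mem_shiftUp]; exact Or.inl ⟨by omega, by simpa using h1⟩
        · exact h2
        · rcases Nat.lt_or_ge m t with h | h
          · exact Or.inl (by omega)
          · have hmt : m = t := by omega
            refine Or.inr ⟨by omega, hτ.mpr (hg.2.resolve_left (by omega))⟩
        · rintro (h | ⟨h, hτ'⟩)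
          · omega
          · have hm0 : m = 0 := by omega
            exact (hτ.mp hτ') (hg.1.resolve_left (by omega))
      · intro p hp
        simp only [Finset.mem_coe, mem_filter] at hp
        obtain ⟨⟨hp, hf⟩, hts⟩ := hp
        rw [mem_NegSet] at hp
        obtain ⟨h1, h2, h3, h4⟩ := hp
        have hle : p.2 ≤ p.1 := by rcases h3 with h | ⟨h, _⟩ <;> omega
        have hd : p.1 - p.2 ≤ t := by omega
        have e1 : p.1 - t + t = p.1 := by omega
        have e2 : p.1 - t + m = p.2 := by omega
        beta_reduce; rw [e1, e2]
      · intro b hb; simp only; omega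
    · rw [Finset.card_eq_zero, Finset.eq_empty_iff_forall_notMem]
      intro p hp
      simp only [mem_filter] at hp
      obtain ⟨⟨hp, hf⟩, hts⟩ := hp
      rw [mem_NegSet] at hp
      obtain ⟨h1, h2, h3, h4⟩ := hp
      have hle : p.2 ≤ p.1 := by rcases h3 with h | ⟨h, _⟩ <;> omega
      have hd : p.1 - p.2 ≤ t := by omega
      rw [not_and_or] at hg
      push_neg at hg
      rcases hg with ⟨hm0, hσ⟩ | ⟨hmt, hσ⟩
      · -- m = 0 and ¬σ, so τ holds; p.1 = p.2 + t contradicts ¬big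
        have : p.1 = p.2 + t := by omega
        exact h4 (Or.inr ⟨this, hτ.mpr hσ⟩)
      · -- m = t and σ: then p.1 - p.2 = 0, hook forces p.1 = p.2 ∧ τ, contra σ
        have hmt' : m = t := by omega
        rcases h3 with h | ⟨h, hτ'⟩
        · omega
        · exact (hτ.mp hτ') hσ
  -- N2 : the part with p.1 < t
  have hN2 : (((NegSet A B t τ).filter fun p => t - (p.1 - p.2) = m).filter
      fun p => ¬ t ≤ p.1).card
      = (if (m < t ∨ ¬σ) then ((Finset.range m).filter fun b => b ∉ A).card else 0) := by
    split_ifs with hg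
    · apply Finset.card_nbij' (fun p => p.2) (fun b => (b + (t - m), b))
      · intro p hp
        simp only [Finset.mem_coe, mem_filter] at hp ⊢
        obtain ⟨⟨hp, hf⟩, hts⟩ := hp
        rw [mem_NegSet] at hp
        obtain ⟨h1, h2, h3, h4⟩ := hp
        have hle : p.2 ≤ p.1 := by rcases h3 with h | ⟨h, _⟩ <;> omega
        exact ⟨by simp only [mem_range]; omega, h2⟩
      · intro b hb
        simp only [Finset.mem_coe, mem_filter, mem_range] at hb ⊢
        obtain ⟨h1, h2⟩ := hb
        refine ⟨⟨mem_NegSet.mpr ⟨?_, h2, ?_, ?_⟩, by omega⟩, by omega⟩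
        · rw [mem_shiftUp]; exact Or.inr (by omega)
        · rcases Nat.lt_or_ge m t with h | h
          · exact Or.inl (by omega)
          · have hmt : m = t := by omega
            exact Or.inr ⟨by omega, hτ.mpr (hg.resolve_left (by omega))⟩
        · rintro (h | ⟨h, hτ'⟩) <;> omega
      · intro p hp
        simp only [Finset.mem_coe, mem_filter] at hp
        obtain ⟨⟨hp, hf⟩, hts⟩ := hp
        rw [mem_NegSet] at hp
        obtain ⟨h1, h2, h3, h4⟩ := hp
        have hle : p.2 ≤ p.1 := by rcases h3 with h | ⟨h, _⟩ <;> omega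
        have : p.2 + (t - m) = p.1 := by omega
        beta_reduce; rw [this]
      · intro b hb; rfl
    · rw [Finset.card_eq_zero, Finset.eq_empty_iff_forall_notMem]
      intro p hp
      simp only [mem_filter] at hp
      obtain ⟨⟨hp, hf⟩, hts⟩ := hp
      rw [mem_NegSet] at hp
      obtain ⟨h1, h2, h3, h4⟩ := hp
      push_neg at hg
      rcases h3 with h | ⟨h, hτ'⟩
      · omega
      · exact (hτ.mp hτ') hg.2
  omega

end counting2

section count3
variable {A B : Finset ℕ} {t : ℕ} {σ τ : Prop} [Decidable σ] [Decidable τ]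

lemma partA_eq (m : ℕ) :
    (A.filter fun a => m ≤ a ∧ a - m ∉ B).card + (A.filter fun a => m ≤ a ∧ a - m ∈ B).card
      + (A.filter fun a => a < m).card = A.card := by
  have h1 := Finset.card_filter_add_card_filter_not (s := A) (p := fun a => m ≤ a)
  have h2 := Finset.card_filter_add_card_filter_not
    (s := A.filter fun a => m ≤ a) (p := fun a => a - m ∈ B)
  rw [Finset.filter_filter, Finset.filter_filter] at h2
  have e1 : A.filter (fun a => ¬ m ≤ a) = A.filter (fun a => a < m) := by
    apply Finset.filter_congr; intro a _; simp only [not_le]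
  have e2 : A.filter (fun a => m ≤ a ∧ a - m ∈ B) = A.filter (fun a => m ≤ a ∧ a - m ∈ B) := rfl
  have e3 : A.filter (fun a => m ≤ a ∧ ¬ a - m ∈ B) = A.filter (fun a => m ≤ a ∧ a - m ∉ B) := rfl
  rw [e1] at h1
  rw [e3] at h2
  omega

lemma partB_eq (m : ℕ) :
    (B.filter fun b => b + m ∉ A).card + (A.filter fun a => m ≤ a ∧ a - m ∈ B).card
      = B.card := by
  have h1 := Finset.card_filter_add_card_filter_not (s := B) (p := fun b => b + m ∈ A)
  have h2 : (A.filter fun a => m ≤ a ∧ a - m ∈ B).card = (B.filter fun b => b + m ∈ A).card := by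
    apply Finset.card_nbij' (fun a => a - m) (fun b => b + m)
    · intro a ha; simp only [Finset.mem_coe, mem_filter] at ha ⊢
      exact ⟨ha.2.2, by rw [show a - m + m = a by omega]; exact ha.1⟩
    · intro b hb; simp only [Finset.mem_coe, mem_filter] at hb ⊢
      exact ⟨hb.2, by omega, by rw [show b + m - m = b by omega]; exact hb.1⟩
    · intro a ha; simp only [Finset.mem_coe, mem_filter] at ha; beta_reduce; omega
    · intro b hb; beta_reduce; omega
  have h3 : B.filter (fun b => ¬ b + m ∈ A) = B.filter (fun b => b + m ∉ A) := rfl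
  omega

lemma partR_eq (m : ℕ) :
    ((Finset.range m).filter fun b => b ∉ A).card + (A.filter fun a => a < m).card = m := by
  have h1 := Finset.card_filter_add_card_filter_not
    (s := Finset.range m) (p := fun b => b ∉ A)
  have h2 : (A.filter fun a => a < m).card = ((Finset.range m).filter fun b => ¬ b ∉ A).card := by
    congr 1
    ext a
    simp only [mem_filter, mem_range, not_not]
    tauto
  rw [card_range] at h1
  omega

lemma count_identity (m : ℕ) (hm : m ≤ t) (ht : B.card + t = A.card) (hτ : τ ↔ ¬σ) :
    ((Rset A B t σ).filter fun p => p.1 - p.2 = m).card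
      = ((PH (Finset.range A.card) (Finset.range B.card) σ).filter
          fun p => p.1 - p.2 = m).card
        + ((NegSet A B t τ).filter fun p => t - (p.1 - p.2) = m).card := by
  rw [card_R_fiber m hm, card_Pc_fiber m ht hm, card_Neg_fiber m hm hτ]
  have e1 := partA_eq (A := A) (B := B) m
  have e2 := partB_eq (A := A) (B := B) m
  have e3 := partR_eq (A := A) m
  by_cases hσ : σ <;>
    simp only [hσ, eq_self_iff_true, not_true, not_false_iff, true_or, or_true, false_or,
      or_false, and_true, true_and, and_false, false_and, if_true, if_false] <;>
    split_ifs <;> omega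

end count3


-- chunk f : shift bijections for pair-hook products
lemma prod_PH_shift (A B : Finset ℕ) (s : ℕ) (tb : Prop) [Decidable tb] (G : ℕ → ℝ) :
    ∏ p ∈ PH (shiftUp A s) (shiftUp B s) tb, G (p.1 - p.2)
      = ∏ p ∈ PH A B tb, G (p.1 - p.2) := by
  apply Finset.prod_nbij' (fun p : ℕ × ℕ => (p.1 - s, p.2 - s))
    (fun q : ℕ × ℕ => (q.1 + s, q.2 + s))
  · intro p hp
    rw [mem_PH] at hp ⊢
    obtain ⟨h1, h2, h3⟩ := hp
    rw [mem_shiftUp] at h1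
    rw [mem_shiftUp] at h2
    push_neg at h2
    have hle : p.2 ≤ p.1 := by rcases h3 with h | ⟨h, _⟩ <;> omega
    have hs2 : s ≤ p.2 := by omega
    have hs1 : s ≤ p.1 := by omega
    have hA : p.1 - s ∈ A := by
      rcases h1 with ⟨_, h⟩ | h
      · exact h
      · omega
    refine ⟨hA, (h2.1 hs2), ?_⟩
    rcases h3 with h | ⟨h, htb⟩
    · exact Or.inl (by omega)
    · exact Or.inr ⟨by omega, htb⟩
  · intro q hq
    rw [mem_PH] at hq ⊢
    obtain ⟨h1, h2, h3⟩ := hq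
    refine ⟨?_, ?_, ?_⟩
    · rw [mem_shiftUp]; exact Or.inl ⟨by omega, by simpa using h1⟩
    · rw [mem_shiftUp]; push_neg
      exact ⟨fun _ => by simpa using h2, by omega⟩
    · rcases h3 with h | ⟨h, htb⟩
      · exact Or.inl (by omega)
      · exact Or.inr ⟨by omega, htb⟩
  · intro p hp
    rw [mem_PH] at hp
    obtain ⟨h1, h2, h3⟩ := hp
    rw [mem_shiftUp] at h1 h2
    push_neg at h2
    have hle : p.2 ≤ p.1 := by rcases h3 with h | ⟨h, _⟩ <;> omega
    have hs2 : s ≤ p.2 := by omega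
    have hs1 : s ≤ p.1 := by omega
    simp only
    rw [show p.1 - s + s = p.1 by omega, show p.2 - s + s = p.2 by omega]
  · intro q hq; simp only; rw [Nat.add_sub_cancel, Nat.add_sub_cancel]
  · intro p hp
    rw [mem_PH] at hp
    obtain ⟨h1, h2, h3⟩ := hp
    rw [mem_shiftUp] at h1 h2
    push_neg at h2
    have hle : p.2 ≤ p.1 := by rcases h3 with h | ⟨h, _⟩ <;> omega
    have hs2 : s ≤ p.2 := by omega
    congr 1
    omega

lemma prod_PH_upB_abs (A B : Finset ℕ) (tb : Prop) [Decidable tb] (t : ℕ) (dr ci cj : ℝ)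
    (hd : 0 < dr) (he : -dr < ci - cj) (htb : tb → 0 < dr * t + (ci - cj)) :
    ∏ p ∈ PH A (shiftUp B t) tb, |dr * ((p.1 - p.2 : ℕ) : ℝ) + ci - cj + t * dr|
      = ∏ p ∈ (PH A B tb).filter (fun p => p.2 + t < p.1 ∨ (p.1 = p.2 + t ∧ tb)),
          (dr * ((p.1 - p.2 : ℕ) : ℝ) + ci - cj) := by
  apply Finset.prod_nbij' (fun p : ℕ × ℕ => (p.1, p.2 - t)) (fun q : ℕ × ℕ => (q.1, q.2 + t))
  · intro p hp
    rw [mem_PH] at hp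
    obtain ⟨h1, h2, h3⟩ := hp
    rw [mem_shiftUp] at h2
    push_neg at h2
    have hle : p.2 ≤ p.1 := by rcases h3 with h | ⟨h, _⟩ <;> omega
    have ht2 : t ≤ p.2 := by omega
    simp only [mem_filter, mem_PH]
    refine ⟨⟨h1, h2.1 ht2, ?_⟩, ?_⟩
    · rcases h3 with h | ⟨h, htb'⟩
      · exact Or.inl (by omega)
      · rcases Nat.eq_zero_or_pos t with rfl | ht0
        · exact Or.inr ⟨by omega, htb'⟩
        · exact Or.inl (by omega)
    · rcases h3 with h | ⟨h, htb'⟩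
      · exact Or.inl (by omega)
      · exact Or.inr ⟨by omega, htb'⟩
  · intro q hq
    simp only [mem_filter, mem_PH] at hq
    obtain ⟨⟨h1, h2, h3⟩, hbig⟩ := hq
    rw [mem_PH]
    refine ⟨h1, ?_, ?_⟩
    · rw [mem_shiftUp]; push_neg
      exact ⟨fun _ => by simpa using h2, by omega⟩
    · rcases hbig with h | ⟨h, htb'⟩
      · exact Or.inl (by omega)
      · exact Or.inr ⟨by omega, htb'⟩
  · intro p hp
    rw [mem_PH] at hp
    obtain ⟨h1, h2, h3⟩ := hp
    rw [mem_shiftUp] at h2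
    push_neg at h2
    have hle : p.2 ≤ p.1 := by rcases h3 with h | ⟨h, _⟩ <;> omega
    have ht2 : t ≤ p.2 := by omega
    simp only
    rw [show p.2 - t + t = p.2 by omega]
  · intro q hq; simp only; rw [Nat.add_sub_cancel]
  · intro p hp
    rw [mem_PH] at hp
    obtain ⟨h1, h2, h3⟩ := hp
    rw [mem_shiftUp] at h2
    push_neg at h2
    have hle : p.2 ≤ p.1 := by rcases h3 with h | ⟨h, _⟩ <;> omega
    have ht2 : t ≤ p.2 := by omega
    have harith : (p.1 - (p.2 - t) : ℕ) = (p.1 - p.2) + t := by omega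
    have hval : dr * ((p.1 - (p.2 - t) : ℕ) : ℝ) + ci - cj
        = dr * ((p.1 - p.2 : ℕ) : ℝ) + ci - cj + t * dr := by
      rw [harith]; push_cast; ring
    rw [← hval]
    apply abs_of_pos
    rw [hval]
    rcases h3 with h | ⟨h, htb'⟩
    · have h1' : (1 : ℝ) ≤ ((p.1 - p.2 : ℕ) : ℝ) := by
        have : 1 ≤ p.1 - p.2 := by omega
        exact_mod_cast this
      have h2' : dr * 1 ≤ dr * ((p.1 - p.2 : ℕ) : ℝ) :=
        mul_le_mul_of_nonneg_left h1' (le_of_lt hd)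
      have h3' : (0:ℝ) ≤ (t : ℝ) * dr := mul_nonneg (by positivity) (le_of_lt hd)
      linarith
    · have h0 : ((p.1 - p.2 : ℕ) : ℝ) = 0 := by
        rw [show p.1 - p.2 = 0 by omega]; simp
      rw [h0]
      have := htb htb'
      linarith [this, mul_comm dr (t:ℝ)]

lemma prod_PH_upA_pos (A B : Finset ℕ) (tb : Prop) [Decidable tb] (t : ℕ) (dr ci cj : ℝ)
    (hd : 0 < dr) (he2 : ci - cj < dr) (htb2 : tb → ci - cj < 0) :
    ∏ p ∈ (PH (shiftUp B t) A tb).filter (fun p => p.2 + t < p.1 ∨ (p.1 = p.2 + t ∧ tb)),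
        |dr * ((p.1 - p.2 : ℕ) : ℝ) + cj - ci - t * dr|
      = ∏ q ∈ PH B A tb, (dr * ((q.1 - q.2 : ℕ) : ℝ) + cj - ci) := by
  apply Finset.prod_nbij' (fun p : ℕ × ℕ => (p.1 - t, p.2)) (fun q : ℕ × ℕ => (q.1 + t, q.2))
  · intro p hp
    simp only [mem_filter, mem_PH] at hp
    obtain ⟨⟨h1, h2, h3⟩, hbig⟩ := hp
    rw [mem_shiftUp] at h1
    have hp1 : t ≤ p.1 := by rcases hbig with h | ⟨h, _⟩ <;> omega
    have hB : p.1 - t ∈ B := by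
      rcases h1 with ⟨_, h⟩ | h
      · exact h
      · omega
    rw [mem_PH]
    refine ⟨hB, h2, ?_⟩
    rcases hbig with h | ⟨h, htb'⟩
    · exact Or.inl (by omega)
    · exact Or.inr ⟨by omega, htb'⟩
  · intro q hq
    rw [mem_PH] at hq
    obtain ⟨h1, h2, h3⟩ := hq
    simp only [mem_filter, mem_PH]
    refine ⟨⟨?_, h2, ?_⟩, ?_⟩
    · rw [mem_shiftUp]; exact Or.inl ⟨by omega, by simpa using h1⟩
    · rcases h3 with h | ⟨h, htb'⟩
      · exact Or.inl (by omega)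
      · rcases Nat.eq_zero_or_pos t with rfl | ht0
        · exact Or.inr ⟨by omega, htb'⟩
        · exact Or.inl (by omega)
    · rcases h3 with h | ⟨h, htb'⟩
      · exact Or.inl (by omega)
      · exact Or.inr ⟨by omega, htb'⟩
  · intro p hp
    simp only [mem_filter, mem_PH] at hp
    obtain ⟨⟨h1, h2, h3⟩, hbig⟩ := hp
    have hp1 : t ≤ p.1 := by rcases hbig with h | ⟨h, _⟩ <;> omega
    simp only
    rw [show p.1 - t + t = p.1 by omega]
  · intro q hq; simp only; rw [Nat.add_sub_cancel]
  · intro p hp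
    simp only [mem_filter, mem_PH] at hp
    obtain ⟨⟨h1, h2, h3⟩, hbig⟩ := hp
    have hp1 : t ≤ p.1 := by rcases hbig with h | ⟨h, _⟩ <;> omega
    have hp2 : p.2 + t ≤ p.1 := by rcases hbig with h | ⟨h, _⟩ <;> omega
    have harith : (p.1 - p.2 : ℕ) = ((p.1 - t) - p.2) + t := by omega
    have hval : dr * ((p.1 - p.2 : ℕ) : ℝ) + cj - ci - t * dr
        = dr * (((p.1 - t) - p.2 : ℕ) : ℝ) + cj - ci := by
      rw [harith]; push_cast; ring
    rw [hval]
    apply abs_of_pos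
    rcases hbig with h | ⟨h, htb'⟩
    · have h1' : (1 : ℝ) ≤ (((p.1 - t) - p.2 : ℕ) : ℝ) := by
        have : 1 ≤ (p.1 - t) - p.2 := by omega
        exact_mod_cast this
      have h2' : dr * 1 ≤ dr * (((p.1 - t) - p.2 : ℕ) : ℝ) :=
        mul_le_mul_of_nonneg_left h1' (le_of_lt hd)
      linarith
    · have h0 : (((p.1 - t) - p.2 : ℕ) : ℝ) = 0 := by
        rw [show (p.1 - t) - p.2 = 0 by omega]; simp
      rw [h0]
      have := htb2 htb'
      linarith

lemma PH_range_empty {m n : ℕ} (h : m ≤ n) (tb : Prop) [Decidable tb] :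
    PH (Finset.range m) (Finset.range n) tb = ∅ := by
  rw [Finset.eq_empty_iff_forall_notMem]
  intro p hp
  rw [mem_PH] at hp
  obtain ⟨h1, h2, h3⟩ := hp
  simp only [mem_range, not_lt] at h1 h2
  rcases h3 with h' | ⟨h', _⟩ <;> omega

-- chunk g : the fiberwise counting product identity and the heart lemma
lemma prod_R_eq {d : ℕ} (hd : 0 < d) (i j : Fin d) (hij : i ≠ j) (A B : Finset ℕ) (t : ℕ)
    (ht : B.card + t = A.card) :
    ∏ p ∈ Rset A B t (j < i), ((d:ℝ) * ((p.1 - p.2 : ℕ) : ℝ) + ((i:ℕ):ℝ) - ((j:ℕ):ℝ))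
      = (∏ p ∈ PH (Finset.range A.card) (Finset.range B.card) (j < i),
            ((d:ℝ) * ((p.1 - p.2 : ℕ) : ℝ) + ((i:ℕ):ℝ) - ((j:ℕ):ℝ)))
        * ∏ p ∈ NegSet A B t (i < j),
            |(d:ℝ) * ((p.1 - p.2 : ℕ) : ℝ) + ((j:ℕ):ℝ) - ((i:ℕ):ℝ) - t * d| := by
  have hdi : ((i:ℕ):ℝ) < d := by exact_mod_cast i.isLt
  have hdj : ((j:ℕ):ℝ) < d := by exact_mod_cast j.isLt
  have hτ : (i < j) ↔ ¬ (j < i) := by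
    constructor
    · intro h h'; exact absurd (lt_trans h h') (lt_irrefl _)
    · intro h; rcases lt_trichotomy i j with h' | h' | h'
      · exact h'
      · exact absurd h' hij
      · exact absurd h' h
  -- fiberwise decompositions
  have hR : ∏ p ∈ Rset A B t (j < i), ((d:ℝ) * ((p.1 - p.2 : ℕ) : ℝ) + ((i:ℕ):ℝ) - ((j:ℕ):ℝ))
      = ∏ m ∈ Finset.range (t + 1),
          ((d:ℝ) * (m:ℝ) + ((i:ℕ):ℝ) - ((j:ℕ):ℝ)) ^ ((Rset A B t (j < i)).filter (fun p => p.1 - p.2 = m)).card := by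
    rw [← Finset.prod_fiberwise_of_maps_to (g := fun p : ℕ × ℕ => p.1 - p.2)
      (t := Finset.range (t + 1)) ?hmap]
    · apply Finset.prod_congr rfl
      intro m hm
      rw [← Finset.prod_const]
      apply Finset.prod_congr rfl
      intro p hp
      simp only [mem_filter] at hp
      rw [hp.2]
    case hmap =>
      intro p hp
      rw [mem_Rset] at hp
      simp only [mem_range]
      omega
  have hPc : ∏ p ∈ PH (Finset.range A.card) (Finset.range B.card) (j < i),
        ((d:ℝ) * ((p.1 - p.2 : ℕ) : ℝ) + ((i:ℕ):ℝ) - ((j:ℕ):ℝ))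
      = ∏ m ∈ Finset.range (t + 1),
          ((d:ℝ) * (m:ℝ) + ((i:ℕ):ℝ) - ((j:ℕ):ℝ)) ^ ((PH (Finset.range A.card) (Finset.range B.card) (j < i)).filter
            (fun p => p.1 - p.2 = m)).card := by
    rw [← Finset.prod_fiberwise_of_maps_to (g := fun p : ℕ × ℕ => p.1 - p.2)
      (t := Finset.range (t + 1)) ?hmap]
    · apply Finset.prod_congr rfl
      intro m hm
      rw [← Finset.prod_const]
      apply Finset.prod_congr rfl
      intro p hp
      simp only [mem_filter] at hp
      rw [hp.2]
    case hmap =>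
      intro p hp
      rw [mem_PH] at hp
      obtain ⟨h1, h2, h3⟩ := hp
      simp only [mem_range] at h1 h2 ⊢
      rcases h3 with h | ⟨h, _⟩ <;> omega
  have hNeg : ∏ p ∈ NegSet A B t (i < j),
        |(d:ℝ) * ((p.1 - p.2 : ℕ) : ℝ) + ((j:ℕ):ℝ) - ((i:ℕ):ℝ) - t * d|
      = ∏ m ∈ Finset.range (t + 1),
          ((d:ℝ) * (m:ℝ) + ((i:ℕ):ℝ) - ((j:ℕ):ℝ)) ^ ((NegSet A B t (i < j)).filter
            (fun p => t - (p.1 - p.2) = m)).card := by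
    rw [← Finset.prod_fiberwise_of_maps_to (g := fun p : ℕ × ℕ => t - (p.1 - p.2))
      (t := Finset.range (t + 1)) ?hmap]
    · apply Finset.prod_congr rfl
      intro m hm
      rw [← Finset.prod_const]
      apply Finset.prod_congr rfl
      intro p hp
      simp only [mem_filter] at hp
      obtain ⟨hp, hf⟩ := hp
      rw [mem_NegSet] at hp
      obtain ⟨h1, h2, h3, h4⟩ := hp
      have hle : p.2 ≤ p.1 := by rcases h3 with h | ⟨h, _⟩ <;> omega
      have hdt : p.1 - p.2 ≤ t := by omega
      have harith : ((p.1 - p.2 : ℕ) : ℝ) = (t : ℝ) - (m : ℝ) := by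
        have : p.1 - p.2 = t - m := by omega
        rw [this]
        have hmt : m ≤ t := by omega
        push_cast [hmt]; ring
      have hval : (d:ℝ) * ((p.1 - p.2 : ℕ) : ℝ) + ((j:ℕ):ℝ) - ((i:ℕ):ℝ) - t * d
          = -((d:ℝ) * (m:ℝ) + ((i:ℕ):ℝ) - ((j:ℕ):ℝ)) := by
        rw [harith]; ring
      rw [hval, abs_neg]
      apply abs_of_pos
      rcases Nat.eq_zero_or_pos m with rfl | hm0
      · -- m = 0 : then p.1 = p.2 + t and ¬(i < j) so j < i and e > 0
        have hp1 : p.1 = p.2 + t := by omega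
        have hji : ¬ (i < j) := by
          intro hij'
          exact h4 (Or.inr ⟨hp1, hij'⟩)
        have hji' : j < i := hτ.not_left.mp (by simpa using hji)
        have : (j:ℕ) < (i:ℕ) := hji'
        have : ((j:ℕ):ℝ) < ((i:ℕ):ℝ) := by exact_mod_cast this
        simp only [Nat.cast_zero, mul_zero, zero_add]
        linarith
      · have h1' : (1:ℝ) ≤ (m:ℝ) := by exact_mod_cast hm0
        have h2' : (d:ℝ) * 1 ≤ (d:ℝ) * (m:ℝ) :=
          mul_le_mul_of_nonneg_left h1' (by positivity)
        have hd' : (0:ℝ) < (d:ℝ) := by exact_mod_cast hd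
        linarith
    case hmap =>
      intro p hp
      rw [mem_NegSet] at hp
      simp only [mem_range]
      omega
  rw [hR, hPc, hNeg, ← Finset.prod_mul_distrib]
  apply Finset.prod_congr rfl
  intro m hm
  rw [← pow_add]
  congr 1
  exact count_identity m (by simpa using Nat.lt_succ_iff.mp (mem_range.mp hm)) ht hτ

-- chunk h : the heart lemma
lemma heart {d : ℕ} (hd : 0 < d) (i j : Fin d) (hij : i ≠ j) (A B : Finset ℕ) (t : ℕ)
    (ht : B.card + t = A.card) :
    (∏ p ∈ PH A B (j < i), ((d:ℝ) * ((p.1 - p.2 : ℕ) : ℝ) + ((i:ℕ):ℝ) - ((j:ℕ):ℝ))) *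
      ∏ p ∈ PH B A (i < j), ((d:ℝ) * ((p.1 - p.2 : ℕ) : ℝ) + ((j:ℕ):ℝ) - ((i:ℕ):ℝ))
    = ((∏ p ∈ PH (Finset.range A.card) (Finset.range B.card) (j < i),
          ((d:ℝ) * ((p.1 - p.2 : ℕ) : ℝ) + ((i:ℕ):ℝ) - ((j:ℕ):ℝ))) *
        ∏ p ∈ PH (Finset.range B.card) (Finset.range A.card) (i < j),
          ((d:ℝ) * ((p.1 - p.2 : ℕ) : ℝ) + ((j:ℕ):ℝ) - ((i:ℕ):ℝ)))
      * ((∏ p ∈ PH A (shiftUp B t) (j < i),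
            |(d:ℝ) * ((p.1 - p.2 : ℕ) : ℝ) + ((i:ℕ):ℝ) - ((j:ℕ):ℝ) + t * d|) *
          ∏ p ∈ PH (shiftUp B t) A (i < j),
            |(d:ℝ) * ((p.1 - p.2 : ℕ) : ℝ) + ((j:ℕ):ℝ) - ((i:ℕ):ℝ) - t * d|) := by
  have hdr : (0:ℝ) < (d:ℝ) := by exact_mod_cast hd
  have hdi : ((i:ℕ):ℝ) < d := by exact_mod_cast i.isLt
  have hdj : ((j:ℕ):ℝ) < d := by exact_mod_cast j.isLt
  have hτ : (i < j) ↔ ¬ (j < i) := by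
    constructor
    · intro h h'; exact absurd (lt_trans h h') (lt_irrefl _)
    · intro h; rcases lt_trichotomy i j with h' | h' | h'
      · exact h'
      · exact absurd h' hij
      · exact absurd h' h
  -- split Ps(i,j)
  have split1 := (Finset.prod_filter_mul_prod_filter_not (PH A B (j < i))
    (fun p : ℕ × ℕ => p.2 + t < p.1 ∨ (p.1 = p.2 + t ∧ j < i))
    (fun p : ℕ × ℕ => (d:ℝ) * ((p.1 - p.2 : ℕ) : ℝ) + ((i:ℕ):ℝ) - ((j:ℕ):ℝ))).symm
  -- split Pq(j,i)
  have split2 := (Finset.prod_filter_mul_prod_filter_not (PH (shiftUp B t) A (i < j))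
    (fun p : ℕ × ℕ => p.2 + t < p.1 ∨ (p.1 = p.2 + t ∧ i < j))
    (fun p : ℕ × ℕ => |(d:ℝ) * ((p.1 - p.2 : ℕ) : ℝ) + ((j:ℕ):ℝ) - ((i:ℕ):ℝ) - t * d|)).symm
  -- identify the quotient (i,j) product
  have hQij := prod_PH_upB_abs A B (j < i) t (d:ℝ) ((i:ℕ):ℝ) ((j:ℕ):ℝ) hdr
    (by linarith) (fun hji => by
      have : ((j:ℕ):ℝ) < ((i:ℕ):ℝ) := by exact_mod_cast (show (j:ℕ) < (i:ℕ) from hji)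
      have ht0 : (0:ℝ) ≤ (d:ℝ) * t := by positivity
      linarith)
  have hQpos := prod_PH_upA_pos A B (i < j) t (d:ℝ) ((i:ℕ):ℝ) ((j:ℕ):ℝ) hdr
    (by linarith) (fun hij' => by
      have : ((i:ℕ):ℝ) < ((j:ℕ):ℝ) := by exact_mod_cast (show (i:ℕ) < (j:ℕ) from hij')
      linarith)
  have hcore2 : PH (Finset.range B.card) (Finset.range A.card) (i < j) = ∅ :=
    PH_range_empty (by omega) _
  have hRid := prod_R_eq hd i j hij A B t ht
  have hRdef : Rset A B t (j < i) = (PH A B (j < i)).filter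
      (fun p : ℕ × ℕ => ¬(p.2 + t < p.1 ∨ (p.1 = p.2 + t ∧ j < i))) := rfl
  have hNdef : NegSet A B t (i < j) = (PH (shiftUp B t) A (i < j)).filter
      (fun p : ℕ × ℕ => ¬(p.2 + t < p.1 ∨ (p.1 = p.2 + t ∧ i < j))) := rfl
  rw [split1, split2, hQij, hQpos, hcore2, Finset.prod_empty, ← hRdef, ← hNdef, hRid]
  ring

-- chunk i : pairing decomposition
lemma prod_split_pairs {d : ℕ} (F : Fin d × Fin d → ℝ) (ord : Fin d × Fin d → Prop)
    [DecidablePred ord] (h1 : ∀ i j : Fin d, i ≠ j → (ord (i, j) ↔ ¬ ord (j, i)))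
    (h2 : ∀ i, ¬ ord (i, i)) :
    ∏ ij ∈ (univ ×ˢ univ : Finset (Fin d × Fin d)), F ij
      = (∏ i : Fin d, F (i, i)) *
        ∏ ij ∈ (univ ×ˢ univ : Finset (Fin d × Fin d)).filter ord, (F ij * F (ij.2, ij.1)) := by
  rw [← Finset.prod_filter_mul_prod_filter_not (univ ×ˢ univ : Finset (Fin d × Fin d))
    (fun ij => ij.1 = ij.2) F]
  congr 1
  · apply Finset.prod_nbij' (fun ij : Fin d × Fin d => ij.1) (fun i : Fin d => (i, i))
    · intro ij _; exact mem_univ _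
    · intro i _; simp
    · rintro ⟨a, b⟩ hab
      simp only [mem_filter] at hab
      obtain ⟨-, h⟩ := hab
      rw [h]
    · intro i _; rfl
    · rintro ⟨a, b⟩ hab
      simp only [mem_filter] at hab
      obtain ⟨-, h⟩ := hab
      rw [h]
  · rw [← Finset.prod_filter_mul_prod_filter_not
      ((univ ×ˢ univ : Finset (Fin d × Fin d)).filter (fun ij => ¬ ij.1 = ij.2)) ord F]
    have hset : ((univ ×ˢ univ : Finset (Fin d × Fin d)).filter
        (fun ij => ¬ ij.1 = ij.2)).filter ord
        = (univ ×ˢ univ : Finset (Fin d × Fin d)).filter ord := by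
      rw [Finset.filter_filter]
      apply Finset.filter_congr
      rintro ⟨a, b⟩ -
      simp only [and_iff_right_iff_imp]
      intro hord hab
      subst hab
      exact h2 a hord
    have hswap : ∏ ij ∈ ((univ ×ˢ univ : Finset (Fin d × Fin d)).filter
        (fun ij => ¬ ij.1 = ij.2)).filter (fun ij => ¬ ord ij), F ij
        = ∏ ij ∈ (univ ×ˢ univ : Finset (Fin d × Fin d)).filter ord, F (ij.2, ij.1) := by
      apply Finset.prod_nbij' (fun ij : Fin d × Fin d => (ij.2, ij.1))
        (fun ij : Fin d × Fin d => (ij.2, ij.1))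
      · rintro ⟨a, b⟩ hab
        simp only [mem_filter, mem_product, mem_univ, true_and, and_true] at hab ⊢
        obtain ⟨hne, hnord⟩ := hab
        exact ((h1 b a (fun h => hne h.symm)).mpr (by simpa using hnord))
      · rintro ⟨a, b⟩ hab
        simp only [mem_filter, mem_product, mem_univ, true_and, and_true] at hab ⊢
        have hne : a ≠ b := by
          rintro rfl; exact h2 a hab
        refine ⟨fun h => hne h.symm, ?_⟩
        exact (h1 a b hne).mp hab
      · rintro ⟨a, b⟩ -; rfl
      · rintro ⟨a, b⟩ -; rfl
      · rintro ⟨a, b⟩ -; rfl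
    rw [hset, hswap, ← Finset.prod_mul_distrib]

-- chunk j : the symbol-level main identity
lemma symbol_identity {d : ℕ} (hd : 0 < d) (T : Fin d → Finset ℕ) (N : ℕ)
    (hN : ∀ u, (T u).card ≤ N) :
    ∏ z ∈ symbolHooks T, hookLen (fun u => ((u : ℕ) : ℝ)) (d : ℝ) z
      = (∏ z ∈ symbolHooks (coreSymbol T), hookLen (fun u => ((u : ℕ) : ℝ)) (d : ℝ) z)
        * ∏ z ∈ symbolHooks (fun u => shiftUp (T u) (N - (T u).card)),
            |hookLen (fun u => ((u : ℕ) : ℝ) + ((T u).card : ℝ) * d) (d : ℝ) z| := by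
  classical
  set F : Fin d × Fin d → ℝ := fun ij => ∏ p ∈ PH (T ij.1) (T ij.2) (ij.2 < ij.1),
    ((d:ℝ) * ((p.1 - p.2 : ℕ) : ℝ) + ((ij.1 : ℕ) : ℝ) - ((ij.2 : ℕ) : ℝ)) with hF
  set G : Fin d × Fin d → ℝ := fun ij =>
    ∏ p ∈ PH (Finset.range (T ij.1).card) (Finset.range (T ij.2).card) (ij.2 < ij.1),
      ((d:ℝ) * ((p.1 - p.2 : ℕ) : ℝ) + ((ij.1 : ℕ) : ℝ) - ((ij.2 : ℕ) : ℝ)) with hG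
  set H : Fin d × Fin d → ℝ := fun ij =>
    ∏ p ∈ PH (shiftUp (T ij.1) (N - (T ij.1).card)) (shiftUp (T ij.2) (N - (T ij.2).card))
        (ij.2 < ij.1),
      |(d:ℝ) * ((p.1 - p.2 : ℕ) : ℝ) + (((ij.1 : ℕ) : ℝ) + ((T ij.1).card : ℝ) * d)
        - (((ij.2 : ℕ) : ℝ) + ((T ij.2).card : ℝ) * d)| with hH
  have e1 : ∏ z ∈ symbolHooks T, hookLen (fun u => ((u : ℕ) : ℝ)) (d : ℝ) z
      = ∏ ij ∈ (univ ×ˢ univ : Finset (Fin d × Fin d)), F ij :=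
    prod_symbolHooks_eq T (fun m u v => (d:ℝ) * (m : ℝ) + ((u : ℕ) : ℝ) - ((v : ℕ) : ℝ))
  have e2 : ∏ z ∈ symbolHooks (coreSymbol T), hookLen (fun u => ((u : ℕ) : ℝ)) (d : ℝ) z
      = ∏ ij ∈ (univ ×ˢ univ : Finset (Fin d × Fin d)), G ij :=
    prod_symbolHooks_eq (coreSymbol T)
      (fun m u v => (d:ℝ) * (m : ℝ) + ((u : ℕ) : ℝ) - ((v : ℕ) : ℝ))
  have e3 : ∏ z ∈ symbolHooks (fun u => shiftUp (T u) (N - (T u).card)),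
        |hookLen (fun u => ((u : ℕ) : ℝ) + ((T u).card : ℝ) * d) (d : ℝ) z|
      = ∏ ij ∈ (univ ×ˢ univ : Finset (Fin d × Fin d)), H ij :=
    prod_symbolHooks_eq (fun u => shiftUp (T u) (N - (T u).card))
      (fun m u v => |(d:ℝ) * (m : ℝ) + (((u : ℕ) : ℝ) + ((T u).card : ℝ) * d)
        - (((v : ℕ) : ℝ) + ((T v).card : ℝ) * d)|)
  rw [e1, e2, e3]
  set ord : Fin d × Fin d → Prop := fun ij =>
    (T ij.2).card < (T ij.1).card ∨ ((T ij.1).card = (T ij.2).card ∧ ij.2 < ij.1) with hord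
  have h2 : ∀ i, ¬ ord (i, i) := by
    rintro i (h | ⟨-, h⟩)
    · exact absurd h (lt_irrefl _)
    · exact absurd h (lt_irrefl _)
  have h1 : ∀ i j : Fin d, i ≠ j → (ord (i, j) ↔ ¬ ord (j, i)) := by
    intro i j hne
    have hfin : j < i ↔ ¬ i < j := by
      constructor
      · intro h h'; exact absurd (lt_trans h h') (lt_irrefl _)
      · intro h; rcases lt_trichotomy i j with h' | h' | h'
        · exact absurd h' h
        · exact absurd h' hne
        · exact h'
    show ((T j).card < (T i).card ∨ ((T i).card = (T j).card ∧ j < i))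
      ↔ ¬ ((T i).card < (T j).card ∨ ((T j).card = (T i).card ∧ i < j))
    constructor
    · rintro (h | ⟨h, hlt⟩) (h' | ⟨h', hlt'⟩)
      · omega
      · omega
      · omega
      · exact (hfin.mp hlt) hlt'
    · intro h
      rcases lt_trichotomy ((T j).card) ((T i).card) with h' | h' | h'
      · exact Or.inl h'
      · refine Or.inr ⟨h'.symm, hfin.mpr ?_⟩
        intro hij'
        exact h (Or.inr ⟨h', hij'⟩)
      · exact absurd (Or.inl h') h
  have hdiag : ∀ i : Fin d, F (i, i) = G (i, i) * H (i, i) := by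
    intro i
    have hGi : G (i, i) = 1 := by
      rw [hG]
      simp only
      rw [PH_range_empty (le_refl _), Finset.prod_empty]
    have hHi : H (i, i) = F (i, i) := by
      rw [hH, hF]
      simp only
      rw [prod_PH_shift (T i) (T i) (N - (T i).card) (i < i)
        (fun m => |(d:ℝ) * (m : ℝ) + (((i : ℕ) : ℝ) + ((T i).card : ℝ) * d)
          - (((i : ℕ) : ℝ) + ((T i).card : ℝ) * d)|)]
      apply Finset.prod_congr rfl
      intro p hp
      rw [mem_PH] at hp
      obtain ⟨_, _, h3⟩ := hp
      have hlt : p.2 < p.1 := by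
        rcases h3 with h | ⟨-, h⟩
        · exact h
        · exact absurd h (lt_irrefl i)
      have harg : (d:ℝ) * ((p.1 - p.2 : ℕ) : ℝ) + (((i : ℕ) : ℝ) + ((T i).card : ℝ) * d)
          - (((i : ℕ) : ℝ) + ((T i).card : ℝ) * d) = (d:ℝ) * ((p.1 - p.2 : ℕ) : ℝ) := by ring
      rw [harg]
      have hpos : (0:ℝ) < (d:ℝ) * ((p.1 - p.2 : ℕ) : ℝ) := by
        have h1' : (1:ℝ) ≤ ((p.1 - p.2 : ℕ) : ℝ) := by
          have : 1 ≤ p.1 - p.2 := by omega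
          exact_mod_cast this
        have hdr : (0:ℝ) < (d:ℝ) := by exact_mod_cast hd
        nlinarith
      rw [abs_of_pos hpos]
      ring
    rw [hGi, hHi, one_mul]
  have hpair : ∀ ij ∈ (univ ×ˢ univ : Finset (Fin d × Fin d)).filter ord,
      F ij * F (ij.2, ij.1) = (G ij * G (ij.2, ij.1)) * (H ij * H (ij.2, ij.1)) := by
    rintro ⟨i, j⟩ hij'
    simp only [mem_filter, mem_product, mem_univ, true_and, and_true] at hij'
    have hord' : (T j).card < (T i).card ∨ ((T i).card = (T j).card ∧ j < i) := hij'
    have hne : i ≠ j := by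
      rintro rfl
      rcases hord' with h | ⟨-, h⟩
      · exact absurd h (lt_irrefl _)
      · exact absurd h (lt_irrefl _)
    have hcard : (T j).card ≤ (T i).card := by
      rcases hord' with h | ⟨h, -⟩ <;> omega
    set t : ℕ := (T i).card - (T j).card with htdef
    have ht : (T j).card + t = (T i).card := by omega
    have hNi : (T i).card ≤ N := hN i
    have hNj : (T j).card ≤ N := hN j
    have hcast : ((t : ℕ) : ℝ) = ((T i).card : ℝ) - ((T j).card : ℝ) := by
      rw [htdef]; push_cast [hcard]; ring
    have hsetj : shiftUp (T j) (N - (T j).card)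
        = shiftUp (shiftUp (T j) t) (N - (T i).card) := by
      rw [shiftUp_shiftUp]
      congr 1
      omega
    have hH1 : H (i, j) = ∏ p ∈ PH (T i) (shiftUp (T j) t) (j < i),
        |(d:ℝ) * ((p.1 - p.2 : ℕ) : ℝ) + ((i : ℕ) : ℝ) - ((j : ℕ) : ℝ) + t * d| := by
      rw [hH]
      simp only
      rw [hsetj]
      rw [show shiftUp (T i) (N - (T i).card)
        = shiftUp (T i) (N - (T i).card) from rfl]
      rw [prod_PH_shift (T i) (shiftUp (T j) t) (N - (T i).card) (j < i)
        (fun m => |(d:ℝ) * (m : ℝ) + (((i : ℕ) : ℝ) + ((T i).card : ℝ) * d)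
          - (((j : ℕ) : ℝ) + ((T j).card : ℝ) * d)|)]
      apply Finset.prod_congr rfl
      intro p hp
      congr 1
      rw [show ((T i).card : ℝ) = ((T j).card : ℝ) + (t : ℝ) by rw [hcast]; ring]
      ring
    have hH2 : H (j, i) = ∏ p ∈ PH (shiftUp (T j) t) (T i) (i < j),
        |(d:ℝ) * ((p.1 - p.2 : ℕ) : ℝ) + ((j : ℕ) : ℝ) - ((i : ℕ) : ℝ) - t * d| := by
      rw [hH]
      simp only
      rw [hsetj]
      rw [prod_PH_shift (shiftUp (T j) t) (T i) (N - (T i).card) (i < j)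
        (fun m => |(d:ℝ) * (m : ℝ) + (((j : ℕ) : ℝ) + ((T j).card : ℝ) * d)
          - (((i : ℕ) : ℝ) + ((T i).card : ℝ) * d)|)]
      apply Finset.prod_congr rfl
      intro p hp
      congr 1
      rw [show ((T i).card : ℝ) = ((T j).card : ℝ) + (t : ℝ) by rw [hcast]; ring]
      ring
    rw [hH1, hH2, hF, hG]
    simp only
    exact heart hd i j hne (T i) (T j) t ht
  rw [prod_split_pairs F ord h1 h2, prod_split_pairs G ord h1 h2, prod_split_pairs H ord h1 h2]
  rw [Finset.prod_congr rfl hpair]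
  rw [show (∏ i : Fin d, F (i, i)) = ∏ i : Fin d, (G (i, i) * H (i, i)) from
    Finset.prod_congr rfl (fun i _ => hdiag i)]
  rw [Finset.prod_mul_distrib]
  rw [show (∏ ij ∈ (univ ×ˢ univ : Finset (Fin d × Fin d)).filter ord,
      ((G ij * G (ij.2, ij.1)) * (H ij * H (ij.2, ij.1))))
    = (∏ ij ∈ (univ ×ˢ univ : Finset (Fin d × Fin d)).filter ord, (G ij * G (ij.2, ij.1)))
      * ∏ ij ∈ (univ ×ˢ univ : Finset (Fin d × Fin d)).filter ord, (H ij * H (ij.2, ij.1))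
    from Finset.prod_mul_distrib]
  ring

-- chunk k : main theorem
/-- `∏𝓗(X) = (∏𝓗(C_d(X))) · |∏𝓗^δ(Q)|`, where `C_d(X) = s_d⁻¹(C(s_d X))` is the
`d`-core of the β-set `X`, `Q` the balanced quotient of `s_d(X)`, and
`δ = (x_0 d, 1 + x_1 d,…,(d−1) + x_{d−1} d; d)` with `x_i = |X_i^{(d)}|`. -/
theorem prod_hooks_eq_core_mul_abs_quot (d : ℕ) (hd : 0 < d) (X : Finset ℕ)
    (Y : Fin d → Finset ℕ) (hY : IsBalancedQuotient (sd d X) Y) :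
    ((betaHooks X).val.map (fun p => ((p.1 - p.2 : ℕ) : ℝ))).prod =
      ((betaHooks (sdInv d (coreSymbol (sd d X)))).val.map
          (fun p => ((p.1 - p.2 : ℕ) : ℝ))).prod *
        |(hookLens (fun i => ((i : ℕ) : ℝ) + ((sd d X i).card : ℝ) * (d : ℝ)) (d : ℝ)
            Y).prod| := by
  classical
  have hsd : ∀ u : Fin d, sd d X u = sd d X u := fun u => rfl
  set T : Fin d → Finset ℕ := sd d X with hT
  set N : ℕ := Finset.univ.sup (fun u => (T u).card) with hN_def
  have hN : ∀ u, (T u).card ≤ N := fun u =>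
    Finset.le_sup (f := fun u => (T u).card) (mem_univ u)
  have hrN : quotCard T ≤ N := by
    show Finset.univ.sup (fun i => Multiset.card (partitionOf (T i))) ≤ N
    exact Finset.sup_mono_fun (fun b _ => card_partitionOf_le (T b))
  -- the balanced quotient coincides with the N-shifted quotient
  have hZY : ∀ u : Fin d, shiftUp (Y u) (N - quotCard T)
      = shiftUp (T u) (N - (T u).card) := by
    intro u
    refine betaSet_unique N _ _ ?c1 ?c2 ?hp
    case c1 =>
      rw [card_shiftUp, (hY u).1]
      omega
    case c2 =>
      rw [card_shiftUp]
      have := hN u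
      omega
    case hp =>
      rw [partitionOf_shiftUp, partitionOf_shiftUp, (hY u).2]
  -- Step 1 : β-hooks of X as symbol hooks
  have step1 : ∏ p ∈ betaHooks X, ((p.1 - p.2 : ℕ) : ℝ)
      = ∏ z ∈ symbolHooks T, hookLen (fun u => ((u : ℕ) : ℝ)) (d : ℝ) z :=
    prod_betaHooks_eq_symbol hd X
  -- Step 2 : symbol identity
  have step2 := symbol_identity hd T N hN
  -- Step 3 : core hooks
  have step3 : ∏ p ∈ betaHooks (sdInv d (coreSymbol T)), ((p.1 - p.2 : ℕ) : ℝ)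
      = ∏ z ∈ symbolHooks (coreSymbol T), hookLen (fun u => ((u : ℕ) : ℝ)) (d : ℝ) z := by
    have := prod_betaHooks_eq_symbol hd (sdInv d (coreSymbol T))
    rwa [sd_sdInv hd (coreSymbol T)] at this
  -- Step 4 : quotient hooks, shifted
  have step4 : ∏ z ∈ symbolHooks (fun u => shiftUp (T u) (N - (T u).card)),
        |hookLen (fun u => ((u : ℕ) : ℝ) + ((T u).card : ℝ) * d) (d : ℝ) z|
      = ∏ z ∈ symbolHooks Y,
          |hookLen (fun u => ((u : ℕ) : ℝ) + ((T u).card : ℝ) * d) (d : ℝ) z| := by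
    have eZ : (∏ z ∈ symbolHooks (fun u => shiftUp (T u) (N - (T u).card)),
          |hookLen (fun u => ((u : ℕ) : ℝ) + ((T u).card : ℝ) * d) (d : ℝ) z|)
        = ∏ ij ∈ (univ ×ˢ univ : Finset (Fin d × Fin d)),
            ∏ p ∈ PH (shiftUp (T ij.1) (N - (T ij.1).card))
                (shiftUp (T ij.2) (N - (T ij.2).card)) (ij.2 < ij.1),
              |(d:ℝ) * ((p.1 - p.2 : ℕ) : ℝ) + (((ij.1 : ℕ) : ℝ) + ((T ij.1).card : ℝ) * d)
                - (((ij.2 : ℕ) : ℝ) + ((T ij.2).card : ℝ) * d)| :=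
      prod_symbolHooks_eq (fun u => shiftUp (T u) (N - (T u).card))
        (fun m u v => |(d:ℝ) * (m : ℝ) + (((u : ℕ) : ℝ) + ((T u).card : ℝ) * d)
          - (((v : ℕ) : ℝ) + ((T v).card : ℝ) * d)|)
    have eY : (∏ z ∈ symbolHooks Y,
          |hookLen (fun u => ((u : ℕ) : ℝ) + ((T u).card : ℝ) * d) (d : ℝ) z|)
        = ∏ ij ∈ (univ ×ˢ univ : Finset (Fin d × Fin d)),
            ∏ p ∈ PH (Y ij.1) (Y ij.2) (ij.2 < ij.1),
              |(d:ℝ) * ((p.1 - p.2 : ℕ) : ℝ) + (((ij.1 : ℕ) : ℝ) + ((T ij.1).card : ℝ) * d)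
                - (((ij.2 : ℕ) : ℝ) + ((T ij.2).card : ℝ) * d)| :=
      prod_symbolHooks_eq Y
        (fun m u v => |(d:ℝ) * (m : ℝ) + (((u : ℕ) : ℝ) + ((T u).card : ℝ) * d)
          - (((v : ℕ) : ℝ) + ((T v).card : ℝ) * d)|)
    rw [eZ, eY]
    apply Finset.prod_congr rfl
    rintro ⟨i, j⟩ -
    rw [← hZY i, ← hZY j]
    exact prod_PH_shift (Y i) (Y j) (N - quotCard T) (j < i)
      (fun m => |(d:ℝ) * (m : ℝ) + (((i : ℕ) : ℝ) + ((T i).card : ℝ) * d)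
        - (((j : ℕ) : ℝ) + ((T j).card : ℝ) * d)|)
  -- Step 5 : absolute value of the product
  have step5 : |(hookLens (fun i => ((i : ℕ) : ℝ) + ((sd d X i).card : ℝ) * (d : ℝ))
        (d : ℝ) Y).prod|
      = ∏ z ∈ symbolHooks Y,
          |hookLen (fun u => ((u : ℕ) : ℝ) + ((T u).card : ℝ) * d) (d : ℝ) z| := by
    have : (hookLens (fun i => ((i : ℕ) : ℝ) + ((sd d X i).card : ℝ) * (d : ℝ))
        (d : ℝ) Y).prod
        = ∏ z ∈ symbolHooks Y,
            hookLen (fun u => ((u : ℕ) : ℝ) + ((T u).card : ℝ) * d) (d : ℝ) z := rfl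
    rw [this, Finset.abs_prod]
  show ∏ p ∈ betaHooks X, ((p.1 - p.2 : ℕ) : ℝ)
      = (∏ p ∈ betaHooks (sdInv d (coreSymbol T)), ((p.1 - p.2 : ℕ) : ℝ))
        * |(hookLens (fun i => ((i : ℕ) : ℝ) + ((sd d X i).card : ℝ) * (d : ℝ))
            (d : ℝ) Y).prod|
  rw [step1, step2, step3, step5, step4]
end
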